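/- arXiv:0908.2013 — 9 statements merged into one kernel-verified Lean document; each statement's English description precedes it below -/
import Mathlib

section
/- Let f be a Legendre function on ℝ^J, D its Bregman distance, and C a nonempty subset of U = int dom f. Define the farthest-point map Q_C(x) = argmax_{c ∈ C} D(x,c) for x ∈ dom f. Then the set-valued operator x ↦ -∇f(Q_C(x)) is monotone: for (x, x*) and (y, y*) in the graph of Q_C, ⟨x - y, ∇f(y*) - ∇f(x*)⟩ ≥ 0. -/
open Set Filter Topology Bornology

noncomputable section

/-- Data for a Bregman setup on `ℝ^J`: an extended-real-valued function `f`
together with a choice of gradient map (meaningful on the interior of the domain). -/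
structure BregmanSetup (J : ℕ) where
  f : EuclideanSpace ℝ (Fin J) → EReal
  grad : EuclideanSpace ℝ (Fin J) → EuclideanSpace ℝ (Fin J)

namespace BregmanSetup

open scoped Classical

variable {J : ℕ} (B : BregmanSetup J)

/-- The (essential) domain of `f`. -/
def dom : Set (EuclideanSpace ℝ (Fin J)) := {x | B.f x ≠ ⊤}

/-- `U`, the interior of the domain of `f`. -/
def U : Set (EuclideanSpace ℝ (Fin J)) := interior B.dom

/-- `f` is a convex function of Legendre type: proper, lsc, convex,
essentially smooth (differentiable on `U` with gradient `B.grad`, steep at the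
boundary) and essentially strictly convex (strictly convex on `U`). -/
structure IsLegendre : Prop where
  proper_bot : ∀ x, B.f x ≠ ⊥
  nonempty_int : B.U.Nonempty
  convex_dom : Convex ℝ B.dom
  convexOn : ConvexOn ℝ B.dom (fun x => (B.f x).toReal)
  lsc : LowerSemicontinuous B.f
  smooth : ∀ y ∈ B.U, HasGradientAt (fun x => (B.f x).toReal) (B.grad y) y
  strict : StrictConvexOn ℝ B.U (fun x => (B.f x).toReal)
  steep : ∀ x ∈ frontier B.dom, ∀ s : ℕ → EuclideanSpace ℝ (Fin J),
    (∀ n, s n ∈ B.U) → Tendsto s atTop (nhds x) →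
    Tendsto (fun n => ‖B.grad (s n)‖) atTop atTop

/-- The Bregman distance `D(x,y) = f(x) - f(y) - ⟨∇f(y), x - y⟩` for `y ∈ U`,
and `+∞` otherwise. -/
def D (x y : EuclideanSpace ℝ (Fin J)) : EReal :=
  if y ∈ B.U then B.f x - B.f y - ((inner ℝ (B.grad y) (x - y) : ℝ) : EReal) else ⊤

/-- The right Bregman farthest-distance function of a set `C`. -/
def F (C : Set (EuclideanSpace ℝ (Fin J))) (x : EuclideanSpace ℝ (Fin J)) : EReal :=
  ⨆ c ∈ C, B.D x c

/-- The right Bregman farthest-point map of a set `C` (empty outside `dom f`). -/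
def Q (C : Set (EuclideanSpace ℝ (Fin J))) (x : EuclideanSpace ℝ (Fin J)) :
    Set (EuclideanSpace ℝ (Fin J)) :=
  {c | c ∈ C ∧ x ∈ B.dom ∧ ∀ c' ∈ C, B.D x c' ≤ B.D x c}

end BregmanSetup

/-- (Proposition 7.1 analogue) The operator `-∇f ∘ Q_C` is monotone: for `(x, x*)`
and `(y, y*)` in the graph of the farthest-point map `Q_C`,
`⟨x - y, ∇f(y*) - ∇f(x*)⟩ ≥ 0`. -/
theorem neg_grad_comp_farthest_monotone {J : ℕ} (B : BregmanSetup J) (hB : B.IsLegendre)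
    (C : Set (EuclideanSpace ℝ (Fin J))) (hCne : C.Nonempty) (hCU : C ⊆ B.U)
    (x y xstar ystar : EuclideanSpace ℝ (Fin J)) (hx : xstar ∈ B.Q C x) (hy : ystar ∈ B.Q C y) :
    0 ≤ (inner ℝ (x - y) (B.grad ystar - B.grad xstar) : ℝ) := by
  obtain ⟨hxC, hxdom, hxmax⟩ := hx
  obtain ⟨hyC, hydom, hymax⟩ := hy
  have hxU : xstar ∈ B.U := hCU hxC
  have hyU : ystar ∈ B.U := hCU hyC
  have hxsdom : xstar ∈ B.dom := interior_subset hxU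
  have hysdom : ystar ∈ B.dom := interior_subset hyU
  have h1 := hxmax ystar hyC
  have h2 := hymax xstar hxC
  simp only [BregmanSetup.D, if_pos hxU, if_pos hyU] at h1 h2
  have cfx : B.f x = ((B.f x).toReal : EReal) := (EReal.coe_toReal hxdom (hB.proper_bot x)).symm
  have cfy : B.f y = ((B.f y).toReal : EReal) := (EReal.coe_toReal hydom (hB.proper_bot y)).symm
  have cfxs : B.f xstar = ((B.f xstar).toReal : EReal) :=
    (EReal.coe_toReal hxsdom (hB.proper_bot xstar)).symm
  have cfys : B.f ystar = ((B.f ystar).toReal : EReal) :=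
    (EReal.coe_toReal hysdom (hB.proper_bot ystar)).symm
  rw [cfx, cfxs, cfys, ← EReal.coe_sub, ← EReal.coe_sub, ← EReal.coe_sub, ← EReal.coe_sub,
    EReal.coe_le_coe_iff] at h1
  rw [cfy, cfxs, cfys, ← EReal.coe_sub, ← EReal.coe_sub, ← EReal.coe_sub, ← EReal.coe_sub,
    EReal.coe_le_coe_iff] at h2
  simp only [inner_sub_left, inner_sub_right] at h1 h2 ⊢
  have c1 := real_inner_comm (B.grad ystar) x
  have c2 := real_inner_comm (B.grad xstar) x
  have c3 := real_inner_comm (B.grad ystar) y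
  have c4 := real_inner_comm (B.grad xstar) y
  linarith
end
end

section
/- Let f be Legendre on ℝ^J, C a nonempty closed subset of U = int dom f, and ((xₙ, yₙ)) a sequence in the graph of the right Bregman farthest-point map Q_C with xₙ ∈ U, converging to (x, y) ∈ U × ℝ^J. Then y ∈ Q_C(x), i.e., the graph of Q_C restricted to U is closed. -/
open Set Filter Topology Bornology

noncomputable section

namespace BregmanSetup

variable {J : ℕ} {B : BregmanSetup J}

lemma my_contAt (hB : B.IsLegendre) {u : EuclideanSpace ℝ (Fin J)} (hu : u ∈ B.U) :
    ContinuousAt (fun x => (B.f x).toReal) u :=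
  (hB.smooth u hu).differentiableAt.continuousAt

/-- Tangent plane inequality. -/
lemma my_tangent (hB : B.IsLegendre) {c z : EuclideanSpace ℝ (Fin J)}
    (hc : c ∈ B.U) (hz : z ∈ B.U) :
    (B.f c).toReal + (inner ℝ (B.grad c) (z - c) : ℝ) ≤ (B.f z).toReal := by
  set ft := fun x : EuclideanSpace ℝ (Fin J) => (B.f x).toReal with hft
  have hUc : Convex ℝ B.U := hB.convex_dom.interior
  have hconv : ConvexOn ℝ B.U ft := hB.convexOn.subset interior_subset hUc
  set φ : ℝ → ℝ := fun t => ft (c + t • (z - c)) with hφdef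
  have hline : HasDerivAt (fun t : ℝ => c + t • (z - c)) (z - c) 0 := by
    simpa using ((hasDerivAt_id (0:ℝ)).smul_const (z - c)).const_add c
  have hφ : HasDerivAt φ (inner ℝ (B.grad c) (z - c) : ℝ) 0 := by
    have h2 := (hB.smooth c hc).hasFDerivAt
    have h3 := h2.comp_hasDerivAt_of_eq (0:ℝ) hline (by simp)
    exact h3
  have hslope : ∀ t : ℝ, t ∈ Ioc (0:ℝ) 1 → slope φ 0 t ≤ ft z - ft c := by
    intro t ht
    have hmem : c + t • (z - c) = (1 - t) • c + t • z := by
      rw [smul_sub, sub_smul, one_smul]; abel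
    have hcv := hconv.2 hc hz (by linarith [ht.2] : (0:ℝ) ≤ 1 - t) (le_of_lt ht.1)
      (by ring)
    rw [← hmem] at hcv
    have hφ0 : φ 0 = ft c := by simp [hφdef]
    have hφt : φ t ≤ (1 - t) * ft c + t * ft z := by simpa [hφdef, smul_eq_mul] using hcv
    rw [slope_def_field, sub_zero, div_le_iff₀ ht.1, hφ0]
    nlinarith [ht.1, ht.2]
  have htend : Tendsto (slope φ 0) (𝓝[>] (0:ℝ)) (𝓝 (inner ℝ (B.grad c) (z - c) : ℝ)) :=
    (hasDerivAt_iff_tendsto_slope.1 hφ).mono_left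
      (nhdsWithin_mono _ fun t ht => ne_of_gt ht)
  have hev : ∀ᶠ t in 𝓝[>] (0:ℝ), slope φ 0 t ≤ ft z - ft c := by
    filter_upwards [Ioc_mem_nhdsGT_of_mem (Set.left_mem_Ico.2 one_pos)] with t ht
    exact hslope t ht
  have hb : (inner ℝ (B.grad c) (z - c) : ℝ) ≤ ft z - ft c := le_of_tendsto htend hev
  linarith

/-- Local boundedness of the gradient on `U`. -/
lemma my_grad_bound (hB : B.IsLegendre) {y : EuclideanSpace ℝ (Fin J)} (hy : y ∈ B.U) :
    ∃ r > (0:ℝ), ∃ M : ℝ, Metric.ball y r ⊆ B.U ∧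
      ∀ c ∈ Metric.ball y r, ‖B.grad c‖ ≤ M := by
  obtain ⟨ε, hε, hball⟩ := Metric.isOpen_iff.1 isOpen_interior y hy
  set r := ε / 3 with hr
  have hrpos : 0 < r := by positivity
  have hsub2 : Metric.closedBall y (2 * r) ⊆ B.U := fun w hw =>
    hball (by
      rw [Metric.mem_closedBall] at hw
      rw [Metric.mem_ball]
      calc dist w y ≤ 2 * r := hw
        _ < ε := by rw [hr]; linarith)
  have hsub1 : Metric.ball y r ⊆ B.U := fun w hw =>
    hsub2 (Metric.closedBall_subset_closedBall (by linarith) (Metric.ball_subset_closedBall hw))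
  have hcont : ContinuousOn (fun x => (B.f x).toReal) (Metric.closedBall y (2 * r)) :=
    fun w hw => (BregmanSetup.my_contAt hB (hsub2 hw)).continuousWithinAt
  obtain ⟨M0, hM0⟩ := (isCompact_closedBall y (2 * r)).exists_bound_of_continuousOn hcont
  have hM0nn : 0 ≤ M0 := le_trans (norm_nonneg _)
    (hM0 y (Metric.mem_closedBall_self (by positivity)))
  refine ⟨r, hrpos, 2 * M0 / r, hsub1, fun c hc => ?_⟩
  rcases eq_or_ne (B.grad c) 0 with h0 | h0
  · rw [h0, norm_zero]; positivity
  · set g := B.grad c with hg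
    set z := c + (r / ‖g‖) • g with hzdef
    have hzball : z ∈ Metric.closedBall y (2 * r) := by
      rw [Metric.mem_closedBall]
      have h1 : dist z c = r := by
        rw [dist_eq_norm, hzdef, add_sub_cancel_left, norm_smul,
          Real.norm_eq_abs, abs_of_pos (div_pos hrpos (norm_pos_iff.2 h0)),
          div_mul_cancel₀ _ (norm_ne_zero_iff.2 h0)]
      calc dist z y ≤ dist z c + dist c y := dist_triangle _ _ _
        _ ≤ r + r := by
            rw [h1]
            exact add_le_add_right (le_of_lt (Metric.mem_ball.1 hc)) r
        _ = 2 * r := by ring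
    have htan := my_tangent hB (hsub1 hc) (hsub2 hzball)
    have hinner : (inner ℝ g (z - c) : ℝ) = r * ‖g‖ := by
      rw [hzdef]
      have hgn : ‖g‖ ≠ 0 := norm_ne_zero_iff.2 h0
      rw [add_sub_cancel_left, real_inner_smul_right, real_inner_self_eq_norm_sq]
      field_simp
    have hbz : |(B.f z).toReal| ≤ M0 := by
      simpa [Real.norm_eq_abs] using hM0 z hzball
    have hbc : |(B.f c).toReal| ≤ M0 := by
      have : c ∈ Metric.closedBall y (2 * r) :=
        Metric.closedBall_subset_closedBall (by linarith) (Metric.ball_subset_closedBall hc)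
      simpa [Real.norm_eq_abs] using hM0 c this
    have key : r * ‖g‖ ≤ 2 * M0 := by
      rw [← hinner]
      have := abs_le.1 hbz
      have := abs_le.1 hbc
      linarith [htan]
    rw [le_div_iff₀ hrpos]
    linarith [key]

/-- Sequential continuity of the gradient on `U`. -/
lemma my_grad_tendsto (hB : B.IsLegendre) {u : ℕ → EuclideanSpace ℝ (Fin J)}
    {y : EuclideanSpace ℝ (Fin J)} (hu : ∀ n, u n ∈ B.U) (hy : y ∈ B.U)
    (hlim : Tendsto u atTop (𝓝 y)) :
    Tendsto (fun n => B.grad (u n)) atTop (𝓝 (B.grad y)) := by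
  obtain ⟨r, hrpos, M, hsub, hM⟩ := my_grad_bound hB hy
  refine tendsto_of_subseq_tendsto fun ns hns => ?_
  have hmem : ∀ᶠ n in atTop, u (ns n) ∈ Metric.ball y r :=
    (hlim.comp hns).eventually_mem (Metric.ball_mem_nhds y hrpos)
  have hfreq : ∃ᶠ n in atTop, B.grad (u (ns n)) ∈ Metric.closedBall 0 M := by
    refine (hmem.mono fun n hn => ?_).frequently
    simpa [Metric.mem_closedBall, dist_zero_right] using hM _ hn
  obtain ⟨g, hgmem, φ, hφ, hgl⟩ :=
    (isCompact_closedBall (0 : EuclideanSpace ℝ (Fin J)) M).tendsto_subseq' hfreq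
  refine ⟨φ, ?_⟩
  have hpt : Tendsto (fun k => u (ns (φ k))) atTop (𝓝 y) :=
    (hlim.comp hns).comp hφ.tendsto_atTop
  have hsub : ∀ z ∈ B.U, (B.f y).toReal + (inner ℝ g (z - y) : ℝ) ≤ (B.f z).toReal := by
    intro z hz
    have hk : ∀ k, (B.f (u (ns (φ k)))).toReal
        + (inner ℝ (B.grad (u (ns (φ k)))) (z - u (ns (φ k))) : ℝ) ≤ (B.f z).toReal :=
      fun k => my_tangent hB (hu _) hz
    have hlhs : Tendsto (fun k => (B.f (u (ns (φ k)))).toReal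
        + (inner ℝ (B.grad (u (ns (φ k)))) (z - u (ns (φ k))) : ℝ)) atTop
        (𝓝 ((B.f y).toReal + (inner ℝ g (z - y) : ℝ))) :=
      (((BregmanSetup.my_contAt hB hy).tendsto).comp hpt).add
        (hgl.inner (tendsto_const_nhds.sub hpt))
    exact le_of_tendsto hlhs (Eventually.of_forall hk)
  have hkey : ∀ v, (inner ℝ g v : ℝ) ≤ (inner ℝ (B.grad y) v : ℝ) := by
    intro v
    obtain ⟨ε, hε, hball⟩ := Metric.isOpen_iff.1 isOpen_interior y hy
    set ψ : ℝ → ℝ := fun t => (B.f (y + t • v)).toReal with hψ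
    have hline : HasDerivAt (fun t : ℝ => y + t • v) v 0 := by
      simpa using ((hasDerivAt_id (0:ℝ)).smul_const v).const_add y
    have hdψ : HasDerivAt ψ (inner ℝ (B.grad y) v : ℝ) 0 := by
      have h3 := (hB.smooth y hy).hasFDerivAt.comp_hasDerivAt_of_eq (0:ℝ) hline (by simp)
      exact h3
    have htend : Tendsto (slope ψ 0) (𝓝[>] (0:ℝ)) (𝓝 (inner ℝ (B.grad y) v : ℝ)) :=
      (hasDerivAt_iff_tendsto_slope.1 hdψ).mono_left
        (nhdsWithin_mono _ fun t ht => ne_of_gt ht)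
    refine ge_of_tendsto htend ?_
    have hδ : (0:ℝ) < ε / (‖v‖ + 1) := by positivity
    filter_upwards [Ioo_mem_nhdsGT_of_mem (Set.left_mem_Ico.2 hδ)] with t ht
    have htpos : 0 < t := ht.1
    have hzU : y + t • v ∈ B.U := hball (by
      rw [Metric.mem_ball, dist_eq_norm, add_sub_cancel_left, norm_smul, Real.norm_eq_abs,
        abs_of_pos htpos]
      calc t * ‖v‖ ≤ t * (‖v‖ + 1) := by nlinarith [norm_nonneg v]
        _ < ε / (‖v‖ + 1) * (‖v‖ + 1) :=
            mul_lt_mul_of_pos_right ht.2 (by positivity)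
        _ = ε := by field_simp)
    have h1 := hsub _ hzU
    rw [add_sub_cancel_left, real_inner_smul_right] at h1
    have hψ0 : ψ 0 = (B.f y).toReal := by simp [hψ]
    have h1' : ψ 0 + t * (inner ℝ g v : ℝ) ≤ ψ t := by rw [hψ0]; exact h1
    rw [slope_def_field, sub_zero, le_div_iff₀ htpos]
    linarith
  have hg_eq : g = B.grad y := by
    have h3 : (inner ℝ (g - B.grad y) (g - B.grad y) : ℝ) ≤ 0 := by
      rw [inner_sub_left]
      linarith [hkey (g - B.grad y)]
    have h5 : (inner ℝ (g - B.grad y) (g - B.grad y) : ℝ) = 0 :=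
      le_antisymm h3 real_inner_self_nonneg
    have h6 : g - B.grad y = 0 := inner_self_eq_zero.1 h5
    exact sub_eq_zero.1 h6
  simpa [Function.comp] using hg_eq ▸ hgl


end BregmanSetup

/-- The graph of the farthest-point map `Q_C` is closed over `U`: if `C` is a nonempty
closed subset of `U` and `(xₙ, yₙ)` is a sequence in the graph of `Q_C` with `xₙ ∈ U`,
converging to `(x, y) ∈ U × ℝ^J`, then `y ∈ Q_C(x)`. -/
theorem farthest_map_graph_closed {J : ℕ} (B : BregmanSetup J) (hB : B.IsLegendre)
    (C : Set (EuclideanSpace ℝ (Fin J))) (hCne : C.Nonempty) (hCU : C ⊆ B.U) (hCcl : IsClosed C)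
    (xs ys : ℕ → EuclideanSpace ℝ (Fin J)) (hxsU : ∀ n, xs n ∈ B.U) (hgraph : ∀ n, ys n ∈ B.Q C (xs n))
    (x y : EuclideanSpace ℝ (Fin J)) (hxU : x ∈ B.U)
    (hxlim : Tendsto xs atTop (nhds x)) (hylim : Tendsto ys atTop (nhds y)) :
    y ∈ B.Q C x := by
  have hUdom : B.U ⊆ B.dom := interior_subset
  have hyC : y ∈ C := hCcl.mem_of_tendsto hylim (Eventually.of_forall fun n => (hgraph n).1)
  have hyU : y ∈ B.U := hCU hyC
  set d : EuclideanSpace ℝ (Fin J) → EuclideanSpace ℝ (Fin J) → ℝ :=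
    fun a b => (B.f a).toReal - (B.f b).toReal - (inner ℝ (B.grad b) (a - b) : ℝ) with hd
  have hD : ∀ a ∈ B.dom, ∀ b ∈ B.U, B.D a b = ((d a b : ℝ) : EReal) := by
    intro a ha b hb
    have hfa : B.f a ≠ ⊤ := ha
    have hfb : B.f b ≠ ⊤ := hUdom hb
    simp only [BregmanSetup.D, if_pos hb, hd]
    rw [EReal.coe_sub, EReal.coe_sub, EReal.coe_toReal hfa (hB.proper_bot a),
      EReal.coe_toReal hfb (hB.proper_bot b)]
  refine ⟨hyC, hUdom hxU, fun c' hc' => ?_⟩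
  have hc'U : c' ∈ B.U := hCU hc'
  rw [hD x (hUdom hxU) c' hc'U, hD x (hUdom hxU) y hyU, EReal.coe_le_coe_iff]
  have hysU : ∀ n, ys n ∈ B.U := fun n => hCU (hgraph n).1
  have hle : ∀ n, d (xs n) c' ≤ d (xs n) (ys n) := by
    intro n
    have h := (hgraph n).2.2 c' hc'
    rw [hD (xs n) (hUdom (hxsU n)) c' hc'U, hD (xs n) (hUdom (hxsU n)) (ys n) (hysU n),
      EReal.coe_le_coe_iff] at h
    exact h
  have hfx : Tendsto (fun n => (B.f (xs n)).toReal) atTop (𝓝 (B.f x).toReal) :=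
    (BregmanSetup.my_contAt hB hxU).tendsto.comp hxlim
  have hfy : Tendsto (fun n => (B.f (ys n)).toReal) atTop (𝓝 (B.f y).toReal) :=
    (BregmanSetup.my_contAt hB hyU).tendsto.comp hylim
  have hgy : Tendsto (fun n => B.grad (ys n)) atTop (𝓝 (B.grad y)) :=
    BregmanSetup.my_grad_tendsto hB hysU hyU hylim
  have h1 : Tendsto (fun n => d (xs n) c') atTop (𝓝 (d x c')) := by
    simp only [hd]
    exact (hfx.sub tendsto_const_nhds).sub
      (tendsto_const_nhds.inner (hxlim.sub tendsto_const_nhds))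
  have h2 : Tendsto (fun n => d (xs n) (ys n)) atTop (𝓝 (d x y)) := by
    simp only [hd]
    exact (hfx.sub hfy).sub (hgy.inner (hxlim.sub hylim))
  exact le_of_tendsto_of_tendsto' h1 h2 hle
end
end

section
/- Let f be Legendre on ℝ^J with Bregman distance D, and suppose D(x,·) is convex on U for every x ∈ dom f. Let C be a nonempty subset of U = int dom f. Then every pair (x,y) in the graph of the farthest-point map Q_C also lies in the graph of Q_{conv C}: if y ∈ C maximizes c ↦ D(x,c) over C, then y maximizes it over conv C. -/
open Set Filter Topology Bornology

noncomputable section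

/-- If `D(x,·)` is convex on `U` for every `x ∈ dom f`, then the graph of `Q_C` is
contained in the graph of `Q_(conv C)`. -/
theorem farthest_graph_subset_convexHull {J : ℕ} (B : BregmanSetup J) (hB : B.IsLegendre)
    (hDconv : ∀ x ∈ B.dom, ConvexOn ℝ B.U (fun y => (B.D x y).toReal))
    (C : Set (EuclideanSpace ℝ (Fin J))) (hCne : C.Nonempty) (hCU : C ⊆ B.U)
    (x y : EuclideanSpace ℝ (Fin J)) (hy : y ∈ B.Q C x) :
    y ∈ B.Q (convexHull ℝ C) x := by
  obtain ⟨hyC, hxdom, hymax⟩ := hy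
  -- D x c is finite (a real coercion) for c ∈ U
  have hfin : ∀ c ∈ B.U, B.D x c = (((B.D x c).toReal : ℝ) : EReal) := by
    intro c hc
    have hfx : B.f x = (((B.f x).toReal : ℝ) : EReal) :=
      (EReal.coe_toReal hxdom (hB.proper_bot x)).symm
    have hcd : c ∈ B.dom := interior_subset hc
    have hfc : B.f c = (((B.f c).toReal : ℝ) : EReal) :=
      (EReal.coe_toReal hcd (hB.proper_bot c)).symm
    have : B.D x c = ((((B.f x).toReal - (B.f c).toReal -
        (inner ℝ (B.grad c) (x - c) : ℝ)) : ℝ) : EReal) := by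
      rw [BregmanSetup.D, if_pos hc, hfx, hfc, ← EReal.coe_sub, ← EReal.coe_sub]
      norm_cast
    rw [this, EReal.toReal_coe]
  have hUconv : Convex ℝ B.U := (hB.convex_dom.interior)
  have hconvU : convexHull ℝ C ⊆ B.U := convexHull_min hCU hUconv
  have hyU : y ∈ B.U := hCU hyC
  refine ⟨subset_convexHull ℝ C hyC, hxdom, ?_⟩
  intro c' hc'
  -- sublevel set is convex
  have hconvOn := hDconv x hxdom
  have hS : Convex ℝ {z ∈ B.U | (B.D x z).toReal ≤ (B.D x y).toReal} :=
    hconvOn.convex_le _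
  have hCS : C ⊆ {z ∈ B.U | (B.D x z).toReal ≤ (B.D x y).toReal} := by
    intro c hc
    refine ⟨hCU hc, ?_⟩
    have h := hymax c hc
    rw [hfin c (hCU hc), hfin y hyU] at h
    exact_mod_cast h
  have hc'S := convexHull_min hCS hS hc'
  rw [hfin c' (hconvU hc'), hfin y hyU]
  exact_mod_cast hc'S.2
end
end

section
/- Let f be Legendre on ℝ^J with Bregman distance D such that D(x,·) is strictly convex on U for every x ∈ dom f, and let C ⊆ U be nonempty. Then the graphs of the farthest-point maps Q_C and Q_{conv C} coincide. -/
open Set Filter Topology Bornology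

noncomputable section

/-- If `D(x,·)` is strictly convex on `U` for every `x ∈ dom f`, then the graphs of the
farthest-point maps `Q_C` and `Q_(conv C)` coincide. -/
theorem farthest_graph_eq_convexHull {J : ℕ} (B : BregmanSetup J) (hB : B.IsLegendre)
    (hDstrict : ∀ x ∈ B.dom, StrictConvexOn ℝ B.U (fun y => (B.D x y).toReal))
    (C : Set (EuclideanSpace ℝ (Fin J))) (hCne : C.Nonempty) (hCU : C ⊆ B.U) :
    ∀ x : EuclideanSpace ℝ (Fin J), B.Q C x = B.Q (convexHull ℝ C) x := by
  intro x
  have hUconv : Convex ℝ B.U := hB.convex_dom.interior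
  have hconvU : convexHull ℝ C ⊆ B.U := convexHull_min hCU hUconv
  have hUdom : B.U ⊆ B.dom := interior_subset
  -- finiteness of D on dom × U
  have hDcoe : ∀ {x' : EuclideanSpace ℝ (Fin J)}, x' ∈ B.dom →
      ∀ {y : EuclideanSpace ℝ (Fin J)}, y ∈ B.U →
      B.D x' y = ((B.D x' y).toReal : EReal) := by
    intro x' hx' y hy
    obtain ⟨a, ha⟩ : ∃ a : ℝ, B.f x' = (a : EReal) :=
      ⟨(B.f x').toReal, (EReal.coe_toReal hx' (hB.proper_bot x')).symm⟩
    obtain ⟨b, hbb⟩ : ∃ b : ℝ, B.f y = (b : EReal) :=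
      ⟨(B.f y).toReal, (EReal.coe_toReal (hUdom hy) (hB.proper_bot y)).symm⟩
    simp only [BregmanSetup.D, if_pos hy, ha, hbb, ← EReal.coe_sub, EReal.toReal_coe]
  ext c
  simp only [BregmanSetup.Q, mem_setOf_eq]
  constructor
  · rintro ⟨hcC, hx, hmax⟩
    have hcU : c ∈ B.U := hCU hcC
    refine ⟨subset_convexHull ℝ C hcC, hx, fun y hy => ?_⟩
    obtain ⟨c', hc'C, hle⟩ :=
      (hDstrict x hx).convexOn.exists_ge_of_mem_convexHull hCU hy
    have h1 : B.D x c' ≤ B.D x c := hmax c' hc'C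
    rw [hDcoe hx (hCU hc'C), hDcoe hx hcU, EReal.coe_le_coe_iff] at h1
    rw [hDcoe hx (hconvU hy), hDcoe hx hcU, EReal.coe_le_coe_iff]
    exact hle.trans h1
  · rintro ⟨hcConv, hx, hmax⟩
    have hcU : c ∈ B.U := hconvU hcConv
    have hcC : c ∈ C := by
      refine extremePoints_convexHull_subset (mem_extremePoints.2 ⟨hcConv, ?_⟩)
      intro x₁ h₁ x₂ h₂ hseg
      rcases eq_or_ne x₁ x₂ with rfl | hne
      · rw [openSegment_same] at hseg
        exact ⟨hseg.symm, hseg.symm⟩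
      · exfalso
        obtain ⟨a, b, ha, hb, hab, hc⟩ := hseg
        have h1 : (B.D x x₁).toReal ≤ (B.D x c).toReal := by
          have := hmax x₁ h₁
          rwa [hDcoe hx (hconvU h₁), hDcoe hx hcU, EReal.coe_le_coe_iff] at this
        have h2 : (B.D x x₂).toReal ≤ (B.D x c).toReal := by
          have := hmax x₂ h₂
          rwa [hDcoe hx (hconvU h₂), hDcoe hx hcU, EReal.coe_le_coe_iff] at this
        have hstrict := (hDstrict x hx).2 (hconvU h₁) (hconvU h₂) hne ha hb hab
        rw [hc] at hstrict
        have : (B.D x c).toReal < (B.D x c).toReal := by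
          calc (B.D x c).toReal < a * (B.D x x₁).toReal + b * (B.D x x₂).toReal := hstrict
            _ ≤ a * (B.D x c).toReal + b * (B.D x c).toReal := by
                gcongr
            _ = (B.D x c).toReal := by rw [← add_mul, hab, one_mul]
        exact lt_irrefl _ this
    exact ⟨hcC, hx, fun c' hc' => hmax c' (subset_convexHull ℝ C hc')⟩
end
end

section
/- Let f be Legendre on ℝ^J with Bregman distance D, and C a nonempty compact subset of U = int dom f. Then the farthest-distance function F_C(x) = sup_{c ∈ C} D(x,c) is coercive, convex, lower semicontinuous, and proper, and its set of minimizers is nonempty and contained in U. -/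
open Set Filter Topology Bornology

noncomputable section

/-- `g` is convex as an extended-real-valued function. -/
def ERealConvex {J : ℕ} (g : EuclideanSpace ℝ (Fin J) → EReal) : Prop :=
  ∀ x y : EuclideanSpace ℝ (Fin J), ∀ a b : ℝ, 0 ≤ a → 0 ≤ b → a + b = 1 →
    g (a • x + b • y) ≤ (a : EReal) * g x + (b : EReal) * g y


section Aux

variable {J : ℕ} {B : BregmanSetup J}

local notation "X" => EuclideanSpace ℝ (Fin J)

lemma U_subset_dom : B.U ⊆ B.dom := interior_subset

lemma coe_f (hB : B.IsLegendre) {x : X} (hx : x ∈ B.dom) :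
    B.f x = ((B.f x).toReal : EReal) := (EReal.coe_toReal hx (hB.proper_bot x)).symm

/-- Gradient inequality for convex functions. -/
lemma grad_ineq (hB : B.IsLegendre) {y z : X} (hy : y ∈ B.U) (hz : z ∈ B.dom) :
    (B.f y).toReal + (inner ℝ (B.grad y) (z - y) : ℝ) ≤ (B.f z).toReal := by
  set φ : X → ℝ := fun x => (B.f x).toReal with hφ
  set v : X := z - y with hv
  -- derivative of t ↦ φ (y + t • v) at 0 is ⟪grad y, v⟫
  have hline : ∀ t : ℝ, HasDerivAt (fun t : ℝ => y + t • v) v t := by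
    intro t
    simpa using ((hasDerivAt_id t).smul_const v).const_add y
  have hgrad := (hB.smooth y hy).hasFDerivAt
  have hD : HasDerivAt (fun t : ℝ => φ (y + t • v)) ((inner ℝ (B.grad y) v : ℝ)) 0 := by
    have hg2 : HasFDerivAt φ ((InnerProductSpace.toDual ℝ X) (B.grad y)) (y + (0:ℝ) • v) := by
      simpa using hgrad
    have := hg2.comp_hasDerivAt 0 (hline 0)
    simp at this; exact this
  have hslope : Tendsto (slope (fun t : ℝ => φ (y + t • v)) 0) (nhdsWithin 0 (Set.Ioi 0))
      (nhds ((inner ℝ (B.grad y) v : ℝ))) :=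
    (hasDerivAt_iff_tendsto_slope.mp hD).mono_left
      (nhdsWithin_mono 0 (fun t ht => ne_of_gt ht))
  have hbound : ∀ᶠ t in nhdsWithin (0:ℝ) (Set.Ioi 0),
      slope (fun t : ℝ => φ (y + t • v)) 0 t ≤ φ z - φ y := by
    filter_upwards [Ioc_mem_nhdsGT_of_mem (Set.left_mem_Ico.mpr zero_lt_one)] with t ht
    have h01 : (0:ℝ) ≤ 1 - t := by linarith [ht.2]
    have hcomb := hB.convexOn.2 (U_subset_dom hy) hz h01 (le_of_lt ht.1) (by ring)
    have hpt : (1 - t) • y + t • z = y + t • v := by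
      rw [hv]; module
    rw [hpt] at hcomb
    have hslope_eq : slope (fun t : ℝ => φ (y + t • v)) 0 t
        = (φ (y + t • v) - φ y) / t := by
      simp [slope_def_field, sub_zero, zero_smul]
    rw [hslope_eq, div_le_iff₀ ht.1]
    calc φ (y + t • v) - φ y ≤ ((1 - t) * φ y + t * φ z) - φ y := by simp only [smul_eq_mul] at hcomb; linarith
      _ = (φ z - φ y) * t := by ring
  have := le_of_tendsto hslope hbound
  linarith [this]


lemma ereal_sub_sub (a : EReal) (p q : ℝ) : a - ↑p - ↑q = a + ↑(-p - q) := by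
  rw [sub_eq_add_neg, sub_eq_add_neg, add_assoc, ← EReal.coe_neg, ← EReal.coe_neg,
    ← EReal.coe_add, sub_eq_add_neg]

lemma D_eq (hB : B.IsLegendre) {c : X} (hc : c ∈ B.U) (x : X) :
    B.D x c = B.f x + ((-(B.f c).toReal - (inner ℝ (B.grad c) (x - c) : ℝ) : ℝ) : EReal) := by
  rw [BregmanSetup.D, if_pos hc, coe_f hB (U_subset_dom hc)]
  exact ereal_sub_sub _ _ _

lemma lsc_add_cont {f : X → EReal} (hf : LowerSemicontinuous f) (hbot : ∀ x, f x ≠ ⊥)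
    {a : X → ℝ} (ha : Continuous a) :
    LowerSemicontinuous (fun x => f x + ((a x : ℝ) : EReal)) := by
  intro x₀ y hy
  rcases eq_or_ne y ⊥ with rfl | hyb
  · refine Filter.Eventually.of_forall (fun x => ?_)
    simp only [bot_lt_iff_ne_bot]
    intro h
    rcases EReal.add_eq_bot_iff.mp h with h | h
    · exact hbot x h
    · exact (EReal.coe_ne_bot _) h
  · have hyt : y ≠ ⊤ := hy.ne_top
    lift y to ℝ using ⟨hyt, hyb⟩
    -- find real c with y - a x₀ < c and ↑c < f x₀
    obtain ⟨c, hc1, hc2⟩ : ∃ c : ℝ, y - a x₀ < c ∧ ((c : ℝ) : EReal) < f x₀ := by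
      have h1 : ((y - a x₀ : ℝ) : EReal) < f x₀ := by
        rcases eq_or_ne (f x₀) ⊤ with ht | ht
        · rw [ht]; exact EReal.coe_lt_top _
        · lift f x₀ to ℝ using ⟨ht, hbot x₀⟩ with s hs
          rw [EReal.coe_lt_coe_iff]
          rw [← EReal.coe_add, gt_iff_lt, EReal.coe_lt_coe_iff] at hy
          linarith
      rcases eq_or_ne (f x₀) ⊤ with ht | ht
      · exact ⟨y - a x₀ + 1, by linarith, by rw [ht]; exact EReal.coe_lt_top _⟩
      · lift f x₀ to ℝ using ⟨ht, hbot x₀⟩ with s hs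
        rw [EReal.coe_lt_coe_iff] at h1
        obtain ⟨c, hc1, hc2⟩ := exists_between h1
        exact ⟨c, hc1, EReal.coe_lt_coe_iff.mpr hc2⟩
    have hev1 : ∀ᶠ x in nhds x₀, ((c : ℝ) : EReal) < f x := hf x₀ _ hc2
    have hev2 : ∀ᶠ x in nhds x₀, y - c < a x :=
      ha.continuousAt (Ioi_mem_nhds (by linarith))
    filter_upwards [hev1, hev2] with x h1 h2
    have : ((c : ℝ) : EReal) + ((y - c : ℝ) : EReal) < f x + (a x : ℝ) :=
      EReal.add_lt_add h1 (EReal.coe_lt_coe_iff.mpr h2)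
    have he : ((c : ℝ) : EReal) + ((y - c : ℝ) : EReal) = (y : EReal) := by
      rw [← EReal.coe_add]; norm_num
    rwa [he] at this
lemma sublevel_closed {f : X → EReal} (hf : LowerSemicontinuous f) (y : EReal) :
    IsClosed {x | f x ≤ y} := by
  have : {x | f x ≤ y} = {x | y < f x}ᶜ := by
    ext x; simp [not_lt]
  rw [this]
  exact (hf.isOpen_preimage y).isClosed_compl

lemma D_lsc (hB : B.IsLegendre) {c : X} (hc : c ∈ B.U) :
    LowerSemicontinuous (fun x => B.D x c) := by
  have : (fun x => B.D x c)
      = fun x => B.f x + ((-(B.f c).toReal - (inner ℝ (B.grad c) (x - c) : ℝ) : ℝ) : EReal) := by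
    funext x; exact D_eq hB hc x
  rw [this]
  exact lsc_add_cont hB.lsc hB.proper_bot
    (continuous_const.sub (continuous_const.inner (continuous_id.sub continuous_const)))

lemma D_nonneg (hB : B.IsLegendre) {c : X} (hc : c ∈ B.U) (x : X) :
    (0 : EReal) ≤ B.D x c := by
  rw [D_eq hB hc]
  by_cases hx : x ∈ B.dom
  · rw [coe_f hB hx, ← EReal.coe_add]
    have h := grad_ineq hB hc hx
    have : (0:ℝ) ≤ (B.f x).toReal + (-(B.f c).toReal - inner ℝ (B.grad c) (x - c)) := by linarith
    exact_mod_cast EReal.coe_le_coe_iff.mpr this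
  · have : B.f x = ⊤ := not_not.mp hx
    rw [this, EReal.top_add_coe]
    exact le_top

lemma D_self (hB : B.IsLegendre) {c : X} (hc : c ∈ B.U) : B.D c c = 0 := by
  rw [D_eq hB hc, coe_f hB (U_subset_dom hc), ← EReal.coe_add]
  norm_num
lemma D_eq_zero_imp (hB : B.IsLegendre) {c z : X} (hc : c ∈ B.U) (hz : z ∈ B.dom)
    (h0 : B.D z c = 0) : z = c := by
  by_contra hne
  set φ : X → ℝ := fun x => (B.f x).toReal with hφ
  have hcd : c ∈ B.dom := U_subset_dom hc
  have hip : (inner ℝ (B.grad c) (z - c) : ℝ) = φ z - φ c := by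
    rw [D_eq hB hc, coe_f hB hz, ← EReal.coe_add] at h0
    have := EReal.coe_eq_zero.mp h0
    simp only [hφ]; linarith
  set p : ℝ → X := fun t => (1 - t) • c + t • z with hp
  have hpU : ∀ t : ℝ, 0 ≤ t → t < 1 → p t ∈ B.U := by
    intro t ht0 ht1
    exact hB.convex_dom.combo_interior_closure_mem_interior hc (subset_closure hz)
      (by linarith) ht0 (by ring)
  have hpval : ∀ t : ℝ, 0 ≤ t → t ≤ 1 → φ (p t) = φ c + t * (φ z - φ c) := by
    intro t ht0 ht1
    have hub := hB.convexOn.2 hcd hz (by linarith : (0:ℝ) ≤ 1 - t) ht0 (by ring)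
    simp only [smul_eq_mul] at hub
    have hpd : p t ∈ B.dom := hB.convex_dom hcd hz (by linarith) ht0 (by ring)
    have hlb := grad_ineq hB hc hpd
    have hpc : p t - c = t • (z - c) := by rw [hp]; module
    rw [hpc, real_inner_smul_right, hip] at hlb
    have : φ (p t) ≤ (1 - t) * φ c + t * φ z := hub
    simp only [hφ] at *
    linarith
  have ha := hpU (1/4) (by norm_num) (by norm_num)
  have hb := hpU (3/4) (by norm_num) (by norm_num)
  have hne2 : p (1/4) ≠ p (3/4) := by
    intro h
    apply hne
    have : ((1:ℝ)/2) • (z - c) = 0 := by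
      have : p (3/4) - p (1/4) = ((1:ℝ)/2) • (z - c) := by rw [hp]; module
      rw [h] at this; simpa using this.symm
    have := smul_eq_zero.mp this
    rcases this with h' | h'
    · norm_num at h'
    · rw [sub_eq_zero] at h'; exact h'
  have hstrict := hB.strict.2 ha hb hne2 (by norm_num : (0:ℝ) < 1/2) (by norm_num : (0:ℝ) < 1/2)
    (by norm_num)
  have hmid : (1/2 : ℝ) • p (1/4) + (1/2 : ℝ) • p (3/4) = p (1/2) := by rw [hp]; module
  rw [hmid] at hstrict
  have e1 := hpval (1/4) (by norm_num) (by norm_num)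
  have e2 := hpval (3/4) (by norm_num) (by norm_num)
  have e3 := hpval (1/2) (by norm_num) (by norm_num)
  simp only [smul_eq_mul, hφ] at hstrict e1 e2 e3
  rw [e1, e2, e3] at hstrict
  linarith
lemma lsc_exists_min_on_compact {G : X → EReal} (hG : LowerSemicontinuous G)
    {S : Set X} (hS : IsCompact S) (hne : S.Nonempty) :
    ∃ x ∈ S, ∀ y ∈ S, G x ≤ G y := by
  haveI : Nonempty S := hne.to_subtype
  set t : S → Set X := fun y => {x ∈ S | G x ≤ G y.1} with ht
  have htc : ∀ y : S, IsCompact (t y) := fun y =>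
    hS.inter_right (sublevel_closed hG (G y.1))
  have htcl : ∀ y : S, IsClosed (t y) := fun y =>
    hS.isClosed.inter (sublevel_closed hG (G y.1))
  have htn : ∀ y : S, (t y).Nonempty := fun y => ⟨y.1, y.2, le_rfl⟩
  have hdir : Directed (· ⊇ ·) t := by
    intro y₁ y₂
    rcases le_total (G y₁.1) (G y₂.1) with h | h
    · exact ⟨y₁, subset_rfl, fun x hx => ⟨hx.1, le_trans hx.2 h⟩⟩
    · exact ⟨y₂, fun x hx => ⟨hx.1, le_trans hx.2 h⟩, subset_rfl⟩
  obtain ⟨x, hx⟩ := IsCompact.nonempty_iInter_of_directed_nonempty_isCompact_isClosed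
    t hdir htn htc htcl
  simp only [Set.mem_iInter] at hx
  obtain ⟨y₀⟩ := ‹Nonempty S›
  exact ⟨x, (hx y₀).1, fun y hy => (hx ⟨y, hy⟩).2⟩

lemma isup_add_coe {T : EReal} (hT : T ≠ ⊥) {s : Set ℝ} (hne : s.Nonempty)
    (hbdd : BddAbove s) : (⨆ r ∈ s, (T + (r : EReal))) = T + ((sSup s : ℝ) : EReal) := by
  obtain ⟨r₀, hr₀⟩ := hne
  apply le_antisymm
  · refine iSup₂_le (fun r hr => ?_)
    exact add_le_add le_rfl (EReal.coe_le_coe_iff.mpr (le_csSup hbdd hr))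
  · rcases eq_or_ne T ⊤ with rfl | hTt
    · rw [EReal.top_add_coe]
      refine le_trans ?_ (le_iSup₂ (f := fun r (_ : r ∈ s) => (⊤:EReal) + (r:EReal)) r₀ hr₀)
      rw [EReal.top_add_coe]
    · lift T to ℝ using ⟨hTt, hT⟩ with tv
      set S : EReal := ⨆ r ∈ s, ((tv : EReal) + (r : EReal)) with hS
      have hSger : ∀ r ∈ s, ((tv + r : ℝ) : EReal) ≤ S := by
        intro r hr
        rw [EReal.coe_add]
        exact le_iSup₂ (f := fun r (_ : r ∈ s) => (tv : EReal) + (r:EReal)) r hr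
      rcases eq_or_ne S ⊤ with hSt | hSt
      · rw [hSt]; exact le_top
      have hSb : S ≠ ⊥ := by
        intro h
        have := hSger r₀ hr₀
        rw [h, le_bot_iff] at this
        exact EReal.coe_ne_bot _ this
      lift S to ℝ using ⟨hSt, hSb⟩ with sv
      have : ∀ r ∈ s, r ≤ sv - tv := by
        intro r hr
        have := EReal.coe_le_coe_iff.mp (hSger r hr)
        linarith
      have hsup : sSup s ≤ sv - tv := csSup_le ⟨r₀, hr₀⟩ this
      rw [← EReal.coe_add, EReal.coe_le_coe_iff]
      linarith
lemma D_coercive (hB : B.IsLegendre) {c : X} (hc : c ∈ B.U) (r : ℝ) :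
    Bornology.IsBounded {x : X | B.D x c ≤ (r : EReal)} := by
  suffices h : ∀ r : ℝ, 0 ≤ r → Bornology.IsBounded {x : X | B.D x c ≤ (r : EReal)} by
    refine (h (max r 0) (le_max_right r 0)).subset (fun x hx => ?_)
    simp only [Set.mem_setOf_eq] at hx ⊢
    exact le_trans hx (by exact_mod_cast le_max_left r 0)
  clear r; intro r hr
  have hcd : c ∈ B.dom := U_subset_dom hc
  set φ : X → ℝ := fun x => (B.f x).toReal with hφ
  set hfun : X → ℝ := fun z => φ z - φ c - (inner ℝ (B.grad c) (z - c) : ℝ) with hhf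
  have hdom : ∀ {z : X}, B.D z c ≤ (r : EReal) → z ∈ B.dom := by
    intro z hz
    by_contra h
    have hzt : B.f z = ⊤ := not_not.mp h
    rw [D_eq hB hc, hzt, EReal.top_add_coe] at hz
    exact EReal.coe_ne_top r (top_le_iff.mp hz)
  have hDreal : ∀ {z : X}, z ∈ B.dom → B.D z c = ((hfun z : ℝ) : EReal) := by
    intro z hz
    rw [D_eq hB hc, coe_f hB hz, ← EReal.coe_add]
    congr 1
    simp only [hhf, hφ]; ring
  have hfun_nonneg : ∀ {z : X}, z ∈ B.dom → 0 ≤ hfun z := by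
    intro z hz
    have := grad_ineq hB hc hz
    simp only [hhf, hφ]; linarith
  have hconvc : ∀ {v : X}, v ∈ B.dom → ∀ θ : ℝ, 0 ≤ θ → θ ≤ 1 →
      hfun ((1 - θ) • c + θ • v) ≤ θ * hfun v := by
    intro v hv θ hθ0 hθ1
    have hub := hB.convexOn.2 hcd hv (by linarith : (0:ℝ) ≤ 1 - θ) hθ0 (by ring)
    simp only [smul_eq_mul] at hub
    have hpc : ((1 - θ) • c + θ • v) - c = θ • (v - c) := by module
    simp only [hhf]
    rw [hpc, real_inner_smul_right]
    simp only [hφ] at hub ⊢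
    linarith
  -- suppose the sublevel set is unbounded
  by_contra hub
  have hseq : ∀ n : ℕ, ∃ x : X, B.D x c ≤ (r : EReal) ∧ (n : ℝ) < ‖x - c‖ := by
    by_contra h
    push_neg at h
    obtain ⟨n, hn⟩ := h
    apply hub
    refine (Metric.isBounded_closedBall : Bornology.IsBounded (Metric.closedBall c n)).subset
      (fun x hx => ?_)
    simp only [Set.mem_setOf_eq] at hx
    rw [Metric.mem_closedBall, dist_eq_norm]
    exact hn x hx
  choose x hx hnorm using hseq
  have hxdom : ∀ n, x n ∈ B.dom := fun n => hdom (hx n)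
  have hnormpos : ∀ n, 0 < ‖x n - c‖ := fun n => lt_of_le_of_lt (Nat.cast_nonneg n) (hnorm n)
  set d : ℕ → X := fun n => ‖x n - c‖⁻¹ • (x n - c) with hd
  have hdsph : ∀ n, d n ∈ Metric.sphere (0 : X) 1 := by
    intro n
    rw [mem_sphere_zero_iff_norm, hd]
    rw [norm_smul, norm_inv, norm_norm]
    exact inv_mul_cancel₀ (hnormpos n).ne'
  obtain ⟨dl, hdl, ψ, hψmono, hψtend⟩ := (isCompact_sphere (0:X) 1).tendsto_subseq hdsph
  -- the ray stays in the sublevel set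
  have hray : ∀ s : ℝ, 0 < s → B.D (c + s • dl) c ≤ (r : EReal) := by
    intro s hs
    have hclosed : IsClosed {z : X | B.D z c ≤ (r : EReal)} := sublevel_closed (D_lsc hB hc) _
    have hmem : ∀ᶠ n in atTop, c + s • d (ψ n) ∈ {z : X | B.D z c ≤ (r : EReal)} := by
      filter_upwards [eventually_ge_atTop ⌈s⌉₊] with n hn
      have hsle : s ≤ ‖x (ψ n) - c‖ := by
        calc s ≤ (⌈s⌉₊ : ℝ) := Nat.le_ceil s
          _ ≤ (ψ n : ℝ) := by exact_mod_cast le_trans hn hψmono.le_apply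
          _ ≤ ‖x (ψ n) - c‖ := (hnorm (ψ n)).le
      set θ : ℝ := s / ‖x (ψ n) - c‖ with hθ
      have hθ0 : 0 ≤ θ := div_nonneg hs.le (norm_nonneg _)
      have hθ1 : θ ≤ 1 := (div_le_one (hnormpos (ψ n))).mpr hsle
      have hpt : c + s • d (ψ n) = (1 - θ) • c + θ • (x (ψ n)) := by
        rw [hd, smul_smul]
        have hθ' : s * ‖x (ψ n) - c‖⁻¹ = θ := by
          rw [hθ, div_eq_mul_inv]
        rw [hθ']
        module
      have hcombo_dom : (1 - θ) • c + θ • x (ψ n) ∈ B.dom :=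
        hB.convex_dom hcd (hxdom (ψ n)) (by linarith) hθ0 (by ring)
      rw [hpt, hDreal hcombo_dom, EReal.coe_le_coe_iff]
      have hxr : hfun (x (ψ n)) ≤ r := by
        have := hx (ψ n)
        rw [hDreal (hxdom (ψ n)), EReal.coe_le_coe_iff] at this
        exact this
      calc hfun ((1 - θ) • c + θ • x (ψ n)) ≤ θ * hfun (x (ψ n)) := hconvc (hxdom (ψ n)) θ hθ0 hθ1
        _ ≤ θ * r := mul_le_mul_of_nonneg_left hxr hθ0
        _ ≤ r := mul_le_of_le_one_left hr hθ1
    have htend : Tendsto (fun n => c + s • d (ψ n)) atTop (𝓝 (c + s • dl)) :=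
      tendsto_const_nhds.add (hψtend.const_smul s)
    exact hclosed.mem_of_tendsto htend hmem
  have hwdom : ∀ s : ℝ, 0 < s → c + s • dl ∈ B.dom := fun s hs => hdom (hray s hs)
  have hkey : ∀ n : ℕ, hfun (c + dl) ≤ r / ((n : ℝ) + 1) := by
    intro n
    set s : ℝ := (n : ℝ) + 1 with hs
    have hspos : 0 < s := by positivity
    set τ : ℝ := 1 / s with hτ
    have hτpos : 0 < τ := by positivity
    have hτ1 : τ ≤ 1 := by
      rw [hτ, div_le_one hspos, hs]
      linarith [(Nat.cast_nonneg n : (0:ℝ) ≤ (n:ℝ))]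
    have hτs : τ * s = 1 := by rw [hτ]; exact one_div_mul_cancel hspos.ne'
    have hpt : c + dl = (1 - τ) • c + τ • (c + s • dl) := by
      have h1 : (1 - τ) • c + τ • (c + s • dl) = c + (τ * s) • dl := by module
      rw [h1, hτs, one_smul]
    have hwd := hwdom s hspos
    have hle := hconvc hwd τ hτpos.le hτ1
    rw [← hpt] at hle
    have hwr : hfun (c + s • dl) ≤ r := by
      have := hray s hspos
      rw [hDreal hwd, EReal.coe_le_coe_iff] at this
      exact this
    calc hfun (c + dl) ≤ τ * hfun (c + s • dl) := hle
      _ ≤ τ * r := mul_le_mul_of_nonneg_left hwr hτpos.le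
      _ = r / s := by rw [hτ]; ring
  have htend0 : Tendsto (fun n : ℕ => r / ((n : ℝ) + 1)) atTop (𝓝 0) := by
    have h1 : Tendsto (fun n : ℕ => 1 / ((n : ℝ) + 1)) atTop (𝓝 0) :=
      tendsto_one_div_add_atTop_nhds_zero_nat
    have := h1.const_mul r
    simpa [div_eq_mul_inv, mul_comm] using this
  have h0 : hfun (c + dl) ≤ 0 := ge_of_tendsto htend0 (Filter.Eventually.of_forall hkey)
  have hwd1 : c + dl ∈ B.dom := by
    have := hwdom 1 one_pos
    rwa [one_smul] at this
  have h0' : hfun (c + dl) = 0 := le_antisymm h0 (hfun_nonneg hwd1)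
  have hD0 : B.D (c + dl) c = 0 := by
    rw [hDreal hwd1, h0']; norm_num
  have := D_eq_zero_imp hB hc hwd1 hD0
  have hd0 : dl = 0 := by
    have h' : c + dl = c + 0 := by rw [add_zero]; exact this
    exact add_left_cancel h'
  rw [mem_sphere_zero_iff_norm, hd0, norm_zero] at hdl
  norm_num at hdl
lemma grad_norm_bound (hB : B.IsLegendre) {K : Set X} (hK : IsCompact K) (hKU : K ⊆ B.U)
    (hKne : K.Nonempty) : ∃ M : ℝ, 0 ≤ M ∧ ∀ c ∈ K, ‖B.grad c‖ ≤ M := by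
  obtain ⟨δ, hδpos, hδ⟩ := hK.exists_cthickening_subset_open isOpen_interior hKU
  set K' := Metric.cthickening δ K with hK'
  have hK'c : IsCompact K' := hK.cthickening
  have hK'U : K' ⊆ B.U := hδ
  have hKK' : K ⊆ K' := Metric.self_subset_cthickening K
  set φ : X → ℝ := fun x => (B.f x).toReal with hφ
  have hcont : ContinuousOn φ B.U := hB.convexOn.continuousOn_interior
  have hK'ne : K'.Nonempty := hKne.mono hKK'
  obtain ⟨pmax, hpmax, hmax⟩ := hK'c.exists_isMaxOn hK'ne (hcont.mono hK'U)
  obtain ⟨pmin, hpmin, hmin⟩ := hK'c.exists_isMinOn hK'ne (hcont.mono hK'U)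
  refine ⟨max 0 ((φ pmax - φ pmin) / δ), le_max_left _ _, fun c hc => ?_⟩
  rcases eq_or_ne (B.grad c) 0 with h0 | h0
  · rw [h0, norm_zero]; exact le_max_left _ _
  · have hgpos : 0 < ‖B.grad c‖ := norm_pos_iff.mpr h0
    set u : X := ‖B.grad c‖⁻¹ • B.grad c with hu
    have hu1 : ‖u‖ = 1 := by
      rw [hu, norm_smul, norm_inv, norm_norm]
      exact inv_mul_cancel₀ hgpos.ne'
    set z : X := c + δ • u with hz
    have hzK' : z ∈ K' := by
      refine Metric.mem_cthickening_of_dist_le z c δ K hc ?_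
      rw [dist_eq_norm, hz, add_sub_cancel_left, norm_smul, hu1, Real.norm_eq_abs,
        abs_of_pos hδpos, mul_one]
    have hzd : z ∈ B.dom := U_subset_dom (hK'U hzK')
    have hgi := grad_ineq hB (hKU hc) hzd
    have hzc : z - c = δ • u := by rw [hz, add_sub_cancel_left]
    have hip : (inner ℝ (B.grad c) (z - c) : ℝ) = δ * ‖B.grad c‖ := by
      rw [hzc, real_inner_smul_right, hu, real_inner_smul_right,
        real_inner_self_eq_norm_mul_norm]
      field_simp
    have hc1 : φ pmin ≤ φ c := hmin (hKK' hc)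
    have hc2 : φ z ≤ φ pmax := hmax hzK'
    have : δ * ‖B.grad c‖ ≤ φ pmax - φ pmin := by
      rw [hip] at hgi
      simp only [hφ] at *
      linarith
    refine le_max_of_le_right ?_
    rw [le_div_iff₀ hδpos]
    linarith
end Aux

set_option maxHeartbeats 1000000

/-- (Theorem 3.1) For `C ⊆ U` nonempty compact, the farthest-distance function
`F_C` is coercive, convex, lower semicontinuous and proper, and its set of
minimizers is nonempty and contained in `U`. -/
theorem argmin_farthest_distance_nonempty_subset_U {J : ℕ} (B : BregmanSetup J)
    (hB : B.IsLegendre) (C : Set (EuclideanSpace ℝ (Fin J))) (hCne : C.Nonempty) (hCU : C ⊆ B.U)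
    (hCcomp : IsCompact C) :
    (∀ r : ℝ, Bornology.IsBounded {x : EuclideanSpace ℝ (Fin J) | B.F C x ≤ (r : EReal)}) ∧
    ERealConvex (B.F C) ∧ LowerSemicontinuous (B.F C) ∧
    (∃ x, B.F C x ≠ ⊤) ∧ (∀ x, B.F C x ≠ ⊥) ∧
    (∃ x, ∀ z, B.F C x ≤ B.F C z) ∧
    (∀ x, (∀ z, B.F C x ≤ B.F C z) → x ∈ B.U) := by
  obtain ⟨c₀, hc₀⟩ := hCne
  have hc₀U : c₀ ∈ B.U := hCU hc₀
  have hc₀d : c₀ ∈ B.dom := U_subset_dom hc₀U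
  set φ : EuclideanSpace ℝ (Fin J) → ℝ := fun x => (B.f x).toReal with hφ
  have hφcont : ContinuousOn φ B.U := hB.convexOn.continuousOn_interior
  obtain ⟨Kg, hKg0, hKgb⟩ := grad_norm_bound hB hCcomp hCU ⟨c₀, hc₀⟩
  obtain ⟨R, hR⟩ := isBounded_iff_forall_norm_le.mp hCcomp.isBounded
  obtain ⟨pm, hpmC, hpmmin⟩ := hCcomp.exists_isMinOn ⟨c₀, hc₀⟩ (hφcont.mono hCU)
  set A : EuclideanSpace ℝ (Fin J) → Set ℝ :=
    fun x => (fun c => -φ c - (inner ℝ (B.grad c) (x - c) : ℝ)) '' C with hA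
  set g : EuclideanSpace ℝ (Fin J) → ℝ := fun x => sSup (A x) with hg
  have hane : ∀ x, (A x).Nonempty := fun x => ⟨_, ⟨c₀, hc₀, rfl⟩⟩
  have habdd : ∀ x, BddAbove (A x) := by
    intro x
    refine ⟨-φ pm + Kg * (‖x‖ + R), ?_⟩
    rintro v ⟨c, hc, rfl⟩
    have h1 : φ pm ≤ φ c := hpmmin hc
    have h2 : |(inner ℝ (B.grad c) (x - c) : ℝ)| ≤ ‖B.grad c‖ * ‖x - c‖ := abs_real_inner_le_norm _ _
    have h3 : ‖x - c‖ ≤ ‖x‖ + ‖c‖ := norm_sub_le _ _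
    have h5 : ‖B.grad c‖ * ‖x - c‖ ≤ Kg * (‖x‖ + R) :=
      mul_le_mul (hKgb c hc) (by linarith [hR c hc]) (norm_nonneg _) hKg0
    have h6 := neg_abs_le (inner ℝ (B.grad c) (x - c) : ℝ)
    show -φ c - (inner ℝ (B.grad c) (x - c) : ℝ) ≤ -φ pm + Kg * (‖x‖ + R)
    linarith
  have haup : ∀ x, ∀ c ∈ C, -φ c - (inner ℝ (B.grad c) (x - c) : ℝ) ≤ g x :=
    fun x c hc => le_csSup (habdd x) ⟨c, hc, rfl⟩
  have hgle : ∀ x (b : ℝ), (∀ c ∈ C, -φ c - (inner ℝ (B.grad c) (x - c) : ℝ) ≤ b) → g x ≤ b := by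
    intro x b hb
    exact csSup_le (hane x) (by rintro v ⟨c, hc, rfl⟩; exact hb c hc)
  have hFg : ∀ x, B.F C x = B.f x + ((g x : ℝ) : EReal) := by
    intro x
    have h1 : (⨆ c ∈ C, B.D x c)
        = ⨆ c ∈ C, (B.f x + ((-φ c - (inner ℝ (B.grad c) (x - c) : ℝ) : ℝ) : EReal)) :=
      biSup_congr (fun c hc => D_eq hB (hCU hc) x)
    have h2 : (⨆ v ∈ A x, (B.f x + (v : EReal))) = B.f x + ((sSup (A x) : ℝ) : EReal) :=
      isup_add_coe (hB.proper_bot x) (hane x) (habdd x)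
    rw [hA, iSup_image] at h2
    rw [show B.F C x = ⨆ c ∈ C, B.D x c from rfl, h1, h2]
  have hFbot : ∀ x, B.F C x ≠ ⊥ := by
    intro x h
    rw [hFg x] at h
    rcases EReal.add_eq_bot_iff.mp h with h' | h'
    · exact hB.proper_bot x h'
    · exact EReal.coe_ne_bot _ h'
  have hFdom : ∀ x, x ∈ B.dom → B.F C x = ((φ x + g x : ℝ) : EReal) := by
    intro x hx
    rw [hFg x, coe_f hB hx, ← EReal.coe_add]
  have hFtop : ∀ x, x ∉ B.dom → B.F C x = ⊤ := by
    intro x hx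
    rw [hFg x, not_not.mp hx, EReal.top_add_coe]
  have hglip : ∀ x y, g x ≤ g y + Kg * ‖x - y‖ := by
    intro x y
    refine hgle x _ (fun c hc => ?_)
    have h1 : (inner ℝ (B.grad c) (y - c) : ℝ) - (inner ℝ (B.grad c) (x - c) : ℝ)
        = (inner ℝ (B.grad c) (y - x) : ℝ) := by
      rw [← inner_sub_right]; congr 1; abel
    have h2 := haup y c hc
    have h3 : |(inner ℝ (B.grad c) (y - x) : ℝ)| ≤ ‖B.grad c‖ * ‖y - x‖ := abs_real_inner_le_norm _ _
    have h4 : ‖B.grad c‖ * ‖y - x‖ ≤ Kg * ‖x - y‖ := by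
      rw [norm_sub_rev y x]
      exact mul_le_mul_of_nonneg_right (hKgb c hc) (norm_nonneg _)
    linarith [le_abs_self (inner ℝ (B.grad c) (y - x) : ℝ)]
  have hgcont : Continuous g := by
    have hlip : LipschitzWith (Real.toNNReal Kg) g := by
      apply LipschitzWith.of_dist_le_mul
      intro x y
      rw [Real.dist_eq, Real.coe_toNNReal Kg hKg0, dist_eq_norm]
      rw [abs_sub_le_iff]
      constructor
      · linarith [hglip x y]
      · rw [norm_sub_rev]; linarith [hglip y x]
    exact hlip.continuous
  have hlscF : LowerSemicontinuous (B.F C) := by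
    have hFfun : B.F C = fun x => B.f x + ((g x : ℝ) : EReal) := funext hFg
    rw [hFfun]
    exact lsc_add_cont hB.lsc hB.proper_bot hgcont
  have hcoer : ∀ r : ℝ,
      Bornology.IsBounded {x : EuclideanSpace ℝ (Fin J) | B.F C x ≤ (r : EReal)} := by
    intro r
    refine (D_coercive hB hc₀U r).subset (fun x hx => ?_)
    simp only [Set.mem_setOf_eq] at hx ⊢
    exact le_trans (le_iSup₂ (f := fun c (_ : c ∈ C) => B.D x c) c₀ hc₀) hx
  have hconv : ERealConvex (B.F C) := by
    intro x y aa bb ha hb hab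
    rcases eq_or_lt_of_le ha with h0 | hapos
    · have hbb : bb = 1 := by linarith
      rw [← h0, hbb, zero_smul, one_smul, zero_add, EReal.coe_zero, EReal.coe_one,
        EReal.zero_mul, one_mul, zero_add]
    rcases eq_or_lt_of_le hb with h0 | hbpos
    · have haa : aa = 1 := by linarith
      rw [← h0, haa, zero_smul, one_smul, add_zero, EReal.coe_zero, EReal.coe_one,
        EReal.zero_mul, one_mul, add_zero]
    have hmulbot : ∀ (t : ℝ) (z : EReal), 0 < t → z ≠ ⊥ → (t : EReal) * z ≠ ⊥ := by
      intro t z ht hz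
      induction z using EReal.rec with
      | bot => exact absurd rfl hz
      | coe q => rw [← EReal.coe_mul]; exact EReal.coe_ne_bot _
      | top => rw [EReal.coe_mul_top_of_pos ht]; exact top_ne_bot
    by_cases hx : x ∈ B.dom
    · by_cases hy : y ∈ B.dom
      · have hcombo : aa • x + bb • y ∈ B.dom := hB.convex_dom hx hy ha hb hab
        rw [hFdom _ hcombo, hFdom x hx, hFdom y hy, ← EReal.coe_mul, ← EReal.coe_mul,
          ← EReal.coe_add, EReal.coe_le_coe_iff]
        have hφc := hB.convexOn.2 hx hy ha hb hab
        simp only [smul_eq_mul] at hφc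
        have hgc : g (aa • x + bb • y) ≤ aa * g x + bb * g y := by
          refine hgle _ _ (fun c hc => ?_)
          have hgx := haup x c hc
          have hgy := haup y c hc
          have hlin : (inner ℝ (B.grad c) ((aa • x + bb • y) - c) : ℝ)
              = aa * (inner ℝ (B.grad c) (x - c) : ℝ) + bb * (inner ℝ (B.grad c) (y - c) : ℝ) := by
            have hvec : (aa • x + bb • y) - c = aa • (x - c) + bb • (y - c) := by
              have h' : aa • (x - c) + bb • (y - c) = aa • x + bb • y - (aa + bb) • c := by module
              rw [h', hab, one_smul]
            rw [hvec, inner_add_right, real_inner_smul_right, real_inner_smul_right]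
          rw [hlin]
          have heq : -φ c - (aa * (inner ℝ (B.grad c) (x - c) : ℝ)
              + bb * (inner ℝ (B.grad c) (y - c) : ℝ))
              = aa * (-φ c - (inner ℝ (B.grad c) (x - c) : ℝ))
              + bb * (-φ c - (inner ℝ (B.grad c) (y - c) : ℝ)) := by
            linear_combination (φ c) * hab
          rw [heq]
          exact add_le_add (mul_le_mul_of_nonneg_left hgx ha)
            (mul_le_mul_of_nonneg_left hgy hb)
        linarith [hφc, hgc]
      · have hFy : B.F C y = ⊤ := hFtop y hy
        rw [hFy, EReal.coe_mul_top_of_pos hbpos, EReal.add_top_of_ne_bot (hmulbot aa _ hapos (hFbot x))]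
        exact le_top
    · have hFx : B.F C x = ⊤ := hFtop x hx
      rw [hFx, EReal.coe_mul_top_of_pos hapos, EReal.top_add_of_ne_bot (hmulbot bb _ hbpos (hFbot y))]
      exact le_top
  -- existence of a minimizer
  have hminex : ∃ x, ∀ z, B.F C x ≤ B.F C z := by
    set r0 : ℝ := φ c₀ + g c₀ with hr0
    have hc₀S : c₀ ∈ {x : EuclideanSpace ℝ (Fin J) | B.F C x ≤ ((r0 : ℝ) : EReal)} := by
      simp only [Set.mem_setOf_eq]
      rw [hFdom c₀ hc₀d]
    have hScomp : IsCompact {x : EuclideanSpace ℝ (Fin J) | B.F C x ≤ ((r0 : ℝ) : EReal)} :=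
      Metric.isCompact_of_isClosed_isBounded (sublevel_closed hlscF _) (hcoer r0)
    obtain ⟨xm, hxmS, hxm⟩ := lsc_exists_min_on_compact hlscF hScomp ⟨c₀, hc₀S⟩
    refine ⟨xm, fun z => ?_⟩
    by_cases hz : z ∈ {x : EuclideanSpace ℝ (Fin J) | B.F C x ≤ ((r0 : ℝ) : EReal)}
    · exact hxm z hz
    · have h1 : ((r0 : ℝ) : EReal) < B.F C z := not_le.mp hz
      calc B.F C xm ≤ B.F C c₀ := hxm c₀ hc₀S
        _ = ((r0 : ℝ) : EReal) := hFdom c₀ hc₀d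
        _ ≤ B.F C z := h1.le
  refine ⟨hcoer, hconv, hlscF, ⟨c₀, by rw [hFdom c₀ hc₀d]; exact EReal.coe_ne_top _⟩, hFbot,
    hminex, ?_⟩
  -- minimizers lie in U
  intro x hxmin
  have hxdom : x ∈ B.dom := by
    by_contra h
    have h1 := hxmin c₀
    rw [hFtop x h, hFdom c₀ hc₀d] at h1
    exact EReal.coe_ne_top _ (top_le_iff.mp h1)
  by_contra hxU
  have hfront : x ∈ frontier B.dom := ⟨subset_closure hxdom, hxU⟩
  set dd : EuclideanSpace ℝ (Fin J) := c₀ - x with hdd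
  set t : ℕ → ℝ := fun n => 1 / ((n : ℝ) + 1) with ht
  have htpos : ∀ n, 0 < t n := fun n => by rw [ht]; positivity
  have ht1 : ∀ n, t n ≤ 1 := by
    intro n
    rw [ht, div_le_one (by positivity)]
    linarith [(Nat.cast_nonneg n : (0:ℝ) ≤ (n:ℝ))]
  set sn : ℕ → EuclideanSpace ℝ (Fin J) := fun n => x + (t n) • dd with hsn
  have hsnU : ∀ n, sn n ∈ B.U := by
    intro n
    have h1 := hB.convex_dom.combo_interior_closure_mem_interior hc₀U (subset_closure hxdom)
      (htpos n) (by linarith [ht1 n] : (0:ℝ) ≤ 1 - t n) (by ring)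
    have h2 : (t n) • c₀ + (1 - t n) • x = sn n := by rw [hsn, hdd]; module
    rwa [h2] at h1
  have hsntend : Tendsto sn atTop (𝓝 x) := by
    have h1 : Tendsto (fun n : ℕ => t n) atTop (𝓝 0) := by
      rw [ht]; exact tendsto_one_div_add_atTop_nhds_zero_nat
    have h2 := (h1.smul_const dd).const_add x
    simpa using h2
  have hsteep := hB.steep x hfront sn hsnU hsntend
  obtain ⟨ε, hεpos, hεsub⟩ := Metric.isOpen_iff.mp isOpen_interior c₀ hc₀U
  set δ : ℝ := ε / 2 with hδ
  have hδpos : 0 < δ := by rw [hδ]; positivity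
  have hcb : Metric.closedBall c₀ δ ⊆ B.U :=
    subset_trans (Metric.closedBall_subset_ball (by rw [hδ]; linarith)) hεsub
  obtain ⟨qmax, hqmax, hqm⟩ := (isCompact_closedBall c₀ δ).exists_isMaxOn
    ⟨c₀, Metric.mem_closedBall_self hδpos.le⟩ (hφcont.mono hcb)
  set m1 : ℝ := φ c₀ - ‖B.grad c₀‖ * ‖dd‖ with hm1
  have hsnlb : ∀ n, m1 ≤ φ (sn n) := by
    intro n
    have hgi := grad_ineq hB hc₀U (U_subset_dom (hsnU n))
    have hvec : sn n - c₀ = (t n - 1) • dd := by rw [hsn, hdd]; module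
    have h3 : ‖sn n - c₀‖ ≤ ‖dd‖ := by
      rw [hvec, norm_smul, Real.norm_eq_abs, abs_of_nonpos (by linarith [ht1 n])]
      nlinarith [norm_nonneg dd, htpos n]
    have h2 := abs_real_inner_le_norm (B.grad c₀) (sn n - c₀)
    have h4 : ‖B.grad c₀‖ * ‖sn n - c₀‖ ≤ ‖B.grad c₀‖ * ‖dd‖ :=
      mul_le_mul_of_nonneg_left h3 (norm_nonneg _)
    have h5 := neg_abs_le (inner ℝ (B.grad c₀) (sn n - c₀) : ℝ)
    simp only [hφ, hm1] at *
    linarith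
  have hlow : ∀ n, -(Kg * ‖dd‖) ≤ (inner ℝ (B.grad (sn n)) dd : ℝ) := by
    intro n
    have hgi := grad_ineq hB (hsnU n) hxdom
    have hxsn : x - sn n = (-(t n)) • dd := by rw [hsn]; module
    rw [hxsn, real_inner_smul_right] at hgi
    have hmin := hxmin (sn n)
    rw [hFdom x hxdom, hFdom (sn n) (U_subset_dom (hsnU n)), EReal.coe_le_coe_iff] at hmin
    have hg2 := hglip (sn n) x
    have hsnx : ‖sn n - x‖ = t n * ‖dd‖ := by
      rw [hsn, add_sub_cancel_left, norm_smul, Real.norm_eq_abs, abs_of_pos (htpos n)]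
    rw [hsnx] at hg2
    have h5 : t n * (-(Kg * ‖dd‖)) ≤ t n * (inner ℝ (B.grad (sn n)) dd : ℝ) := by nlinarith
    exact le_of_mul_le_mul_left h5 (htpos n)
  set Bd : ℝ := (φ qmax - m1 + Kg * ‖dd‖) / δ with hBd
  have hbd : ∀ n, ‖B.grad (sn n)‖ ≤ max Bd 0 := by
    intro n
    rcases eq_or_ne (B.grad (sn n)) 0 with h0 | h0
    · rw [h0, norm_zero]; exact le_max_right _ _
    · have hgp : 0 < ‖B.grad (sn n)‖ := norm_pos_iff.mpr h0
      set v : EuclideanSpace ℝ (Fin J) := B.grad (sn n) with hv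
      set u : EuclideanSpace ℝ (Fin J) := ‖v‖⁻¹ • v with hu
      have hu1 : ‖u‖ = 1 := by
        rw [hu, norm_smul, norm_inv, norm_norm]
        exact inv_mul_cancel₀ hgp.ne'
      set p : EuclideanSpace ℝ (Fin J) := c₀ + δ • u with hp
      have hpU : p ∈ B.U := by
        apply hcb
        rw [Metric.mem_closedBall, dist_eq_norm, hp, add_sub_cancel_left, norm_smul, hu1,
          Real.norm_eq_abs, abs_of_pos hδpos, mul_one]
      have hgi := grad_ineq hB (hsnU n) (U_subset_dom hpU)
      have hsplit : p - sn n = (c₀ - sn n) + δ • u := by rw [hp]; abel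
      have hvec2 : c₀ - sn n = (1 - t n) • dd := by rw [hsn, hdd]; module
      have hip1 : (inner ℝ v (c₀ - sn n) : ℝ) = (1 - t n) * (inner ℝ v dd : ℝ) := by
        rw [hvec2, real_inner_smul_right]
      have hip2 : (inner ℝ v (δ • u) : ℝ) = δ * ‖v‖ := by
        rw [real_inner_smul_right, hu, real_inner_smul_right, real_inner_self_eq_norm_mul_norm]
        field_simp
      have hip : (inner ℝ v (p - sn n) : ℝ) = (1 - t n) * (inner ℝ v dd : ℝ) + δ * ‖v‖ := by
        rw [hsplit, inner_add_right, hip1, hip2]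
      rw [hip] at hgi
      have hb1 : φ p ≤ φ qmax := hqm (by
        rw [Metric.mem_closedBall, dist_eq_norm, hp, add_sub_cancel_left, norm_smul, hu1,
          Real.norm_eq_abs, abs_of_pos hδpos, mul_one])
      have hb2 : m1 ≤ φ (sn n) := hsnlb n
      have hb3 : -(Kg * ‖dd‖) ≤ (inner ℝ v dd : ℝ) := hlow n
      have hb4 : (1 - t n) * (-(Kg * ‖dd‖)) ≤ (1 - t n) * (inner ℝ v dd : ℝ) :=
        mul_le_mul_of_nonneg_left hb3 (by linarith [ht1 n])
      have hb5 : -(Kg * ‖dd‖) ≤ (1 - t n) * (inner ℝ v dd : ℝ) := by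
        have hKd : 0 ≤ Kg * ‖dd‖ := mul_nonneg hKg0 (norm_nonneg _)
        nlinarith [htpos n, ht1 n]
      have hδv : δ * ‖v‖ ≤ φ qmax - m1 + Kg * ‖dd‖ := by
        simp only [hφ, hm1] at *
        linarith
      refine le_max_of_le_left ?_
      rw [hBd, le_div_iff₀ hδpos]
      linarith
  obtain ⟨n, hn⟩ := (hsteep.eventually_gt_atTop (max Bd 0)).exists
  exact absurd (hbd n) (not_le.mpr hn)
end
end

section
/- Let f be Legendre on ℝ^J with Bregman distance D, and let C ⊆ int dom f be nonempty and compact. If for every x ∈ int dom f the farthest-point set argmax_{c ∈ C} D(x,c) is a singleton (C is a D-Klee set), then C is a singleton. -/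
open Set Filter Topology Bornology

noncomputable section

open scoped RealInnerProductSpace

section Helpers

open scoped RealInnerProductSpace

variable {E : Type*} [NormedAddCommGroup E] [InnerProductSpace ℝ E] [CompleteSpace E]

private lemma line_hasDerivAt {f : E → ℝ} {w y v : E} {t₀ : ℝ}
    (hf : HasGradientAt f w (y + t₀ • v)) :
    HasDerivAt (fun t : ℝ => f (y + t • v)) ⟪w, v⟫ t₀ := by
  have h1 : HasDerivAt (fun t : ℝ => y + t • v) v t₀ := by
    simpa using ((hasDerivAt_id t₀).smul_const v).const_add y
  have h2 := (hf.hasFDerivAt).comp_hasDerivAt t₀ h1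
  exact h2

private lemma gradient_ineq {f : E → ℝ} {U : Set E}
    (hcv : ConvexOn ℝ U f) {x y w : E} (hx : x ∈ U) (hy : y ∈ U)
    (hf : HasGradientAt f w y) :
    f y + ⟪w, x - y⟫ ≤ f x := by
  set φ : ℝ → ℝ := fun t => f (y + t • (x - y)) with hφ
  have hf0 : HasGradientAt f w (y + (0:ℝ) • (x - y)) := by simpa using hf
  have hder : HasDerivAt φ ⟪w, x - y⟫ 0 := line_hasDerivAt hf0
  have hslope : ∀ t ∈ Ioo (0:ℝ) 1, slope φ 0 t ≤ f x - f y := by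
    intro t ht
    have hxy : y + t • (x - y) = (1 - t) • y + t • x := by module
    have hc := hcv.2 hy hx (by linarith [ht.2] : (0:ℝ) ≤ 1 - t) ht.1.le (by ring)
    have hφt : φ t ≤ (1 - t) * f y + t * f x := by
      rw [hφ]; simp only; rw [hxy]; simpa using hc
    have hφ0 : φ 0 = f y := by simp [hφ]
    rw [slope_def_field]
    rw [hφ0, sub_zero, div_le_iff₀ ht.1]
    nlinarith [ht.1]
  have hlim : Tendsto (slope φ 0) (𝓝[>] (0:ℝ)) (𝓝 ⟪w, x - y⟫) :=
    (hasDerivAt_iff_tendsto_slope.1 hder).mono_left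
      (nhdsWithin_mono _ (fun t ht => ne_of_gt ht))
  have hle : ⟪w, x - y⟫ ≤ f x - f y := by
    refine le_of_tendsto hlim ?_
    filter_upwards [Ioo_mem_nhdsGT_of_mem (by exact ⟨le_refl 0, zero_lt_one⟩ : (0:ℝ) ∈ Ico (0:ℝ) 1)] with t ht
    exact hslope t ht
  linarith

private lemma gradient_ineq_strict {f : E → ℝ} {U : Set E}
    (hst : StrictConvexOn ℝ U f) {x y w : E} (hx : x ∈ U) (hy : y ∈ U) (hne : x ≠ y)
    (hf : HasGradientAt f w y) :
    f y + ⟪w, x - y⟫ < f x := by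
  have hm : (1/2 : ℝ) • y + (1/2 : ℝ) • x ∈ U :=
    hst.1 hy hx (by norm_num) (by norm_num) (by norm_num)
  have h1 : f ((1/2:ℝ) • y + (1/2:ℝ) • x) < (1/2) * f y + (1/2) * f x :=
    hst.2 hy hx (Ne.symm hne) (by norm_num) (by norm_num) (by norm_num)
  have h2 : f y + ⟪w, ((1/2:ℝ) • y + (1/2:ℝ) • x) - y⟫ ≤ f ((1/2:ℝ) • y + (1/2:ℝ) • x) :=
    gradient_ineq hst.convexOn hm hy hf
  have h3 : ((1/2:ℝ) • y + (1/2:ℝ) • x) - y = (1/2 : ℝ) • (x - y) := by module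
  rw [h3, real_inner_smul_right] at h2
  linarith

private lemma gradient_strict_mono {f : E → ℝ} {U : Set E}
    (hst : StrictConvexOn ℝ U f) {x y wx wy : E} (hx : x ∈ U) (hy : y ∈ U) (hne : x ≠ y)
    (hfx : HasGradientAt f wx x) (hfy : HasGradientAt f wy y) :
    0 < ⟪wx - wy, x - y⟫ := by
  have h1 := gradient_ineq_strict hst hx hy hne hfy
  have h2 := gradient_ineq_strict hst hy hx (Ne.symm hne) hfx
  have h4 : (y - x) = -(x - y) := by abel
  rw [h4, inner_neg_right] at h2
  rw [inner_sub_left]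
  linarith

private lemma subgradient_unique {f : E → ℝ} {U : Set E} (hUo : IsOpen U)
    {y w G : E} (hy : y ∈ U) (hf : HasGradientAt f G y)
    (hw : ∀ z ∈ U, f y + ⟪w, z - y⟫ ≤ f z) : w = G := by
  have key : ∀ v : E, ⟪w, v⟫ ≤ ⟪G, v⟫ := by
    intro v
    obtain ⟨ε, hε, hball⟩ := Metric.isOpen_iff.1 hUo y hy
    set φ : ℝ → ℝ := fun t => f (y + t • v) with hφ
    have hf0 : HasGradientAt f G (y + (0:ℝ) • v) := by simpa using hf
    have hder : HasDerivAt φ ⟪G, v⟫ 0 := line_hasDerivAt hf0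
    have hδ : 0 < ε / (‖v‖ + 1) := by positivity
    have hmem : ∀ t ∈ Ioo (0:ℝ) (ε / (‖v‖ + 1)), y + t • v ∈ U := by
      intro t ht
      apply hball
      rw [mem_ball_iff_norm]
      have h0 : y + t • v - y = t • v := by abel
      rw [h0, norm_smul, Real.norm_eq_abs, abs_of_pos ht.1]
      calc t * ‖v‖ ≤ t * (‖v‖ + 1) := by nlinarith [ht.1, norm_nonneg v]
        _ < (ε / (‖v‖ + 1)) * (‖v‖ + 1) := by
            apply mul_lt_mul_of_pos_right ht.2 (by positivity)
        _ = ε := by field_simp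
    have hlim : Tendsto (slope φ 0) (𝓝[>] (0:ℝ)) (𝓝 ⟪G, v⟫) :=
      (hasDerivAt_iff_tendsto_slope.1 hder).mono_left
        (nhdsWithin_mono _ (fun t ht => ne_of_gt ht))
    refine ge_of_tendsto hlim ?_
    filter_upwards [Ioo_mem_nhdsGT_of_mem
      (⟨le_refl 0, hδ⟩ : (0:ℝ) ∈ Ico (0:ℝ) (ε / (‖v‖ + 1)))] with t ht
    have hz := hw _ (hmem t ht)
    have h0 : y + t • v - y = t • v := by abel
    rw [h0, real_inner_smul_right] at hz
    have hφ0 : φ 0 = f y := by simp [hφ]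
    rw [slope_def_field, hφ0, sub_zero, le_div_iff₀ ht.1]
    have : φ t = f (y + t • v) := rfl
    nlinarith [hz]
  have h1 := key (w - G)
  have h2 : ⟪w - G, w - G⟫ ≤ 0 := by
    rw [inner_sub_left]
    linarith
  exact sub_eq_zero.1 (real_inner_self_nonpos.1 h2)

private lemma gradient_bound_on_compact {f : E → ℝ} {G : E → E} {U : Set E}
    (hUo : IsOpen U) (hcv : ConvexOn ℝ U f)
    (hdiff : ∀ y ∈ U, HasGradientAt f (G y) y) [ProperSpace E]
    {C : Set E} (hC : IsCompact C) (hCU : C ⊆ U) :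
    ∃ A : ℝ, 0 ≤ A ∧ ∀ c ∈ C, ‖G c‖ ≤ A := by
  have hFcont : ContinuousOn f U := fun z hz =>
    ((hdiff z hz).hasFDerivAt.differentiableAt.continuousAt).continuousWithinAt
  have hloc : ∀ c ∈ C, ∃ r > 0, ∃ M : ℝ, ∀ z ∈ Metric.ball c r, ‖G z‖ ≤ M := by
    intro c hc
    obtain ⟨ε, hε, hball⟩ := Metric.isOpen_iff.1 hUo c (hCU hc)
    have hr : 0 < ε / 3 := by positivity
    have hsub : Metric.closedBall c (2 * (ε / 3)) ⊆ U := by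
      intro z hz
      rw [Metric.mem_closedBall] at hz
      exact hball (by rw [Metric.mem_ball]; linarith)
    obtain ⟨M0, hM0⟩ := (isCompact_closedBall c (2 * (ε / 3))).exists_bound_of_continuousOn
      (hFcont.mono hsub)
    refine ⟨ε / 3, hr, 2 * M0 / (ε / 3), ?_⟩
    intro z hz
    rw [Metric.mem_ball] at hz
    have hzball : z ∈ Metric.closedBall c (2 * (ε / 3)) := by
      rw [Metric.mem_closedBall]; linarith
    have hzU : z ∈ U := hsub hzball
    have hM0nn : 0 ≤ M0 := le_trans (norm_nonneg _) (hM0 c (by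
      rw [Metric.mem_closedBall, dist_self]; positivity))
    rcases eq_or_ne (G z) 0 with h0 | h0
    · rw [h0, norm_zero]; positivity
    · set w : E := ((ε / 3) / ‖G z‖) • G z with hwdef
      have hGpos : 0 < ‖G z‖ := norm_pos_iff.2 h0
      have hwnorm : ‖w‖ = ε / 3 := by
        rw [hwdef, norm_smul, Real.norm_eq_abs, abs_of_pos (by positivity)]
        field_simp
      have hzwball : z + w ∈ Metric.closedBall c (2 * (ε / 3)) := by
        rw [Metric.mem_closedBall]
        calc dist (z + w) c ≤ dist (z + w) z + dist z c := dist_triangle _ _ _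
          _ ≤ ε / 3 + ε / 3 := by
              rw [dist_eq_norm]
              have : z + w - z = w := by abel
              rw [this, hwnorm]
              have := dist_eq_norm z c
              linarith [hz.le]
          _ ≤ 2 * (ε / 3) := by linarith
      have hzwU : z + w ∈ U := hsub hzwball
      have hgi := gradient_ineq hcv hzwU hzU (hdiff z hzU)
      have hsimp : z + w - z = w := by abel
      rw [hsimp] at hgi
      have hinner : ⟪G z, w⟫ = (ε / 3) * ‖G z‖ := by
        rw [hwdef, real_inner_smul_right, real_inner_self_eq_norm_sq]
        field_simp
      have hfb1 := hM0 z hzball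
      have hfb2 := hM0 (z + w) hzwball
      have h1 : (ε / 3) * ‖G z‖ ≤ 2 * M0 := by
        rw [← hinner]
        have := abs_le.1 (by simpa [Real.norm_eq_abs] using hfb1)
        have := abs_le.1 (by simpa [Real.norm_eq_abs] using hfb2)
        linarith
      rw [le_div_iff₀ hr]
      linarith
  choose! r hrpos M hM using hloc
  obtain ⟨t, htC, hcover⟩ := hC.elim_nhds_subcover (fun c => Metric.ball c (r c))
    (fun c hc => (Metric.isOpen_ball).mem_nhds (Metric.mem_ball_self (hrpos c hc)))
  refine ⟨(t.sup fun c => ⌈M c⌉₊ : ℕ), Nat.cast_nonneg _, ?_⟩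
  intro c' hc'
  obtain ⟨c, hct, hc'ball⟩ := Set.mem_iUnion₂.1 (hcover hc')
  calc ‖G c'‖ ≤ M c := hM c (htC c hct) c' hc'ball
    _ ≤ (⌈M c⌉₊ : ℝ) := Nat.le_ceil _
    _ ≤ ((t.sup fun c => ⌈M c⌉₊ : ℕ) : ℝ) := by
        exact_mod_cast Finset.le_sup (f := fun c => ⌈M c⌉₊) hct

end Helpers

set_option maxHeartbeats 2000000 in
private theorem klee_aux {E : Type*} [NormedAddCommGroup E] [InnerProductSpace ℝ E]
    [CompleteSpace E] [ProperSpace E]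
    (fr : E → ℝ) (g : E → E) (dm : Set E)
    (hdmcv : Convex ℝ dm)
    (hcvdom : ConvexOn ℝ dm fr)
    (hstrict : StrictConvexOn ℝ (interior dm) fr)
    (hdiff : ∀ y ∈ interior dm, HasGradientAt fr (g y) y)
    (hsub : ∀ b : ℝ, IsClosed {x | x ∈ dm ∧ fr x ≤ b})
    (hsteep : ∀ x ∈ frontier dm, ∀ s : ℕ → E, (∀ n, s n ∈ interior dm) →
      Tendsto s atTop (𝓝 x) → Tendsto (fun n => ‖g (s n)‖) atTop atTop)
    (C : Set E) (hCne : C.Nonempty) (hCU : C ⊆ interior dm) (hCcomp : IsCompact C)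
    (hKlee : ∀ x ∈ interior dm, ∃ cm, cm ∈ C ∧
      (∀ c' ∈ C, fr x - fr c' - ⟪g c', x - c'⟫ ≤ fr x - fr cm - ⟪g cm, x - cm⟫) ∧
      ∀ c'' ∈ C, (∀ c' ∈ C, fr x - fr c' - ⟪g c', x - c'⟫ ≤ fr x - fr c'' - ⟪g c'', x - c''⟫)
        → c'' = cm) :
    ∃ c, C = {c} := by
  classical
  obtain ⟨c₀, hc₀C⟩ := hCne
  have hc₀U : c₀ ∈ interior dm := hCU hc₀C
  have hc₀dm : c₀ ∈ dm := interior_subset hc₀U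
  -- Bregman distance (real-valued)
  set dd : E → E → ℝ := fun x y => fr x - fr y - ⟪g y, x - y⟫ with hdd
  have hKlee2 : ∀ x ∈ interior dm, ∃ cm, cm ∈ C ∧
      (∀ c' ∈ C, dd x c' ≤ dd x cm) ∧
      ∀ c'' ∈ C, (∀ c' ∈ C, dd x c' ≤ dd x c'') → c'' = cm := hKlee
  -- trivial case: C = {c₀}
  by_cases honep : ∀ c ∈ C, c = c₀
  · exact ⟨c₀, Set.eq_singleton_iff_unique_mem.2 ⟨hc₀C, honep⟩⟩
  push_neg at honep
  obtain ⟨c₁, hc₁C, hc₁ne⟩ := honep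
  haveI : Nontrivial E := ⟨⟨c₁, c₀, hc₁ne⟩⟩
  -- basic continuity/positivity facts
  have hfrCA : ∀ y ∈ interior dm, ContinuousAt fr y := fun y hy =>
    (hdiff y hy).hasFDerivAt.differentiableAt.continuousAt
  have hfrcont : ContinuousOn fr (interior dm) := fun z hz => (hfrCA z hz).continuousWithinAt
  have hd_nonneg : ∀ x ∈ interior dm, ∀ y ∈ interior dm, 0 ≤ dd x y := by
    intro x hx y hy
    have := gradient_ineq hstrict.convexOn hx hy (hdiff y hy)
    simp only [hdd]; linarith
  have hd_pos : ∀ x ∈ interior dm, ∀ y ∈ interior dm, x ≠ y → 0 < dd x y := by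
    intro x hx y hy hne
    have := gradient_ineq_strict hstrict hx hy hne (hdiff y hy)
    simp only [hdd]; linarith
  -- gradient bound on C and bounds for C
  obtain ⟨A, hA0, hA⟩ := gradient_bound_on_compact isOpen_interior hstrict.convexOn hdiff hCcomp hCU
  obtain ⟨MF, hMF⟩ := hCcomp.exists_bound_of_continuousOn (hfrcont.mono hCU)
  obtain ⟨RC, hRC⟩ := hCcomp.exists_bound_of_continuousOn continuousOn_id
  -- the affine minorants and their supremum
  set aaf : E → E → ℝ := fun c x => -(fr c) - ⟪g c, x - c⟫ with haaf
  clear_value aaf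
  have hrel : ∀ x c, dd x c = fr x + aaf c x := by
    intro x c; simp only [hdd, haaf]; ring
  set gfun : E → ℝ := fun x => sSup ((fun c => aaf c x) '' C) with hgfun
  have himgne : ∀ x : E, ((fun c => aaf c x) '' C).Nonempty :=
    fun x => ⟨_, Set.mem_image_of_mem _ hc₀C⟩
  have habound : ∀ x : E, ∀ c ∈ C, aaf c x ≤ MF + A * (‖x‖ + RC) := by
    intro x c hc
    have h1 : |⟪g c, x - c⟫| ≤ ‖g c‖ * ‖x - c‖ := abs_real_inner_le_norm _ _
    have h2 : ‖x - c‖ ≤ ‖x‖ + ‖c‖ := norm_sub_le _ _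
    have h3 : ‖g c‖ ≤ A := hA c hc
    have h4 : ‖c‖ ≤ RC := by simpa using hRC c hc
    have h5 : ‖fr c‖ ≤ MF := hMF c hc
    rw [Real.norm_eq_abs] at h5
    have h6 := abs_le.1 h5
    have h7 := abs_le.1 h1
    simp only [haaf]
    nlinarith [norm_nonneg (g c), norm_nonneg x, norm_nonneg c, norm_nonneg (x - c)]
  have hbddA : ∀ x : E, BddAbove ((fun c => aaf c x) '' C) := by
    intro x
    refine ⟨MF + A * (‖x‖ + RC), ?_⟩
    rintro _ ⟨c, hc, rfl⟩
    exact habound x c hc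
  have hgle : ∀ x : E, ∀ c ∈ C, aaf c x ≤ gfun x :=
    fun x c hc => le_csSup (hbddA x) (Set.mem_image_of_mem _ hc)
  have hgsup_le : ∀ (x : E) (b : ℝ), (∀ c ∈ C, aaf c x ≤ b) → gfun x ≤ b := by
    intro x b hb
    refine csSup_le (himgne x) ?_
    rintro _ ⟨c, hc, rfl⟩
    exact hb c hc
  clear_value gfun
  have ha_affine : ∀ (c x y : E) (p q : ℝ), p + q = 1 →
      aaf c (p • x + q • y) = p * aaf c x + q * aaf c y := by
    intro c x y p q hpq
    have hvec : p • x + q • y - (p + q) • c = p • (x - c) + q • (y - c) := by module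
    rw [hpq, one_smul] at hvec
    simp only [haaf]
    rw [hvec, inner_add_right, real_inner_smul_right, real_inner_smul_right]
    linear_combination (fr c) * hpq
  have hgcv : ConvexOn ℝ (Set.univ : Set E) gfun := by
    refine ⟨convex_univ, fun x _ y _ p q hp hq hpq => ?_⟩
    simp only [smul_eq_mul]
    apply hgsup_le
    intro c hc
    rw [ha_affine c x y p q hpq]
    have h1 := hgle x c hc
    have h2 := hgle y c hc
    nlinarith
  have hglip : ∀ x y : E, gfun x ≤ gfun y + A * ‖x - y‖ := by
    intro x y
    apply hgsup_le
    intro c hc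
    have h1 : aaf c x = aaf c y + ⟪g c, y - x⟫ := by
      simp only [haaf]
      have h0 : ⟪g c, y - c⟫ - ⟪g c, x - c⟫ = ⟪g c, y - x⟫ := by
        rw [← inner_sub_right, show (y - c) - (x - c) = y - x by abel]
      linarith
    have h2 : ⟪g c, y - x⟫ ≤ ‖g c‖ * ‖y - x‖ := real_inner_le_norm _ _
    have h3 : ‖g c‖ ≤ A := hA c hc
    have h4 := hgle y c hc
    have h5 : ‖y - x‖ = ‖x - y‖ := norm_sub_rev _ _
    nlinarith [mul_le_mul_of_nonneg_right h3 (norm_nonneg (y - x))]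
  have hgcont : Continuous gfun := by
    have hlw : LipschitzWith (Real.toNNReal A) gfun := by
      apply LipschitzWith.of_dist_le_mul
      intro x y
      rw [Real.dist_eq, Real.coe_toNNReal A hA0, dist_eq_norm, abs_sub_le_iff]
      constructor
      · linarith [hglip x y]
      · have h6 := hglip y x
        rw [norm_sub_rev y x] at h6
        linarith
    exact hlw.continuous
  -- the farthest "value" function
  set Gr : E → ℝ := fun x => fr x + gfun x with hGr
  clear_value Gr
  have hGr_cv : ConvexOn ℝ dm Gr := by
    rw [hGr]
    exact hcvdom.add (hgcv.subset (Set.subset_univ _) hdmcv)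
  -- coercivity setup: sphere around c₀ inside U
  obtain ⟨ε₀, hε₀, hballU⟩ := Metric.isOpen_iff.1 isOpen_interior c₀ hc₀U
  set r : ℝ := ε₀ / 2 with hrdef
  have hrpos : 0 < r := by positivity
  have hcball : Metric.closedBall c₀ r ⊆ interior dm := by
    intro z hz
    rw [Metric.mem_closedBall] at hz
    exact hballU (by rw [Metric.mem_ball]; linarith)
  have hsphne : (Metric.sphere c₀ r).Nonempty := NormedSpace.sphere_nonempty.2 hrpos.le
  have hsphU : Metric.sphere c₀ r ⊆ interior dm :=
    fun z hz => hcball (Metric.sphere_subset_closedBall hz)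
  have hddc₀cont : ContinuousOn (fun z => dd z c₀) (Metric.sphere c₀ r) := by
    simp only [hdd]
    refine ContinuousOn.sub (ContinuousOn.sub (hfrcont.mono hsphU) continuousOn_const) ?_
    exact (Continuous.inner continuous_const (continuous_id.sub continuous_const)).continuousOn
  obtain ⟨z₀, hz₀s, hz₀min⟩ := (isCompact_sphere c₀ r).exists_isMinOn hsphne hddc₀cont
  set δ : ℝ := dd z₀ c₀ with hδdef
  have hz₀ne : z₀ ≠ c₀ := by
    intro h
    have := Metric.mem_sphere.1 hz₀s
    rw [h, dist_self] at this
    exact absurd this.symm (ne_of_gt hrpos)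
  have hδpos : 0 < δ := hd_pos _ (hsphU hz₀s) _ hc₀U hz₀ne
  clear_value δ
  -- convexity of dd · c₀ on dm
  have hDcv : ConvexOn ℝ dm (fun x => dd x c₀) := by
    have haffcv : ConvexOn ℝ dm (fun x : E => -(fr c₀) - ⟪g c₀, x - c₀⟫) := by
      refine ⟨hdmcv, fun a ha b hb p q hp hq hpq => le_of_eq ?_⟩
      have hvec : p • a + q • b - (p + q) • c₀ = p • (a - c₀) + q • (b - c₀) := by module
      rw [hpq, one_smul] at hvec
      simp only [smul_eq_mul]
      rw [hvec, inner_add_right, real_inner_smul_right, real_inner_smul_right]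
      linear_combination (fr c₀) * hpq
    have heq : (fun x => dd x c₀) = (fun x : E => fr x + (-(fr c₀) - ⟪g c₀, x - c₀⟫)) := by
      funext x; simp only [hdd]; ring
    rw [heq]
    exact hcvdom.add haffcv
  have hdc₀self : dd c₀ c₀ = 0 := by simp [hdd]
  have hcoerc : ∀ x ∈ dm, r ≤ ‖x - c₀‖ → δ * (‖x - c₀‖ / r) ≤ dd x c₀ := by
    intro x hx hrx
    have hxc : (0:ℝ) < ‖x - c₀‖ := lt_of_lt_of_le hrpos hrx
    set tt : ℝ := r / ‖x - c₀‖ with htt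
    have htt0 : 0 < tt := div_pos hrpos hxc
    have htt1 : tt ≤ 1 := (div_le_one hxc).2 hrx
    have hzcomb : c₀ + tt • (x - c₀) = (1 - tt) • c₀ + tt • x := by module
    have hzs : c₀ + tt • (x - c₀) ∈ Metric.sphere c₀ r := by
      rw [Metric.mem_sphere, dist_eq_norm]
      rw [show c₀ + tt • (x - c₀) - c₀ = tt • (x - c₀) by abel]
      rw [norm_smul, Real.norm_eq_abs, abs_of_pos htt0, htt]
      field_simp
    have hineq := hDcv.2 hc₀dm hx (by linarith : (0:ℝ) ≤ 1 - tt) htt0.le (by ring)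
    rw [← hzcomb] at hineq
    simp only [smul_eq_mul] at hineq
    rw [hdc₀self] at hineq
    have hmin := isMinOn_iff.1 hz₀min _ hzs
    -- δ ≤ tt * dd x c₀
    have h5 : δ ≤ tt * dd x c₀ := by
      calc δ ≤ dd (c₀ + tt • (x - c₀)) c₀ := hδdef ▸ hmin
        _ ≤ (1 - tt) * 0 + tt * dd x c₀ := hineq
        _ = tt * dd x c₀ := by ring
    have h6 : δ * (‖x - c₀‖ / r) ≤ (tt * dd x c₀) * (‖x - c₀‖ / r) :=
      mul_le_mul_of_nonneg_right h5 (by positivity)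
    calc δ * (‖x - c₀‖ / r) ≤ (tt * dd x c₀) * (‖x - c₀‖ / r) := h6
      _ = dd x c₀ := by rw [htt]; field_simp
  have hd0dm : ∀ x ∈ dm, 0 ≤ dd x c₀ := by
    intro x hx
    rcases le_or_gt ‖x - c₀‖ r with h | h
    · exact hd_nonneg x (hcball (by rw [Metric.mem_closedBall, dist_eq_norm]; exact h)) c₀ hc₀U
    · have h1 := hcoerc x hx h.le
      have h2 : 0 ≤ δ * (‖x - c₀‖ / r) := by positivity
      exact le_trans h2 h1
  have hGr_ge_d : ∀ x, dd x c₀ ≤ Gr x := by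
    intro x
    have h1 := hgle x c₀ hc₀C
    have h2 := hrel x c₀
    simp only [hGr]
    linarith
  have hGr0 : ∀ x ∈ dm, 0 ≤ Gr x := fun x hx => le_trans (hd0dm x hx) (hGr_ge_d x)
  -- minimizing sequence
  set m₀ : ℝ := sInf (Gr '' dm) with hm₀def
  have himne2 : (Gr '' dm).Nonempty := ⟨Gr c₀, Set.mem_image_of_mem _ hc₀dm⟩
  have himbd : BddBelow (Gr '' dm) := by
    refine ⟨0, ?_⟩
    rintro _ ⟨x, hx, rfl⟩
    exact hGr0 x hx
  have hm₀0 : 0 ≤ m₀ := le_csInf himne2 (by rintro _ ⟨x, hx, rfl⟩; exact hGr0 x hx)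
  have hminseq : ∀ n : ℕ, ∃ x, x ∈ dm ∧ Gr x < m₀ + 1/((n:ℝ)+1) := by
    intro n
    have hlt : m₀ < m₀ + 1/((n:ℝ)+1) := by
      have : (0:ℝ) < 1/((n:ℝ)+1) := by positivity
      linarith
    obtain ⟨_, ⟨x, hx, rfl⟩, hxlt⟩ := exists_lt_of_csInf_lt himne2 hlt
    exact ⟨x, hx, hxlt⟩
  have hm₀le : ∀ z ∈ dm, m₀ ≤ Gr z := fun z hz => csInf_le himbd (Set.mem_image_of_mem _ hz)
  clear_value m₀
  choose xs hxsdm hxslt using hminseq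
  have hxsGr : ∀ n : ℕ, Gr (xs n) < m₀ + 1 := by
    intro n
    have h1 : 1/((n:ℝ)+1) ≤ 1 := by
      rw [div_le_one (by positivity)]
      linarith [Nat.cast_nonneg (α := ℝ) n]
    have h2 := hxslt n
    linarith
  set R₂ : ℝ := max r ((m₀+1) * r / δ) with hR₂
  have hxsb : ∀ n, xs n ∈ Metric.closedBall c₀ R₂ := by
    intro n
    rw [Metric.mem_closedBall, dist_eq_norm]
    rcases le_or_gt ‖xs n - c₀‖ r with h | h
    · exact le_trans h (le_max_left _ _)
    · have h1 := hcoerc (xs n) (hxsdm n) h.le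
      have h3 : δ * (‖xs n - c₀‖ / r) ≤ m₀ + 1 :=
        le_trans h1 (le_trans (hGr_ge_d _) (hxsGr n).le)
      have h4 : ‖xs n - c₀‖ ≤ (m₀+1) * r / δ := by
        rw [le_div_iff₀ hδpos]
        have h5 : δ * (‖xs n - c₀‖ / r) * r ≤ (m₀ + 1) * r :=
          mul_le_mul_of_nonneg_right h3 hrpos.le
        calc ‖xs n - c₀‖ * δ = δ * (‖xs n - c₀‖ / r) * r := by field_simp
          _ ≤ (m₀ + 1) * r := h5
      exact le_trans h4 (le_max_right _ _)
  obtain ⟨xbar, hxbarb, φ, hφmono, hφtend⟩ := (isCompact_closedBall c₀ R₂).tendsto_subseq hxsb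
  have hgtend : Tendsto (fun k => gfun (xs (φ k))) atTop (𝓝 (gfun xbar)) :=
    (hgcont.tendsto xbar).comp hφtend
  have hinvtend : Tendsto (fun k => 1/((φ k : ℝ)+1)) atTop (𝓝 0) := by
    have h1 : Tendsto (fun n : ℕ => 1/((n:ℝ)+1)) atTop (𝓝 0) :=
      tendsto_one_div_add_atTop_nhds_zero_nat
    exact h1.comp hφmono.tendsto_atTop
  have hkey : ∀ ε > (0:ℝ), xbar ∈ dm ∧ fr xbar ≤ m₀ - gfun xbar + ε := by
    intro ε hε
    have hev : ∀ᶠ k in atTop, xs (φ k) ∈ {x | x ∈ dm ∧ fr x ≤ m₀ - gfun xbar + ε} := by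
      have h2 : ∀ᶠ k in atTop, gfun xbar - ε/2 < gfun (xs (φ k)) :=
        hgtend.eventually (eventually_gt_nhds (by linarith))
      have h3 : ∀ᶠ k in atTop, 1/((φ k : ℝ)+1) < ε/2 :=
        hinvtend.eventually (eventually_lt_nhds (by linarith))
      filter_upwards [h2, h3] with k hk2 hk3
      refine ⟨hxsdm _, ?_⟩
      have h4 := hxslt (φ k)
      have h5 : fr (xs (φ k)) = Gr (xs (φ k)) - gfun (xs (φ k)) := by
        rw [hGr]; ring
      have h6 : Gr (xs (φ k)) < m₀ + ε/2 := by linarith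
      linarith
    exact (hsub (m₀ - gfun xbar + ε)).mem_of_tendsto hφtend hev
  have hxbardm : xbar ∈ dm := (hkey 1 one_pos).1
  have hxbarGr : Gr xbar ≤ m₀ := by
    have h1 : ∀ ε > (0:ℝ), Gr xbar ≤ m₀ + ε := by
      intro ε hε
      have := (hkey ε hε).2
      rw [hGr]
      simp only []
      linarith
    exact le_of_forall_pos_le_add h1
  have hmin : ∀ z ∈ dm, Gr xbar ≤ Gr z := fun z hz => le_trans hxbarGr (hm₀le z hz)
  by_cases hxbarU : xbar ∈ interior dm
  · -- interior case: conclude C is a singleton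
    obtain ⟨cbar, hcbarC, hcbarmax, hcbaruniq⟩ := hKlee2 xbar hxbarU
    have key : ∀ v : E, 0 ≤ ⟪g xbar - g cbar, v⟫ := by
      intro v
      obtain ⟨ε, hε, hball⟩ := Metric.isOpen_iff.1 isOpen_interior xbar hxbarU
      set t : ℕ → ℝ := fun n => ε / (((n:ℝ)+1) * (‖v‖ + 1)) with htdef
      have htpos : ∀ n, 0 < t n := by
        intro n
        rw [htdef]
        have : (0:ℝ) < ((n:ℝ)+1) * (‖v‖ + 1) := by positivity
        positivity
      have htle : ∀ n : ℕ, t n * (‖v‖ + 1) = ε / ((n:ℝ)+1) := by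
        intro n
        rw [htdef]
        field_simp
      have hxU' : ∀ n, xbar + t n • v ∈ interior dm := by
        intro n
        apply hball
        rw [mem_ball_iff_norm]
        rw [show xbar + t n • v - xbar = t n • v by abel]
        rw [norm_smul, Real.norm_eq_abs, abs_of_pos (htpos n)]
        have h1 : t n * ‖v‖ < t n * (‖v‖ + 1) := by
          have := htpos n
          nlinarith
        have h2 : ε / ((n:ℝ)+1) ≤ ε := by
          rw [div_le_iff₀ (by positivity)]
          nlinarith [Nat.cast_nonneg (α := ℝ) n, hε]
        rw [← htle n] at h2
        linarith
      have hqn : ∀ n : ℕ, ∃ cm, cm ∈ C ∧ ∀ c' ∈ C,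
          dd (xbar + t n • v) c' ≤ dd (xbar + t n • v) cm := by
        intro n
        obtain ⟨cm, h1, h2, _⟩ := hKlee2 _ (hxU' n)
        exact ⟨cm, h1, h2⟩
      choose cn hcnC hcnmax using hqn
      have hpair : ∀ n, (cn n, g (cn n)) ∈ C ×ˢ Metric.closedBall (0:E) A := by
        intro n
        refine ⟨hcnC n, ?_⟩
        rw [Metric.mem_closedBall, dist_zero_right]
        exact hA _ (hcnC n)
      obtain ⟨⟨cstar, sstar⟩, hpairmem, ψ, hψmono, hψtend⟩ :=
        (hCcomp.prod (isCompact_closedBall (0:E) A)).tendsto_subseq hpair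
      have hcstarC : cstar ∈ C := hpairmem.1
      have hcstarU : cstar ∈ interior dm := hCU hcstarC
      have hcntend : Tendsto (fun k => cn (ψ k)) atTop (𝓝 cstar) := by
        have := (continuous_fst.tendsto ((cstar, sstar) : E × E)).comp hψtend
        exact this
      have hsttend : Tendsto (fun k => g (cn (ψ k))) atTop (𝓝 sstar) := by
        have := (continuous_snd.tendsto ((cstar, sstar) : E × E)).comp hψtend
        exact this
      have httend : Tendsto t atTop (𝓝 0) := by
        have h1 := tendsto_one_div_add_atTop_nhds_zero_nat.const_mul (ε / (‖v‖ + 1))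
        rw [mul_zero] at h1
        refine h1.congr fun n => ?_
        rw [htdef, div_mul_div_comm, mul_one, mul_comm (‖v‖+1) ((n:ℝ)+1)]
      have htψ : Tendsto (fun k => t (ψ k)) atTop (𝓝 0) := httend.comp hψmono.tendsto_atTop
      have hxtend : Tendsto (fun k => xbar + t (ψ k) • v) atTop (𝓝 xbar) := by
        have h1 : Tendsto (fun k => t (ψ k) • v) atTop (𝓝 ((0:ℝ) • v)) := htψ.smul_const v
        rw [zero_smul] at h1
        have h2 := h1.const_add xbar
        rw [add_zero] at h2
        exact h2
      -- sstar is a subgradient at cstar, hence sstar = g cstar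
      have hsg : ∀ z ∈ interior dm, fr cstar + ⟪sstar, z - cstar⟫ ≤ fr z := by
        intro z hz
        have hup : ∀ k, fr (cn (ψ k)) + ⟪g (cn (ψ k)), z - cn (ψ k)⟫ ≤ fr z := fun k =>
          gradient_ineq hstrict.convexOn hz (hCU (hcnC _)) (hdiff _ (hCU (hcnC _)))
        have hfrc : Tendsto (fun k => fr (cn (ψ k))) atTop (𝓝 (fr cstar)) :=
          (hfrCA cstar hcstarU).tendsto.comp hcntend
        have hinner : Tendsto (fun k => ⟪g (cn (ψ k)), z - cn (ψ k)⟫) atTop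
            (𝓝 ⟪sstar, z - cstar⟫) :=
          hsttend.inner (tendsto_const_nhds.sub hcntend)
        exact le_of_tendsto (hfrc.add hinner) (Eventually.of_forall hup)
      have hstareq : sstar = g cstar :=
        subgradient_unique isOpen_interior hcstarU (hdiff _ hcstarU) hsg
      -- cstar is a farthest point at xbar, hence cstar = cbar
      have hddlim1 : ∀ c' : E, Tendsto (fun k => dd (xbar + t (ψ k) • v) c') atTop
          (𝓝 (dd xbar c')) := by
        intro c'
        simp only [hdd]
        exact (((hfrCA xbar hxbarU).tendsto.comp hxtend).sub tendsto_const_nhds).sub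
          (tendsto_const_nhds.inner (hxtend.sub tendsto_const_nhds))
      have hddlim2 : Tendsto (fun k => dd (xbar + t (ψ k) • v) (cn (ψ k))) atTop
          (𝓝 (dd xbar cstar)) := by
        have h1 : Tendsto (fun k => fr (xbar + t (ψ k) • v) - fr (cn (ψ k)) -
            ⟪g (cn (ψ k)), (xbar + t (ψ k) • v) - cn (ψ k)⟫) atTop
            (𝓝 (fr xbar - fr cstar - ⟪sstar, xbar - cstar⟫)) := by
          refine Tendsto.sub (Tendsto.sub ?_ ?_) ?_
          · exact (hfrCA xbar hxbarU).tendsto.comp hxtend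
          · exact (hfrCA cstar hcstarU).tendsto.comp hcntend
          · exact hsttend.inner (hxtend.sub hcntend)
        rw [hstareq] at h1
        simp only [hdd]
        exact h1
      have hcstarmax : ∀ c' ∈ C, dd xbar c' ≤ dd xbar cstar := by
        intro c' hc'
        exact le_of_tendsto_of_tendsto' (hddlim1 c') hddlim2
          (fun k => hcnmax (ψ k) c' hc')
      have hceq : cstar = cbar := hcbaruniq cstar hcstarC hcstarmax
      -- first-order optimality inequality
      have hfo : ∀ k, 0 ≤ (fr (xbar + t (ψ k) • v) - fr xbar) / t (ψ k) -
          ⟪g (cn (ψ k)), v⟫ := by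
        intro k
        have h1 : Gr xbar ≤ Gr (xbar + t (ψ k) • v) :=
          hmin _ (interior_subset (hxU' (ψ k)))
        have h2 : gfun (xbar + t (ψ k) • v) = aaf (cn (ψ k)) (xbar + t (ψ k) • v) := by
          refine le_antisymm (hgsup_le _ _ (fun c hc => ?_)) (hgle _ _ (hcnC _))
          have h3 := hcnmax (ψ k) c hc
          have h4 := hrel (xbar + t (ψ k) • v) c
          have h5 := hrel (xbar + t (ψ k) • v) (cn (ψ k))
          linarith
        have h3 : aaf (cn (ψ k)) xbar ≤ gfun xbar := hgle _ _ (hcnC _)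
        have h4 : aaf (cn (ψ k)) (xbar + t (ψ k) • v) =
            aaf (cn (ψ k)) xbar - t (ψ k) * ⟪g (cn (ψ k)), v⟫ := by
          simp only [haaf]
          rw [show xbar + t (ψ k) • v - cn (ψ k) = (xbar - cn (ψ k)) + t (ψ k) • v by abel]
          rw [inner_add_right, real_inner_smul_right]
          ring
        have h5 : Gr xbar = fr xbar + gfun xbar := by rw [hGr]
        have h6 : Gr (xbar + t (ψ k) • v) = fr (xbar + t (ψ k) • v) +
            gfun (xbar + t (ψ k) • v) := by rw [hGr]
        have h7 : t (ψ k) * ⟪g (cn (ψ k)), v⟫ ≤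
            fr (xbar + t (ψ k) • v) - fr xbar := by linarith
        rw [sub_nonneg, le_div_iff₀ (htpos (ψ k))]
        linarith [h7]
      -- pass to the limit in hfo
      have hslopetend : Tendsto (fun k => (fr (xbar + t (ψ k) • v) - fr xbar) / t (ψ k))
          atTop (𝓝 ⟪g xbar, v⟫) := by
        have hgrad0 : HasGradientAt fr (g xbar) (xbar + (0:ℝ) • v) := by
          simpa using hdiff xbar hxbarU
        have hder : HasDerivAt (fun s : ℝ => fr (xbar + s • v)) ⟪g xbar, v⟫ 0 :=
          line_hasDerivAt hgrad0
        have hslope := hasDerivAt_iff_tendsto_slope.1 hder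
        have hslope' : Tendsto (slope (fun s : ℝ => fr (xbar + s • v)) 0) (𝓝[>] 0)
            (𝓝 ⟪g xbar, v⟫) :=
          hslope.mono_left (nhdsWithin_mono _ (fun s hs => ne_of_gt hs))
        have h0 : Tendsto (fun k => t (ψ k)) atTop (𝓝[>] (0:ℝ)) :=
          tendsto_nhdsWithin_iff.2 ⟨htψ, Eventually.of_forall (fun k => htpos (ψ k))⟩
        have := hslope'.comp h0
        refine this.congr fun k => ?_
        simp only [Function.comp_apply]
        rw [slope_def_field]
        simp
      have hinnertend : Tendsto (fun k => ⟪g (cn (ψ k)), v⟫) atTop (𝓝 ⟪g cbar, v⟫) := by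
        have h1 : Tendsto (fun k => ⟪g (cn (ψ k)), v⟫) atTop (𝓝 ⟪sstar, v⟫) :=
          hsttend.inner tendsto_const_nhds
        rw [hstareq, hceq] at h1
        exact h1
      have hfinal : (0:ℝ) ≤ ⟪g xbar, v⟫ - ⟪g cbar, v⟫ :=
        le_of_tendsto_of_tendsto' tendsto_const_nhds (hslopetend.sub hinnertend) hfo
      rw [inner_sub_left]
      linarith
    have hgeq : g xbar = g cbar := by
      have h1 := key (g cbar - g xbar)
      rw [show g cbar - g xbar = -(g xbar - g cbar) by abel, inner_neg_right] at h1
      have h2 : ⟪g xbar - g cbar, g xbar - g cbar⟫ ≤ 0 := by linarith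
      exact sub_eq_zero.1 (real_inner_self_nonpos.1 h2)
    have hxbareq : xbar = cbar := by
      by_contra hne
      have h1 := gradient_strict_mono hstrict hxbarU (hCU hcbarC) hne
        (hdiff _ hxbarU) (hdiff _ (hCU hcbarC))
      rw [hgeq, sub_self, inner_zero_left] at h1
      exact lt_irrefl 0 h1
    refine ⟨xbar, Set.eq_singleton_iff_unique_mem.2 ⟨(by rw [hxbareq]; exact hcbarC), ?_⟩⟩
    intro c hc
    by_contra hne
    have h1 := hcbarmax c hc
    rw [← hxbareq] at h1
    have h2 : dd xbar xbar = 0 := by simp [hdd]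
    have h3 : 0 < dd xbar c := hd_pos xbar hxbarU c (hCU hc) (Ne.symm hne)
    linarith
  · -- boundary case: contradiction with steepness
    exfalso
    have hfront : xbar ∈ frontier dm := by
      exact ⟨subset_closure hxbardm, hxbarU⟩
    set y : ℝ → E := fun s => xbar + s • (c₀ - xbar) with hy
    have hy0 : y 0 = xbar := by rw [hy]; simp
    have hyU : ∀ s : ℝ, 0 < s → s ≤ 1 → y s ∈ interior dm := by
      intro s h1 h2
      have h3 : y s = s • c₀ + (1 - s) • xbar := by rw [hy]; module
      rw [h3]
      exact hdmcv.combo_interior_closure_mem_interior hc₀U (subset_closure hxbardm)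
        h1 (by linarith) (by ring)
    have hydm : ∀ s : ℝ, 0 ≤ s → s ≤ 1 → y s ∈ dm := by
      intro s h1 h2
      rcases eq_or_lt_of_le h1 with h0 | h0
      · rw [← h0, hy0]; exact hxbardm
      · exact interior_subset (hyU s h0 h2)
    obtain ⟨ε₁, hε₁, hball₁⟩ := Metric.isOpen_iff.1 isOpen_interior c₀ hc₀U
    set ρ : ℝ := ε₁ / 2 with hρdef
    have hρpos : 0 < ρ := by positivity
    have hρball : Metric.closedBall c₀ ρ ⊆ interior dm := by
      intro z hz
      rw [Metric.mem_closedBall] at hz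
      exact hball₁ (by rw [Metric.mem_ball]; linarith)
    obtain ⟨M₀, hM₀⟩ := (isCompact_closedBall c₀ ρ).exists_bound_of_continuousOn
      (hfrcont.mono hρball)
    set L : ℝ := A * ‖c₀ - xbar‖ with hL
    have hLnn : 0 ≤ L := by rw [hL]; positivity
    -- Gr is nondecreasing along the segment
    have hGmono : ∀ s tt : ℝ, 0 ≤ s → s ≤ tt → tt ≤ 1 → 0 < tt → Gr (y s) ≤ Gr (y tt) := by
      intro s tt hs hstt htt1 htt0
      rcases eq_or_lt_of_le hs with h0 | h0
      · rw [← h0, hy0]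
        exact hmin _ (hydm tt (by linarith) htt1)
      · rcases eq_or_lt_of_le hstt with h1 | h1
        · rw [h1]
        · have hlam0 : 0 < s / tt := div_pos h0 htt0
          have hlam1 : s / tt < 1 := (div_lt_one htt0).2 h1
          have hid : (1 - s/tt) • xbar + (s/tt) • (y tt) = xbar + ((s/tt) * tt) • (c₀ - xbar) := by
            rw [hy]; module
          have hcomb : y s = (1 - s/tt) • xbar + (s/tt) • (y tt) := by
            rw [hid, div_mul_cancel₀ s htt0.ne', hy]
          have hGcomb := hGr_cv.2 hxbardm (hydm tt (by linarith) htt1)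
            (by linarith : (0:ℝ) ≤ 1 - s/tt) hlam0.le (by ring)
          rw [← hcomb] at hGcomb
          simp only [smul_eq_mul] at hGcomb
          have hm := hmin (y s) (hydm s h0.le (le_trans hstt htt1))
          nlinarith
    -- fr decreases at most linearly along the segment
    have hflow : ∀ s tt : ℝ, 0 ≤ s → s ≤ tt → tt ≤ 1 → 0 < tt →
        fr (y s) - L * (tt - s) ≤ fr (y tt) := by
      intro s tt hs hstt htt1 htt0
      have h1 := hGmono s tt hs hstt htt1 htt0
      have h2 : gfun (y tt) ≤ gfun (y s) + A * ‖y tt - y s‖ := hglip _ _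
      have h3 : ‖y tt - y s‖ = (tt - s) * ‖c₀ - xbar‖ := by
        rw [hy]
        simp only []
        rw [show (xbar + tt • (c₀ - xbar)) - (xbar + s • (c₀ - xbar)) =
          (tt - s) • (c₀ - xbar) by module]
        rw [norm_smul, Real.norm_eq_abs, abs_of_nonneg (by linarith)]
      have h4 : Gr (y s) = fr (y s) + gfun (y s) := by rw [hGr]
      have h5 : Gr (y tt) = fr (y tt) + gfun (y tt) := by rw [hGr]
      rw [h3] at h2
      rw [hL]
      nlinarith
    -- inner product bound along the segment
    have hpb : ∀ s : ℝ, 0 < s → s < 1 → -L ≤ ⟪g (y s), c₀ - xbar⟫ := by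
      intro s h0 h1
      have hyUs := hyU s h0 h1.le
      have hyUhalf := hyU (s/2) (by linarith) (by linarith)
      have hgi := gradient_ineq hstrict.convexOn hyUhalf hyUs (hdiff _ hyUs)
      have hdv : y (s/2) - y s = (s/2 - s) • (c₀ - xbar) := by
        rw [hy]; module
      rw [hdv, real_inner_smul_right] at hgi
      have hfl := hflow (s/2) s (by linarith) (by linarith) h1.le h0
      nlinarith
    have hfrlow : ∀ s : ℝ, 0 < s → s ≤ 1 → fr xbar - L ≤ fr (y s) := by
      intro s h0 h1
      have := hflow 0 s le_rfl h0.le h1 h0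
      rw [hy0] at this
      nlinarith
    -- uniform bound on the gradient norm along the segment
    have hnormb : ∀ s : ℝ, 0 < s → s < 1 →
        ‖g (y s)‖ ≤ (M₀ - (fr xbar - L) + L) / ρ := by
      intro s h0 h1
      have hyUs := hyU s h0 h1.le
      have hw : ∀ w : E, ‖w‖ ≤ ρ → ⟪g (y s), w⟫ ≤ M₀ - (fr xbar - L) + L := by
        intro w hwn
        have hzU : c₀ + w ∈ interior dm := hρball (by
          rw [Metric.mem_closedBall, dist_eq_norm]
          rw [show c₀ + w - c₀ = w by abel]
          exact hwn)
        have hgi := gradient_ineq hstrict.convexOn hzU hyUs (hdiff _ hyUs)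
        have hfub : fr (c₀ + w) ≤ M₀ := by
          have := hM₀ (c₀ + w) (by
            rw [Metric.mem_closedBall, dist_eq_norm]
            rw [show c₀ + w - c₀ = w by abel]
            exact hwn)
          rw [Real.norm_eq_abs] at this
          linarith [(abs_le.1 this).2]
        have hsplit : c₀ + w - y s = (1 - s) • (c₀ - xbar) + w := by
          rw [hy]; module
        rw [hsplit, inner_add_right, real_inner_smul_right] at hgi
        have hp := hpb s h0 h1
        have hfrl := hfrlow s h0 h1.le
        have hcase : -L ≤ (1 - s) * ⟪g (y s), c₀ - xbar⟫ := by
          rcases le_or_gt 0 ⟪g (y s), c₀ - xbar⟫ with hpp | hpp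
          · nlinarith
          · nlinarith
        linarith
      rcases eq_or_ne (g (y s)) 0 with h00 | h00
      · rw [h00, norm_zero]
        have hM₂0 : 0 ≤ M₀ - (fr xbar - L) + L := by
          have := hw 0 (by rw [norm_zero]; exact hρpos.le)
          rw [inner_zero_right] at this
          linarith
        positivity
      · have hn : 0 < ‖g (y s)‖ := norm_pos_iff.2 h00
        have := hw ((ρ / ‖g (y s)‖) • g (y s)) (by
          rw [norm_smul, Real.norm_eq_abs, abs_of_pos (by positivity)]
          rw [div_mul_cancel₀ _ hn.ne'])
        rw [real_inner_smul_right, real_inner_self_eq_norm_sq] at this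
        rw [le_div_iff₀ hρpos]
        calc ‖g (y s)‖ * ρ = ρ / ‖g (y s)‖ * ‖g (y s)‖ ^ 2 := by
              field_simp
          _ ≤ M₀ - (fr xbar - L) + L := this
    -- build the steep sequence and contradict the bound
    set sq : ℕ → E := fun n => y (1 / ((n:ℝ) + 2)) with hsq
    have hsqi : ∀ n : ℕ, (0:ℝ) < 1/((n:ℝ)+2) ∧ (1:ℝ)/((n:ℝ)+2) < 1 := by
      intro n
      constructor
      · positivity
      · rw [div_lt_one (by positivity)]
        linarith [Nat.cast_nonneg (α := ℝ) n]
    have hsqU : ∀ n, sq n ∈ interior dm := fun n =>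
      hyU _ (hsqi n).1 (hsqi n).2.le
    have hsqtend : Tendsto sq atTop (𝓝 xbar) := by
      have h1 : Tendsto (fun n : ℕ => (1:ℝ)/((n:ℝ)+2)) atTop (𝓝 0) := by
        have h2 := (tendsto_one_div_add_atTop_nhds_zero_nat (𝕜 := ℝ)).comp
          (tendsto_add_atTop_nat 1)
        refine h2.congr fun n => ?_
        simp only [Function.comp_apply]
        push_cast
        ring_nf
      have h2 : Tendsto (fun n : ℕ => (1/((n:ℝ)+2)) • (c₀ - xbar)) atTop
          (𝓝 ((0:ℝ) • (c₀ - xbar))) := h1.smul_const _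
      rw [zero_smul] at h2
      have h3 := h2.const_add xbar
      rw [add_zero] at h3
      rw [hsq, hy]
      exact h3
    have hsteeplim := hsteep xbar hfront sq hsqU hsqtend
    have hbd : ∀ n, ‖g (sq n)‖ ≤ (M₀ - (fr xbar - L) + L) / ρ := fun n =>
      hnormb _ (hsqi n).1 (hsqi n).2
    obtain ⟨n, hn⟩ := (hsteeplim.eventually_ge_atTop
      ((M₀ - (fr xbar - L) + L) / ρ + 1)).exists
    have := hbd n
    linarith

/-- **Every D-Klee set is a singleton** (Theorem 3.2): if `C ⊆ U` is nonempty and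
compact and for every `x ∈ U` the farthest-point set `Q_C(x)` is a singleton, then
`C` is a singleton. -/
theorem klee_set_is_singleton {J : ℕ} (B : BregmanSetup J) (hB : B.IsLegendre)
    (C : Set (EuclideanSpace ℝ (Fin J))) (hCne : C.Nonempty) (hCU : C ⊆ B.U) (hCcomp : IsCompact C)
    (hKlee : ∀ x ∈ B.U, ∃! c, c ∈ B.Q C x) :
    ∃ c, C = {c} := by
  classical
  set fr : EuclideanSpace ℝ (Fin J) → ℝ := fun x => (B.f x).toReal with hfr
  have hfin : ∀ x ∈ B.dom, B.f x = ((fr x : ℝ) : EReal) := fun x hx =>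
    (EReal.coe_toReal hx (hB.proper_bot x)).symm
  have hUdom : B.U ⊆ B.dom := interior_subset
  have hD_eq : ∀ x ∈ B.dom, ∀ y ∈ B.U,
      B.D x y = ((fr x - fr y - (inner ℝ (B.grad y) (x - y) : ℝ) : ℝ) : EReal) := by
    intro x hx y hy
    rw [BregmanSetup.D, if_pos hy, hfin x hx, hfin y (hUdom hy)]
    rfl
  have hsub : ∀ b : ℝ, IsClosed {x | x ∈ B.dom ∧ fr x ≤ b} := by
    intro b
    have heq : {x | x ∈ B.dom ∧ fr x ≤ b} = B.f ⁻¹' (Iic (b : EReal)) := by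
      ext x
      simp only [Set.mem_setOf_eq, Set.mem_preimage, Set.mem_Iic]
      constructor
      · rintro ⟨hx, hle⟩
        rw [hfin x hx]
        exact_mod_cast hle
      · intro hle
        have hx : x ∈ B.dom := ne_top_of_le_ne_top (EReal.coe_ne_top b) hle
        refine ⟨hx, ?_⟩
        rw [hfin x hx] at hle
        exact_mod_cast hle
    rw [heq]
    exact hB.lsc.isClosed_preimage (b : EReal)
  have hKlee' : ∀ x ∈ interior B.dom, ∃ cm, cm ∈ C ∧
      (∀ c' ∈ C, fr x - fr c' - (inner ℝ (B.grad c') (x - c') : ℝ) ≤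
        fr x - fr cm - (inner ℝ (B.grad cm) (x - cm) : ℝ)) ∧
      ∀ c'' ∈ C, (∀ c' ∈ C, fr x - fr c' - (inner ℝ (B.grad c') (x - c') : ℝ) ≤
        fr x - fr c'' - (inner ℝ (B.grad c'') (x - c'') : ℝ)) → c'' = cm := by
    intro x hx
    obtain ⟨cm, hcm, huniq⟩ := hKlee x hx
    obtain ⟨hcmC, hxdom, hcmmax⟩ := hcm
    refine ⟨cm, hcmC, ?_, ?_⟩
    · intro c' hc'
      have h1 := hcmmax c' hc'
      rw [hD_eq x hxdom c' (hCU hc'), hD_eq x hxdom cm (hCU hcmC)] at h1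
      exact_mod_cast h1
    · intro c'' hc''C hmax
      refine huniq c'' ⟨hc''C, hxdom, ?_⟩
      intro c' hc'
      rw [hD_eq x hxdom c' (hCU hc'), hD_eq x hxdom c'' (hCU hc''C)]
      exact_mod_cast hmax c' hc'
  exact klee_aux fr B.grad B.dom hB.convex_dom hB.convexOn hB.strict hB.smooth hsub hB.steep
    C hCne hCU hCcomp hKlee'
end
end

section
/- Every nonempty compact subset C of ℝ^J such that every point of ℝ^J has a unique farthest point in C (with respect to the Euclidean distance) is a singleton. -/
open Set Filter Topology Bornology

noncomputable section

/-- **Klee's theorem**: every nonempty compact subset `C` of `ℝ^J` such that every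
point of `ℝ^J` has a unique farthest point in `C` (w.r.t. the Euclidean distance)
is a singleton. -/
theorem euclidean_klee_set_is_singleton {J : ℕ} (C : Set (EuclideanSpace ℝ (Fin J)))
    (hCne : C.Nonempty) (hCcomp : IsCompact C)
    (hKlee : ∀ x : EuclideanSpace ℝ (Fin J), ∃! c, c ∈ C ∧ ∀ c' ∈ C, dist x c' ≤ dist x c) :
    ∃ c, C = {c} := by
  classical
  choose Q hQ using fun x => (hKlee x).exists
  have hQmem : ∀ x, Q x ∈ C := fun x => (hQ x).1
  have hQmax : ∀ x, ∀ c ∈ C, dist x c ≤ dist x (Q x) := fun x => (hQ x).2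
  -- the farthest distance function
  set r : EuclideanSpace ℝ (Fin J) → ℝ := fun x => dist x (Q x) with hrdef
  have hrle : ∀ x y, r x ≤ r y + dist x y := by
    intro x y
    calc r x = dist x (Q x) := rfl
      _ ≤ dist x y + dist y (Q x) := dist_triangle _ _ _
      _ ≤ dist x y + r y := by gcongr; exact hQmax y _ (hQmem x)
      _ = r y + dist x y := by ring
  have hrcont : Continuous r := by
    rw [Metric.continuous_iff]
    intro x ε hε
    refine ⟨ε, hε, fun y hy => ?_⟩
    rw [Real.dist_eq, abs_lt]
    constructor
    · have := hrle x y
      rw [dist_comm] at hy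
      linarith
    · have := hrle y x
      linarith
  -- a big compact convex set containing C
  obtain ⟨c₀, hc₀⟩ := hCne
  obtain ⟨R, hR⟩ := hCcomp.isBounded.subset_closedBall c₀
  set K : Set (EuclideanSpace ℝ (Fin J)) := Metric.closedBall c₀ R with hKdef
  have hKcomp : IsCompact K := isCompact_closedBall c₀ R
  have hKconv : Convex ℝ K := convex_closedBall c₀ R
  have hCK : C ⊆ K := hR
  obtain ⟨xs, hxsK, hxsmin⟩ := hKcomp.exists_isMinOn ⟨c₀, hCK hc₀⟩ hrcont.continuousOn
  set q := Q xs with hqdef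
  -- the approach sequence
  set s : ℕ → ℝ := fun n => 1 / (n + 1) with hsdef
  have hspos : ∀ n, 0 < s n := fun n => by positivity
  have hsle1 : ∀ n, s n ≤ 1 := fun n => by
    rw [hsdef]
    rw [div_le_one (by positivity)]
    linarith [Nat.cast_nonneg (α := ℝ) n]
  have hstend : Tendsto s atTop (nhds 0) := tendsto_one_div_add_atTop_nhds_zero_nat
  set xseq : ℕ → EuclideanSpace ℝ (Fin J) := fun n => xs + s n • (q - xs) with hxseq
  have hxseqK : ∀ n, xseq n ∈ K := fun n =>
    hKconv.add_smul_sub_mem hxsK (hCK (hQmem xs)) ⟨(hspos n).le, hsle1 n⟩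
  have hxtend : Tendsto xseq atTop (nhds xs) := by
    have : Tendsto (fun n => s n • (q - xs)) atTop (nhds ((0:ℝ) • (q - xs))) :=
      hstend.smul_const _
    rw [zero_smul] at this
    simpa using (tendsto_const_nhds.add this)
  set cseq : ℕ → EuclideanSpace ℝ (Fin J) := fun n => Q (xseq n) with hcseq
  obtain ⟨c', hc'C, φ, hφ, hctend⟩ := hCcomp.tendsto_subseq (fun n => hQmem (xseq n))
  have hxφtend : Tendsto (xseq ∘ φ) atTop (nhds xs) := hxtend.comp hφ.tendsto_atTop
  -- c' is a farthest point from xs, hence c' = q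
  have hdist : Tendsto (fun k => dist (xseq (φ k)) (cseq (φ k))) atTop
      (nhds (dist xs c')) := (hxφtend.dist hctend)
  have hc'far : r xs ≤ dist xs c' := by
    refine ge_of_tendsto hdist (Eventually.of_forall fun k => ?_)
    exact hxsmin (hxseqK (φ k))
  have hc'q : c' = q := by
    refine (hKlee xs).unique ⟨hc'C, fun c hc => ?_⟩ (hQ xs)
    exact le_trans (hQmax xs c hc) hc'far
  -- the key inequality
  have hkey : ∀ n, 0 ≤ 2 * (inner ℝ (xs - cseq n) (q - xs) : ℝ) + s n * (r xs)^2 := by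
    intro n
    have hmin : r xs ≤ dist (xseq n) (cseq n) := hxsmin (hxseqK n)
    have h1 : (r xs)^2 ≤ dist (xseq n) (cseq n) ^ 2 := by
      have h0 : 0 ≤ r xs := dist_nonneg
      nlinarith [hmin]
    have h2 : dist (xseq n) (cseq n) ^ 2
        = ‖xs - cseq n‖^2 + 2 * (s n) * (inner ℝ (xs - cseq n) (q - xs) : ℝ)
          + (s n)^2 * ‖q - xs‖^2 := by
      rw [dist_eq_norm]
      have : xseq n - cseq n = (xs - cseq n) + s n • (q - xs) := by
        rw [hxseq]; show xs + s n • (q - xs) - cseq n = _; abel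
      rw [this, norm_add_sq_real, real_inner_smul_right, norm_smul]
      simp only [Real.norm_eq_abs, abs_of_pos (hspos n)]
      ring
    have h3 : ‖xs - cseq n‖ ≤ r xs := by
      rw [← dist_eq_norm]
      exact hQmax xs _ (hQmem (xseq n))
    have h4 : ‖q - xs‖ = r xs := by
      rw [← dist_eq_norm, dist_comm]
    have h5 : 0 ≤ ‖xs - cseq n‖ := norm_nonneg _
    have h6 := hspos n
    have hA : ‖xs - cseq n‖^2 ≤ (r xs)^2 := by nlinarith [h3, h5, dist_nonneg (x := xs) (y := Q xs)]
    have h4' : (s n)^2 * ‖q - xs‖^2 = (s n)^2 * (r xs)^2 := by rw [h4]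
    have hB : 0 ≤ 2 * (s n) * (inner ℝ (xs - cseq n) (q - xs) : ℝ) + (s n)^2 * (r xs)^2 := by
      linarith [h1, h2, hA, h4']
    have hB' : s n * 0 ≤ s n * (2 * (inner ℝ (xs - cseq n) (q - xs) : ℝ) + s n * (r xs)^2) := by
      have heq : s n * (2 * (inner ℝ (xs - cseq n) (q - xs) : ℝ) + s n * (r xs)^2)
          = 2 * (s n) * (inner ℝ (xs - cseq n) (q - xs) : ℝ) + (s n)^2 * (r xs)^2 := by ring
      rw [heq, mul_zero]
      exact hB
    exact le_of_mul_le_mul_left (by simpa using hB') h6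
  -- pass to the limit
  have hlim : Tendsto (fun k => 2 * (inner ℝ (xs - cseq (φ k)) (q - xs) : ℝ)
      + s (φ k) * (r xs)^2) atTop (nhds (2 * (inner ℝ (xs - q) (q - xs) : ℝ) + 0 * (r xs)^2)) := by
    have hs0 : Tendsto (fun k => s (φ k)) atTop (nhds 0) := hstend.comp hφ.tendsto_atTop
    have hinner : Tendsto (fun k => (inner ℝ (xs - cseq (φ k)) (q - xs) : ℝ)) atTop
        (nhds (inner ℝ (xs - q) (q - xs) : ℝ)) := by
      have hc : Tendsto (fun k => xs - cseq (φ k)) atTop (nhds (xs - q)) := by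
        rw [← hc'q]
        exact tendsto_const_nhds.sub hctend
      exact hc.inner tendsto_const_nhds
    exact ((hinner.const_mul 2).add ((hs0.mul_const _)))
  have hfinal : 0 ≤ 2 * (inner ℝ (xs - q) (q - xs) : ℝ) + 0 * (r xs)^2 :=
    ge_of_tendsto hlim (Eventually.of_forall fun k => hkey (φ k))
  have hinnerval : (inner ℝ (xs - q) (q - xs) : ℝ) = -‖q - xs‖^2 := by
    rw [show xs - q = -(q - xs) by abel, inner_neg_left, real_inner_self_eq_norm_sq]
  have hqxs : Q xs = xs := by
    rw [hinnerval] at hfinal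
    have h1 : ‖q - xs‖^2 ≤ 0 := by linarith
    have h0 : ‖q - xs‖ = 0 := by nlinarith [norm_nonneg (q - xs)]
    exact sub_eq_zero.mp (norm_eq_zero.mp h0)
  have hxsC : xs ∈ C := hqxs ▸ hQmem xs
  refine ⟨xs, Set.eq_singleton_iff_unique_mem.mpr ⟨hxsC, fun c hc => ?_⟩⟩
  have h1 : dist xs c ≤ dist xs (Q xs) := hQmax xs c hc
  rw [hqxs, dist_self] at h1
  exact (dist_eq_zero.mp (le_antisymm h1 dist_nonneg)).symm
end
end

section
/- Let f be Legendre on ℝ^J with Bregman distance D, and C ⊆ U = int dom f nonempty compact. Then F_C = sup_{c∈C} D(·,c) is proper, lower semicontinuous, convex, dom F_C = dom f, the domain of the subdifferential ∂F_C equals U, and F_C is strictly convex on U. -/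
open Set Filter Topology Bornology

noncomputable section

/-- The convex subdifferential of an extended-real-valued function. -/
def subdiff {J : ℕ} (g : EuclideanSpace ℝ (Fin J) → EReal) (x : EuclideanSpace ℝ (Fin J)) : Set (EuclideanSpace ℝ (Fin J)) :=
  {p | g x ≠ ⊤ ∧ ∀ z, g x + ((inner ℝ p (z - x) : ℝ) : EReal) ≤ g z}


open scoped RealInnerProductSpace

section AuxLemmas

variable {J : ℕ}


/-- A finite convex continuous function on Euclidean space has a subgradient everywhere. -/
lemma exists_subgradient_of_convex_continuous {g : EuclideanSpace ℝ (Fin J) → ℝ}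
    (hgconv : ConvexOn ℝ univ g) (hgcont : Continuous g) (x : EuclideanSpace ℝ (Fin J)) :
    ∃ q : EuclideanSpace ℝ (Fin J), ∀ z, g x + ⟪q, z - x⟫ ≤ g z := by
  set O : Set (EuclideanSpace ℝ (Fin J) × ℝ) := {p | g p.1 < p.2} with hO
  have hOopen : IsOpen O := isOpen_lt (hgcont.comp continuous_fst) continuous_snd
  have hOconv : Convex ℝ O := by
    rintro p hp q hq a b ha hb hab
    have h1 : g (a • p.1 + b • q.1) ≤ a * g p.1 + b * g q.1 :=
      hgconv.2 (mem_univ p.1) (mem_univ q.1) ha hb hab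
    have hmem : g ((a • p + b • q).1) < (a • p + b • q).2 := by
      simp only [Prod.fst_add, Prod.smul_fst, Prod.snd_add, Prod.smul_snd, smul_eq_mul]
      rcases eq_or_lt_of_le ha with h | h
      · have hb1 : b = 1 := by linarith
        subst hb1; rw [← h]; simpa [hO] using hq
      · refine lt_of_le_of_lt h1 (add_lt_add_of_lt_of_le ?_ ?_)
        · exact (mul_lt_mul_iff_right₀ h).2 hp
        · exact mul_le_mul_of_nonneg_left hq.le hb
    exact hmem
  have hxO : (x, g x) ∉ O := by simp [hO]
  obtain ⟨φ, hφ⟩ := geometric_hahn_banach_open_point hOconv hOopen hxO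
  set β : ℝ := φ (0, 1) with hβdef
  have hsplit : ∀ z : EuclideanSpace ℝ (Fin J), ∀ t : ℝ, φ (z, t) = φ (z, 0) + t * β := by
    intro z t
    have : (z, t) = (z, 0) + t • ((0 : EuclideanSpace ℝ (Fin J)), (1:ℝ)) := by
      simp [Prod.ext_iff]
    rw [this, map_add, map_smul]
    simp [hβdef]
  have hβneg : β < 0 := by
    have := hφ (x, g x + 1) (by simp [hO])
    rw [hsplit x (g x + 1), hsplit x (g x)] at this
    linarith
  have hle : ∀ z, φ (z, 0) + g z * β ≤ φ (x, 0) + g x * β := by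
    intro z
    have key : ∀ ε : ℝ, 0 < ε → φ (z, 0) + (g z + ε) * β < φ (x, 0) + g x * β := by
      intro ε hε
      have := hφ (z, g z + ε) (by simp [hO, hε])
      rw [hsplit z (g z + ε), hsplit x (g x)] at this
      exact this
    by_contra h'
    push_neg at h'
    set c1 := φ (z, 0) + g z * β
    set c2 := φ (x, 0) + g x * β
    have hεpos : 0 < (c1 - c2) / (-β) := div_pos (by linarith) (by linarith)
    have := key ((c1 - c2) / (-β)) hεpos
    have hne : β ≠ 0 := hβneg.ne
    have : c1 + (c1 - c2) / (-β) * β < c2 := by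
      rw [show φ (z,0) + (g z + (c1 - c2) / (-β)) * β = c1 + (c1 - c2) / (-β) * β by
        simp only [c1]; ring] at this
      exact this
    have heq : (c1 - c2) / -β * β = -(c1 - c2) := by
      rw [div_mul_eq_mul_div, div_neg, mul_div_assoc, div_self hne, mul_one]
    rw [heq] at this
    linarith
  -- Riesz representation of z ↦ φ (z, 0)
  set ψ : EuclideanSpace ℝ (Fin J) →L[ℝ] ℝ := φ.comp (ContinuousLinearMap.inl ℝ _ ℝ) with hψ
  set v : EuclideanSpace ℝ (Fin J) := (InnerProductSpace.toDual ℝ _).symm ψ with hv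
  have hvz : ∀ z, ⟪v, z⟫ = φ (z, 0) := by
    intro z
    rw [hv, InnerProductSpace.toDual_symm_apply]
    simp [hψ]
  refine ⟨(-β)⁻¹ • v, fun z => ?_⟩
  have h1 := hle z
  rw [← hvz z, ← hvz x] at h1
  have hβpos : 0 < -β := by linarith
  have hinner : ⟪(-β)⁻¹ • v, z - x⟫ = (-β)⁻¹ * (⟪v, z⟫ - ⟪v, x⟫) := by
    rw [real_inner_smul_left, inner_sub_right]
  rw [hinner, ← sub_nonneg]
  have key : (-β)⁻¹ * (⟪v, z⟫ - ⟪v, x⟫) ≤ g z - g x := by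
    rw [inv_mul_le_iff₀ hβpos]
    nlinarith
  linarith

/-- The gradient of a convex function is a subgradient. -/
lemma grad_subgrad {s : Set (EuclideanSpace ℝ (Fin J))} {fr : EuclideanSpace ℝ (Fin J) → ℝ}
    (hconv : ConvexOn ℝ s fr) {y z p : EuclideanSpace ℝ (Fin J)}
    (hy : y ∈ s) (hz : z ∈ s) (hp : HasGradientAt fr p y) :
    fr y + ⟪p, z - y⟫ ≤ fr z := by
  set c : ℝ → EuclideanSpace ℝ (Fin J) := fun t => y + t • (z - y) with hcdef
  have hc : ∀ t ∈ Icc (0:ℝ) 1, c t ∈ s := by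
    intro t ht
    have h := hconv.1 hy hz (by linarith [ht.2] : (0:ℝ) ≤ 1 - t) ht.1 (by ring)
    have : c t = (1 - t) • y + t • z := by simp only [hcdef]; module
    rw [this]; exact h
  set φ : ℝ → ℝ := fun t => fr (c t) with hφdef
  have hφconv : ConvexOn ℝ (Icc (0:ℝ) 1) φ := by
    refine ⟨convex_Icc 0 1, fun t1 ht1 t2 ht2 a b ha hb hab => ?_⟩
    have ha' : a = 1 - b := by linarith
    subst ha'
    have hkey : c ((1 - b) * t1 + b * t2) = (1 - b) • c t1 + b • c t2 := by
      simp only [hcdef]; module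
    show fr (c ((1 - b) • t1 + b • t2)) ≤ (1 - b) • fr (c t1) + b • fr (c t2)
    simp only [smul_eq_mul, hkey]
    exact hconv.2 (hc t1 ht1) (hc t2 ht2) (by linarith) hb (by ring)
  have hc0 : HasDerivAt c (z - y) 0 := by
    have h1 : HasDerivAt (fun t : ℝ => t • (z - y)) ((1:ℝ) • (z - y)) 0 :=
      (hasDerivAt_id (0:ℝ)).smul_const (z - y)
    simpa [hcdef] using h1.const_add y
  have hcy : c 0 = y := by simp [hcdef]
  have hder : HasDerivAt φ ⟪p, z - y⟫ 0 := by
    have hfd : HasFDerivAt fr (InnerProductSpace.toDual ℝ _ p) (c 0) := by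
      rw [hcy]; exact hp.hasFDerivAt
    have := hfd.comp_hasDerivAt 0 hc0
    simp only [InnerProductSpace.toDual_apply_apply] at this
    exact this
  have hslope := hφconv.le_slope_of_hasDerivAt (left_mem_Icc.mpr zero_le_one)
    (right_mem_Icc.mpr zero_le_one) zero_lt_one hder
  have hslope1 : slope φ 0 1 = φ 1 - φ 0 := by
    simp [slope_def_field]
  have hφ1 : φ 1 = fr z := by simp [hφdef, hcdef]
  have hφ0 : φ 0 = fr y := by simp [hφdef, hcdef]
  rw [hslope1, hφ1, hφ0] at hslope
  linarith

end AuxLemmas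

set_option maxHeartbeats 1000000 in
/-- (Proposition 4.1) For `C ⊆ U` nonempty compact, `F_C` is proper, lower
semicontinuous and convex, `dom F_C = dom f`, `dom ∂F_C = U`, and `F_C` is
strictly convex on `U`. -/
theorem farthest_distance_properties {J : ℕ} (B : BregmanSetup J) (hB : B.IsLegendre)
    (C : Set (EuclideanSpace ℝ (Fin J))) (hCne : C.Nonempty) (hCU : C ⊆ B.U) (hCcomp : IsCompact C) :
    (∃ x, B.F C x ≠ ⊤) ∧ (∀ x, B.F C x ≠ ⊥) ∧
    LowerSemicontinuous (B.F C) ∧ ERealConvex (B.F C) ∧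
    {x : EuclideanSpace ℝ (Fin J) | B.F C x ≠ ⊤} = B.dom ∧
    {x : EuclideanSpace ℝ (Fin J) | (subdiff (B.F C) x).Nonempty} = B.U ∧
    StrictConvexOn ℝ B.U (fun x => (B.F C x).toReal) := by
  classical
  obtain ⟨c₀, hc₀⟩ := hCne
  set fr : EuclideanSpace ℝ (Fin J) → ℝ := fun x => (B.f x).toReal with hfr
  have hUopen : IsOpen B.U := isOpen_interior
  have hUdom : B.U ⊆ B.dom := interior_subset
  have hfin : ∀ x ∈ B.dom, B.f x = ((fr x : ℝ) : EReal) := fun x hx =>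
    (EReal.coe_toReal hx (hB.proper_bot x)).symm
  have hfrcont : ∀ y ∈ B.U, ContinuousAt fr y := fun y hy =>
    (hB.smooth y hy).hasFDerivAt.differentiableAt.continuousAt
  obtain ⟨r, hrpos, hrsub⟩ := hCcomp.exists_cthickening_subset_open hUopen hCU
  set K := Metric.cthickening r C with hKdef
  have hKcomp : IsCompact K := hCcomp.cthickening
  have hKU : K ⊆ B.U := hrsub
  have hCK : C ⊆ K := Metric.self_subset_cthickening _
  obtain ⟨Mf, hMf⟩ := hKcomp.exists_bound_of_continuousOn
    (fun y hy => (hfrcont y (hKU hy)).continuousWithinAt)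
  have hMf0 : 0 ≤ Mf := le_trans (norm_nonneg _) (hMf c₀ (hCK hc₀))
  set M : ℝ := 2 * Mf / r with hM
  have hM0 : 0 ≤ M := by positivity
  -- gradient bound on C
  have hgradle : ∀ c ∈ C, ‖B.grad c‖ ≤ M := by
    intro c hc
    rcases eq_or_ne (B.grad c) 0 with h0 | h0
    · rw [h0, norm_zero]; exact hM0
    · have hnp : 0 < ‖B.grad c‖ := norm_pos_iff.2 h0
      set u := (r / ‖B.grad c‖) • B.grad c with hu
      have hnu : ‖u‖ = r := by
        rw [hu, norm_smul, Real.norm_eq_abs, abs_of_pos (div_pos hrpos hnp),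
          div_mul_cancel₀ _ hnp.ne']
      have hzK : c + u ∈ K := by
        apply Metric.closedBall_subset_cthickening hc r
        simp [Metric.mem_closedBall, dist_eq_norm, add_sub_cancel_left, hnu]
      have hsg := grad_subgrad hB.convexOn (hUdom (hCU hc)) (hUdom (hKU hzK))
        (hB.smooth c (hCU hc))
      rw [add_sub_cancel_left] at hsg
      have hin : ⟪B.grad c, u⟫ = r * ‖B.grad c‖ := by
        rw [hu, real_inner_smul_right, real_inner_self_eq_norm_sq]
        field_simp
      rw [hin] at hsg
      have h1 : fr (c + u) ≤ Mf := le_trans (le_abs_self _) (hMf _ hzK)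
      have h2 : -Mf ≤ fr c := neg_le_of_abs_le (hMf _ (hCK hc))
      rw [hM, le_div_iff₀ hrpos]
      nlinarith
  obtain ⟨R, hR⟩ := hCcomp.isBounded.exists_norm_le
  -- the affine minorants and their sup
  set a : EuclideanSpace ℝ (Fin J) → EuclideanSpace ℝ (Fin J) → ℝ :=
    fun c x => -(fr c) - ⟪B.grad c, x - c⟫ with ha
  have hSne : ∀ x, ((fun c => a c x) '' C).Nonempty := fun x => ⟨_, mem_image_of_mem _ hc₀⟩
  have hbdd : ∀ x, BddAbove ((fun c => a c x) '' C) := by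
    intro x
    refine ⟨Mf + M * (‖x‖ + R), ?_⟩
    rintro _ ⟨c, hc, rfl⟩
    have h1 : -Mf ≤ fr c := neg_le_of_abs_le (hMf _ (hCK hc))
    have h2 : |⟪B.grad c, x - c⟫| ≤ M * (‖x‖ + R) := by
      refine le_trans (abs_real_inner_le_norm _ _) ?_
      have := norm_sub_le x c
      have := hR c hc
      have := hgradle c hc
      have hnn : (0:ℝ) ≤ ‖x - c‖ := norm_nonneg _
      nlinarith [norm_nonneg (B.grad c), norm_nonneg x]
    have := neg_le_of_abs_le h2
    simp only [ha]
    linarith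
  set g : EuclideanSpace ℝ (Fin J) → ℝ := fun x => sSup ((fun c => a c x) '' C) with hg
  have h_ag : ∀ c ∈ C, ∀ x, a c x ≤ g x := fun c hc x => le_csSup (hbdd x) (mem_image_of_mem _ hc)
  have h_gle : ∀ (x : EuclideanSpace ℝ (Fin J)) (b : ℝ), (∀ c ∈ C, a c x ≤ b) → g x ≤ b :=
    fun x b h => csSup_le (hSne x) (by rintro _ ⟨c, hc, rfl⟩; exact h c hc)
  have hgLip : ∀ x y, g x ≤ g y + M * ‖x - y‖ := by
    intro x y
    refine h_gle x _ fun c hc => ?_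
    have hae : a c x = a c y - ⟪B.grad c, x - y⟫ := by
      simp only [ha, inner_sub_right]
      ring
    have h2 : |⟪B.grad c, x - y⟫| ≤ M * ‖x - y‖ :=
      le_trans (abs_real_inner_le_norm _ _)
        (mul_le_mul_of_nonneg_right (hgradle c hc) (norm_nonneg _))
    have := h_ag c hc y
    have := neg_le_of_abs_le h2
    linarith
  have hgdist : ∀ x y, |g x - g y| ≤ M * ‖x - y‖ := by
    intro x y
    rw [abs_sub_le_iff]
    constructor
    · linarith [hgLip x y]
    · have h2 := hgLip y x
      rw [norm_sub_rev y x] at h2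
      linarith
  have hgcont : Continuous g := by
    have : LipschitzWith (Real.toNNReal M) g := by
      apply LipschitzWith.of_dist_le_mul
      intro x y
      rw [Real.dist_eq, dist_eq_norm, Real.coe_toNNReal _ hM0]
      exact hgdist x y
    exact this.continuous
  have hgconv : ConvexOn ℝ univ g := by
    refine ⟨convex_univ, fun x _ y _ p q hp hq hpq => ?_⟩
    refine h_gle _ _ fun c hc => ?_
    have hq1 : q = 1 - p := by linarith
    subst hq1
    have hae : a c (p • x + (1 - p) • y) = p * a c x + (1 - p) * a c y := by
      simp only [ha, inner_sub_right, inner_add_right, real_inner_smul_right]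
      ring
    rw [hae]
    have h1 := mul_le_mul_of_nonneg_left (h_ag c hc x) hp
    have h2 := mul_le_mul_of_nonneg_left (h_ag c hc y) hq
    simp only [smul_eq_mul]
    linarith
  -- structure of D and F
  have hD : ∀ (x : EuclideanSpace ℝ (Fin J)), ∀ c ∈ C, B.D x c = B.f x + ((a c x : ℝ) : EReal) := by
    intro x c hc
    simp only [BregmanSetup.D, if_pos (hCU hc)]
    rw [hfin c (hUdom (hCU hc))]
    rw [sub_eq_add_neg, sub_eq_add_neg, ← EReal.coe_neg, ← EReal.coe_neg, add_assoc,
      ← EReal.coe_add]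
    congr 1
  have hDle : ∀ (x : EuclideanSpace ℝ (Fin J)), ∀ c ∈ C, B.D x c ≤ B.F C x :=
    fun x c hc => le_iSup₂ (f := fun c _ => B.D x c) c hc
  have hF : ∀ x, B.F C x = B.f x + ((g x : ℝ) : EReal) := by
    intro x
    apply le_antisymm
    · refine iSup₂_le fun c hc => ?_
      rw [hD x c hc]
      exact add_le_add_right (EReal.coe_le_coe_iff.2 (h_ag c hc x)) _
    · by_cases hx : x ∈ B.dom
      · rw [hfin x hx, ← EReal.coe_add]
        have hTc0 : ((fr x + a c₀ x : ℝ) : EReal) ≤ B.F C x := by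
          rw [EReal.coe_add, ← hfin x hx, ← hD x c₀ hc₀]
          exact hDle x c₀ hc₀
        rcases eq_or_ne (B.F C x) ⊤ with h | h
        · rw [h]; exact le_top
        · have hTb : B.F C x ≠ ⊥ := fun hbot => by
            rw [hbot, le_bot_iff] at hTc0
            exact EReal.coe_ne_bot _ hTc0
          rw [← EReal.coe_toReal h hTb, EReal.coe_le_coe_iff]
          have hub : ∀ c ∈ C, fr x + a c x ≤ (B.F C x).toReal := by
            intro c hc
            have hh := hDle x c hc
            rw [hD x c hc, hfin x hx, ← EReal.coe_add, ← EReal.coe_toReal h hTb,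
              EReal.coe_le_coe_iff] at hh
            exact hh
          have := h_gle x ((B.F C x).toReal - fr x) (fun c hc => by linarith [hub c hc])
          linarith
      · have hfx : B.f x = ⊤ := not_not.1 hx
        have hDtop : B.D x c₀ = ⊤ := by rw [hD x c₀ hc₀, hfx, EReal.top_add_coe]
        have : B.F C x = ⊤ := top_le_iff.1 (hDtop ▸ hDle x c₀ hc₀)
        rw [this]; exact le_top
  have hFdom : ∀ x ∈ B.dom, B.F C x = ((fr x + g x : ℝ) : EReal) := fun x hx => by
    rw [hF x, hfin x hx, ← EReal.coe_add]
  have hFtop : ∀ (x : EuclideanSpace ℝ (Fin J)), x ∉ B.dom → B.F C x = ⊤ := fun x hx => by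
    rw [hF x, not_not.1 hx, EReal.top_add_coe]
  have hgsub := exists_subgradient_of_convex_continuous hgconv hgcont
  have hgsub_norm : ∀ (x q : EuclideanSpace ℝ (Fin J)),
      (∀ z, g x + ⟪q, z - x⟫ ≤ g z) → ‖q‖ ≤ M := by
    intro x q hq
    have h1 := hq (x + q)
    rw [add_sub_cancel_left, real_inner_self_eq_norm_sq] at h1
    have h2 := hgLip (x + q) x
    rw [add_sub_cancel_left] at h2
    nlinarith [norm_nonneg q]
  have hFsub : ∀ y ∈ B.U, ∀ q : EuclideanSpace ℝ (Fin J), (∀ z, g y + ⟪q, z - y⟫ ≤ g z) →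
      ∀ z, B.F C y + ((⟪B.grad y + q, z - y⟫ : ℝ) : EReal) ≤ B.F C z := by
    intro y hy q hq z
    by_cases hz : z ∈ B.dom
    · rw [hFdom y (hUdom hy), hFdom z hz, ← EReal.coe_add, EReal.coe_le_coe_iff]
      have h1 : fr y + ⟪B.grad y, z - y⟫ ≤ fr z :=
        grad_subgrad hB.convexOn (hUdom hy) hz (hB.smooth y hy)
      have h2 := hq z
      rw [inner_add_left]
      linarith
    · rw [hFtop z hz]; exact le_top
  have hFnb : ∀ x, B.F C x ≠ ⊥ := by
    intro x h
    rw [hF x] at h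
    rcases EReal.add_eq_bot_iff.1 h with h' | h'
    · exact hB.proper_bot x h'
    · exact EReal.coe_ne_bot _ h'
  refine ⟨⟨c₀, ?_⟩, hFnb, ?_, ?_, ?_, ?_, ?_⟩
  · rw [hFdom c₀ (hUdom (hCU hc₀))]; exact EReal.coe_ne_top _
  -- lower semicontinuity
  · have h2 : LowerSemicontinuous (fun x => ((g x : ℝ) : EReal)) :=
      (continuous_coe_real_ereal.comp hgcont).lowerSemicontinuous
    have h3 := hB.lsc.add' h2 (fun x =>
      EReal.continuousAt_add (Or.inr (EReal.coe_ne_bot _)) (Or.inr (EReal.coe_ne_top _)))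
    have heq : (B.F C) = fun z => B.f z + ((g z : ℝ) : EReal) := funext hF
    rw [heq]; exact h3
  -- convexity
  · intro x y p q hp hq hpq
    rcases eq_or_lt_of_le hp with hp0 | hp0
    · have hq1 : q = 1 := by linarith
      subst hq1; rw [← hp0]; simp
    rcases eq_or_lt_of_le hq with hq0 | hq0
    · have hp1 : p = 1 := by linarith
      subst hp1; rw [← hq0]; simp
    have hmulnb : ∀ (t : ℝ) (w : EReal), 0 < t → w ≠ ⊥ → (t : EReal) * w ≠ ⊥ := by
      intro t w ht hw
      rcases eq_or_ne w ⊤ with rfl | hwt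
      · rw [EReal.coe_mul_top_of_pos ht]; simp
      · rw [← EReal.coe_toReal hwt hw, ← EReal.coe_mul]; exact EReal.coe_ne_bot _
    by_cases hx : x ∈ B.dom
    · by_cases hy : y ∈ B.dom
      · have hz : p • x + q • y ∈ B.dom := hB.convex_dom hx hy hp hq hpq
        rw [hFdom _ hz, hFdom _ hx, hFdom _ hy, ← EReal.coe_mul, ← EReal.coe_mul,
          ← EReal.coe_add, EReal.coe_le_coe_iff]
        have h1 := hB.convexOn.2 hx hy hp hq hpq
        have h2 := hgconv.2 (mem_univ x) (mem_univ y) hp hq hpq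
        simp only [smul_eq_mul] at h1 h2
        linarith
      · rw [hFtop y hy, EReal.mul_top_of_pos (EReal.coe_pos.2 hq0),
          EReal.add_top_of_ne_bot (hmulnb p _ hp0 (hFnb x))]
        exact le_top
    · rw [hFtop x hx, EReal.mul_top_of_pos (EReal.coe_pos.2 hp0),
        EReal.top_add_of_ne_bot (hmulnb q _ hq0 (hFnb y))]
      exact le_top
  -- domain
  · ext x
    simp only [mem_setOf_eq]
    constructor
    · intro h
      by_contra hx
      exact h (hFtop x hx)
    · intro hx
      rw [hFdom x hx]
      exact EReal.coe_ne_top _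
  -- domain of the subdifferential
  · ext x
    simp only [mem_setOf_eq]
    constructor
    · rintro ⟨p, hpne, hp⟩
      by_contra hxU
      have hxdom : x ∈ B.dom := by
        by_contra hxd
        exact hpne (hFtop x hxd)
      have hfront : x ∈ frontier B.dom := ⟨subset_closure hxdom, hxU⟩
      obtain ⟨x₀, hx₀⟩ := hB.nonempty_int
      obtain ⟨r₀, hr₀pos, hball⟩ : ∃ r₀ > 0, Metric.closedBall x₀ r₀ ⊆ B.U := by
        obtain ⟨ε, hε, hb⟩ := Metric.isOpen_iff.1 hUopen x₀ hx₀
        exact ⟨ε/2, by linarith, (Metric.closedBall_subset_ball (by linarith)).trans hb⟩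
      set d := x₀ - x with hd
      set sn : ℕ → EuclideanSpace ℝ (Fin J) := fun n => x + ((1:ℝ)/(n+1)) • d with hsn
      have htpos : ∀ n : ℕ, (0:ℝ) < 1/(n+1) := fun n => by positivity
      have htle : ∀ n : ℕ, (1:ℝ)/(n+1) ≤ 1 := fun n => by
        rw [div_le_one (by positivity)]
        have : (0:ℝ) ≤ n := Nat.cast_nonneg n
        linarith
      have hsU : ∀ n, sn n ∈ B.U := by
        intro n
        have hmem := hB.convex_dom.combo_interior_closure_mem_interior hx₀
          (subset_closure hxdom) (htpos n)
          (by linarith [htle n] : (0:ℝ) ≤ 1 - 1/(n+1)) (by ring)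
        have heq : sn n = ((1:ℝ)/(n+1)) • x₀ + (1 - 1/(n+1) : ℝ) • x := by
          simp only [hsn, hd]; module
        rw [heq]; exact hmem
      have hst : Tendsto sn atTop (𝓝 x) := by
        have h0 : Tendsto (fun n : ℕ => (1:ℝ)/(n+1)) atTop (𝓝 0) :=
          tendsto_one_div_add_atTop_nhds_zero_nat
        have h1 := (h0.smul_const d).const_add x
        rw [zero_smul, add_zero] at h1
        exact h1
      have hsteep := hB.steep x hfront sn hsU hst
      have hcball : ContinuousOn (fun z => fr z + g z) (Metric.closedBall x₀ r₀) := fun z hz =>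
        ((hfrcont z (hball hz)).add hgcont.continuousAt).continuousWithinAt
      obtain ⟨A1, hA1⟩ := (isCompact_closedBall x₀ r₀).exists_bound_of_continuousOn hcball
      set Fx := fr x + g x with hFxdef
      have hFxeq : B.F C x = ((Fx : ℝ) : EReal) := hFdom x hxdom
      set K0 := A1 - Fx + 2 * |⟪p, d⟫| with hK0
      have hbound : ∀ n, ‖B.grad (sn n)‖ ≤ K0 / r₀ + M := by
        intro n
        set t : ℝ := 1/(n+1) with htdef
        have ht1 : 0 < t := htpos n
        have ht2 : t ≤ 1 := htle n
        set y := sn n with hydef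
        have hyU : y ∈ B.U := hsU n
        obtain ⟨q, hq⟩ := hgsub y
        have hqn : ‖q‖ ≤ M := hgsub_norm y q hq
        set P := B.grad y + q with hP
        have hPsub := hFsub y hyU q hq
        set Fy := fr y + g y with hFydef
        have hFyeq : B.F C y = ((Fy : ℝ) : EReal) := hFdom y (hUdom hyU)
        have hi : Fx + ⟪p, y - x⟫ ≤ Fy := by
          have h := hp y
          rw [hFxeq, hFyeq, ← EReal.coe_add, EReal.coe_le_coe_iff] at h
          exact h
        have hii : Fy + ⟪P, x - y⟫ ≤ Fx := by
          have h := hPsub x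
          rw [hFxeq, hFyeq, ← EReal.coe_add, EReal.coe_le_coe_iff] at h
          exact h
        have hyx : y - x = t • d := by
          show x + t • d - x = t • d
          abel
        have hip : ⟪p, y - x⟫ = t * ⟪p, d⟫ := by rw [hyx, real_inner_smul_right]
        have hiP : ⟪P, x - y⟫ = -(t * ⟪P, d⟫) := by
          rw [show x - y = -(y - x) by abel, inner_neg_right, hyx, real_inner_smul_right]
        rw [hip] at hi
        rw [hiP] at hii
        have hPd : ⟪p, d⟫ ≤ ⟪P, d⟫ := by
          have h : t * ⟪p, d⟫ ≤ t * ⟪P, d⟫ := by linarith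
          exact le_of_mul_le_mul_left h ht1
        have habs : -|⟪p, d⟫| ≤ t * ⟪p, d⟫ := by
          rcases le_or_gt 0 ⟪p, d⟫ with h | h
          · nlinarith [abs_nonneg ⟪p, d⟫]
          · rw [abs_of_neg h]; nlinarith
        have hFylb : Fx - |⟪p, d⟫| ≤ Fy := by linarith
        have hPlow : -|⟪p, d⟫| ≤ (1 - t) * ⟪P, d⟫ := by
          rcases le_or_gt 0 ⟪P, d⟫ with h | h
          · have h1 : 0 ≤ (1 - t) * ⟪P, d⟫ := mul_nonneg (by linarith) h
            have h2 := neg_abs_le ⟪p, d⟫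
            have h3 := abs_nonneg ⟪p, d⟫
            linarith
          · have h1 : ⟪P, d⟫ ≤ (1 - t) * ⟪P, d⟫ := by nlinarith
            have h2 := neg_abs_le ⟪p, d⟫
            linarith
        have hKey : ∀ u : EuclideanSpace ℝ (Fin J), ‖u‖ ≤ r₀ → ⟪P, u⟫ ≤ K0 := by
          intro u hu
          have hmem : x₀ + u ∈ Metric.closedBall x₀ r₀ := by
            rw [Metric.mem_closedBall, dist_eq_norm, add_sub_cancel_left]
            exact hu
          have hzU : x₀ + u ∈ B.U := hball hmem
          have h := hPsub (x₀ + u)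
          rw [hFyeq, hFdom _ (hUdom hzU), ← EReal.coe_add, EReal.coe_le_coe_iff] at h
          have hA : fr (x₀ + u) + g (x₀ + u) ≤ A1 := by
            have := hA1 (x₀ + u) hmem
            rw [Real.norm_eq_abs] at this
            exact le_trans (le_abs_self _) this
          have hx0y : x₀ + u - y = (1 - t) • d + u := by
            show x₀ + u - (x + t • d) = (1 - t) • d + u
            simp only [hd]
            module
          rw [hx0y, inner_add_right, real_inner_smul_right] at h
          simp only [hK0]
          linarith
        have hK0nn : 0 ≤ K0 := by
          have h := hKey 0 (by simp [hr₀pos.le])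
          simpa using h
        have hPnorm : ‖P‖ ≤ K0 / r₀ := by
          rcases eq_or_ne P 0 with h0 | h0
          · rw [h0, norm_zero]; positivity
          · have hnp : 0 < ‖P‖ := norm_pos_iff.2 h0
            have hnu : ‖(r₀ / ‖P‖) • P‖ = r₀ := by
              rw [norm_smul, Real.norm_eq_abs, abs_of_pos (div_pos hr₀pos hnp),
                div_mul_cancel₀ _ hnp.ne']
            have h := hKey _ (le_of_eq hnu)
            rw [real_inner_smul_right, real_inner_self_eq_norm_sq] at h
            rw [show r₀ / ‖P‖ * ‖P‖ ^ 2 = ‖P‖ * r₀ by field_simp] at h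
            rw [le_div_iff₀ hr₀pos]
            exact h
        have hgy : B.grad y = P - q := by rw [hP]; abel
        calc ‖B.grad y‖ = ‖P - q‖ := by rw [hgy]
          _ ≤ ‖P‖ + ‖q‖ := norm_sub_le _ _
          _ ≤ K0 / r₀ + M := add_le_add hPnorm hqn
      obtain ⟨n, hn⟩ := (hsteep.eventually_gt_atTop (K0 / r₀ + M)).exists
      exact absurd (hbound n) (not_le.2 hn)
    · intro hxU
      obtain ⟨q, hq⟩ := hgsub x
      refine ⟨B.grad x + q, ?_, hFsub x hxU q hq⟩
      rw [hFdom x (hUdom hxU)]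
      exact EReal.coe_ne_top _
  -- strict convexity on U
  · refine ⟨hB.strict.1, fun x hx y hy hxy p q hp hq hpq => ?_⟩
    have hz : p • x + q • y ∈ B.U := hB.strict.1 hx hy hp.le hq.le hpq
    have htr : ∀ w ∈ B.U, (B.F C w).toReal = fr w + g w := fun w hw => by
      rw [hFdom w (hUdom hw)]; exact EReal.toReal_coe _
    have h1 := hB.strict.2 hx hy hxy hp hq hpq
    have h2 := hgconv.2 (mem_univ x) (mem_univ y) hp.le hq.le hpq
    simp only [smul_eq_mul] at h1 h2 ⊢
    rw [htr _ hz, htr _ hx, htr _ hy]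
    linarith
end
end

section
/- Let f be Legendre on ℝ^J with Bregman distance D, C ⊆ U = int dom f nonempty compact, x ∈ dom f, and h ∈ ℝ^J. Then the directional derivative of the farthest-distance function F_C at x in direction h equals sup{ f'(x;h) - ⟨h, ∇f(y)⟩ : y ∈ Q_C(x) }, where Q_C(x) = argmax_{c∈C} D(x,c). -/
open Set Filter Topology Bornology

noncomputable section

namespace BregmanAux

open BregmanSetup

variable {J : ℕ} {B : BregmanSetup J}



lemma hU_open : IsOpen B.U := isOpen_interior

lemma hU_sub_dom : B.U ⊆ B.dom := interior_subset

lemma freal (hB : B.IsLegendre) {z : EuclideanSpace ℝ (Fin J)} (hz : z ∈ B.dom) :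
    B.f z = ((B.f z).toReal : EReal) := (EReal.coe_toReal hz (hB.proper_bot z)).symm

lemma phi_contAt (hB : B.IsLegendre) {c : EuclideanSpace ℝ (Fin J)} (hc : c ∈ B.U) :
    ContinuousAt (fun z => (B.f z).toReal) c :=
  (hB.smooth c hc).differentiableAt.continuousAt

/-- derivative of `φ` along a line through `c ∈ U`. -/
lemma line_hasDerivAt (hB : B.IsLegendre) {c : EuclideanSpace ℝ (Fin J)} (hc : c ∈ B.U)
    (w : EuclideanSpace ℝ (Fin J)) :
    HasDerivAt (fun t : ℝ => (B.f (c + t • w)).toReal) (inner ℝ (B.grad c) w : ℝ) 0 := by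
  have H := (hB.smooth c hc).hasFDerivAt
  have hγ : HasDerivAt (fun t : ℝ => c + t • w) w 0 := by
    simpa using ((hasDerivAt_id (0 : ℝ)).smul_const w).const_add c
  have H' : HasFDerivAt (fun z => (B.f z).toReal)
      (InnerProductSpace.toDual ℝ _ (B.grad c)) ((fun t : ℝ => c + t • w) 0) := by
    simpa using H
  have := H'.comp_hasDerivAt 0 hγ
  simp only [InnerProductSpace.toDual_apply_apply] at this
  exact this

/-- slopes of `φ` along a line converge to the directional derivative. -/
lemma slope_tendsto (hB : B.IsLegendre) {c : EuclideanSpace ℝ (Fin J)} (hc : c ∈ B.U)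
    (w : EuclideanSpace ℝ (Fin J)) :
    Tendsto (fun t : ℝ => ((B.f (c + t • w)).toReal - (B.f c).toReal) / t)
      (nhdsWithin 0 (Set.Ioi 0)) (nhds (inner ℝ (B.grad c) w : ℝ)) := by
  have H := (hasDerivAt_iff_tendsto_slope.1 (line_hasDerivAt hB hc w))
  have H2 := H.mono_left (nhdsWithin_mono 0 (fun t (ht : t ∈ Set.Ioi 0) => ne_of_gt ht))
  refine H2.congr fun t => ?_
  simp [slope_def_field, slope, zero_smul, div_eq_inv_mul]

/-- subgradient inequality. -/
lemma subgrad (hB : B.IsLegendre) {c z : EuclideanSpace ℝ (Fin J)} (hc : c ∈ B.U)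
    (hz : z ∈ B.dom) :
    (B.f c).toReal + (inner ℝ (B.grad c) (z - c) : ℝ) ≤ (B.f z).toReal := by
  have key : ∀ t ∈ Set.Ioo (0:ℝ) 1,
      ((B.f (c + t • (z - c))).toReal - (B.f c).toReal) / t
        ≤ (B.f z).toReal - (B.f c).toReal := by
    intro t ht
    have hmem : c + t • (z - c) = (1 - t) • c + t • z := by module
    have hco := hB.convexOn.2 (hU_sub_dom hc) hz (by linarith [ht.2] : (0:ℝ) ≤ 1 - t)
      (le_of_lt ht.1) (by ring)
    rw [hmem]
    rw [div_le_iff₀ ht.1]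
    simp only [smul_eq_mul] at hco
    nlinarith [hco]
  have hev : ∀ᶠ t in nhdsWithin (0:ℝ) (Set.Ioi 0),
      ((B.f (c + t • (z - c))).toReal - (B.f c).toReal) / t
        ≤ (B.f z).toReal - (B.f c).toReal := by
    filter_upwards [Ioo_mem_nhdsGT_of_mem (by norm_num : (0:ℝ) ∈ Set.Ico (0:ℝ) 1)] with t ht
    exact key t ht
  have := le_of_tendsto (slope_tendsto hB hc (z - c)) hev
  linarith

/-- gradient is bounded on compact subsets of `U`. -/
lemma grad_bound (hB : B.IsLegendre) {K : Set (EuclideanSpace ℝ (Fin J))}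
    (hK : IsCompact K) (hKU : K ⊆ B.U) :
    ∃ M : ℝ, ∀ c ∈ K, ‖B.grad c‖ ≤ M := by
  obtain ⟨ε, hε, hthick⟩ := hK.exists_cthickening_subset_open hU_open hKU
  have hthick_comp : IsCompact (Metric.cthickening ε K) := hK.cthickening
  have hcont : ContinuousOn (fun z => (B.f z).toReal) (Metric.cthickening ε K) :=
    fun z hz => (phi_contAt hB (hthick hz)).continuousWithinAt
  obtain ⟨M₀, hM₀⟩ := hthick_comp.exists_bound_of_continuousOn hcont
  refine ⟨2 * M₀ / ε, fun c hc => ?_⟩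
  rcases eq_or_ne (B.grad c) 0 with h0 | h0
  · rw [h0, norm_zero]
    have h1 : ‖(B.f c).toReal‖ ≤ M₀ := hM₀ c (Metric.self_subset_cthickening K hc)
    have : (0:ℝ) ≤ M₀ := le_trans (norm_nonneg _) h1
    positivity
  · set u := ε • (‖B.grad c‖⁻¹ • B.grad c) with hu
    have hnu : ‖u‖ = ε := by
      rw [hu, norm_smul, norm_smul, norm_inv, norm_norm, Real.norm_eq_abs,
        abs_of_pos hε, inv_mul_cancel₀ (norm_ne_zero_iff.2 h0), mul_one]
    have hz : c + u ∈ Metric.cthickening ε K := by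
      apply Metric.mem_cthickening_of_dist_le (c + u) c ε K hc
      rw [dist_eq_norm]
      simp [hnu]
    have hsub := subgrad hB (hKU hc) (hU_sub_dom (hthick hz))
    have hinner : (inner ℝ (B.grad c) ((c + u) - c) : ℝ) = ε * ‖B.grad c‖ := by
      have : (c + u) - c = u := by abel
      rw [this, hu, real_inner_smul_right, real_inner_smul_right,
        real_inner_self_eq_norm_sq]
      rw [sq]
      field_simp
    rw [hinner] at hsub
    have hb1 : ‖(B.f c).toReal‖ ≤ M₀ := hM₀ c (Metric.self_subset_cthickening K hc)
    have hb2 : ‖(B.f (c + u)).toReal‖ ≤ M₀ := hM₀ _ hz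
    rw [Real.norm_eq_abs, abs_le] at hb1 hb2
    rw [le_div_iff₀ hε]
    nlinarith
  
/-- a global subgradient at a point of `U` must equal the gradient. -/
lemma subgrad_unique (hB : B.IsLegendre) {c : EuclideanSpace ℝ (Fin J)} (hc : c ∈ B.U)
    {v : EuclideanSpace ℝ (Fin J)}
    (hv : ∀ z ∈ B.dom, (B.f c).toReal + (inner ℝ v (z - c) : ℝ) ≤ (B.f z).toReal) :
    v = B.grad c := by
  have key : ∀ w : EuclideanSpace ℝ (Fin J), (inner ℝ v w : ℝ) ≤ inner ℝ (B.grad c) w := by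
    intro w
    have hev : ∀ᶠ t in nhdsWithin (0:ℝ) (Set.Ioi 0),
        (inner ℝ v w : ℝ) ≤ ((B.f (c + t • w)).toReal - (B.f c).toReal) / t := by
      have hmem : ∀ᶠ t in nhds (0:ℝ), c + t • w ∈ B.U := by
        have hco : Continuous (fun t : ℝ => c + t • w) := by continuity
        have : (fun t : ℝ => c + t • w) 0 = c := by simp
        have := hco.continuousAt (x := (0:ℝ))
        apply this.eventually_mem
        simpa using hU_open.mem_nhds hc
      filter_upwards [nhdsWithin_le_nhds hmem, self_mem_nhdsWithin] with t hmem' (ht : t ∈ Set.Ioi 0)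
      have := hv _ (hU_sub_dom hmem')
      have hrw : (inner ℝ v ((c + t • w) - c) : ℝ) = t * inner ℝ v w := by
        rw [show (c + t • w) - c = t • w by abel, real_inner_smul_right]
      rw [hrw] at this
      rw [le_div_iff₀ ht]
      linarith
    exact ge_of_tendsto (slope_tendsto hB hc w) hev
  have h2 := key (v - B.grad c)
  rw [← sub_nonpos, ← inner_sub_left] at h2
  have := real_inner_self_nonpos.1 h2
  exact sub_eq_zero.1 this

/-- gradient is continuous on `U`. -/
lemma grad_contAt (hB : B.IsLegendre) {c₀ : EuclideanSpace ℝ (Fin J)} (hc₀ : c₀ ∈ B.U) :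
    ContinuousAt B.grad c₀ := by
  obtain ⟨r, hr, hball⟩ := Metric.isOpen_iff.1 hU_open c₀ hc₀
  have hKU : Metric.closedBall c₀ (r/2) ⊆ B.U :=
    (Metric.closedBall_subset_ball (by linarith)).trans hball
  have hKcomp : IsCompact (Metric.closedBall c₀ (r/2)) := isCompact_closedBall _ _
  obtain ⟨M, hM⟩ := grad_bound hB hKcomp hKU
  rw [ContinuousAt]
  apply tendsto_iff_seq_tendsto.2
  intro u hu
  apply tendsto_of_subseq_tendsto
  intro ns hns
  have hv : Tendsto (fun n => u (ns n)) atTop (nhds c₀) := hu.comp hns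
  have hev : ∀ᶠ n in atTop, u (ns n) ∈ Metric.closedBall c₀ (r/2) :=
    hv (Metric.closedBall_mem_nhds c₀ (by linarith))
  obtain ⟨N, hN⟩ := eventually_atTop.1 hev
  set w : ℕ → EuclideanSpace ℝ (Fin J) := fun n => u (ns (n + N)) with hw
  have hwU : ∀ n, w n ∈ Metric.closedBall c₀ (r/2) := fun n => hN _ (Nat.le_add_left N n)
  have hwc : Tendsto w atTop (nhds c₀) := hv.comp (tendsto_add_atTop_nat N)
  have hbd : ∀ n, B.grad (w n) ∈ Metric.closedBall (0 : EuclideanSpace ℝ (Fin J)) M := by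
    intro n
    rw [Metric.mem_closedBall, dist_zero_right]
    exact hM _ (hwU n)
  obtain ⟨a, _, ms, hms, hmstend⟩ :=
    (isCompact_closedBall (0 : EuclideanSpace ℝ (Fin J)) M).tendsto_subseq hbd
  have ha : a = B.grad c₀ := by
    apply subgrad_unique hB hc₀
    intro z hz
    have hsub : ∀ k, (B.f (w (ms k))).toReal
        + (inner ℝ (B.grad (w (ms k))) (z - w (ms k)) : ℝ) ≤ (B.f z).toReal :=
      fun k => subgrad hB (hKU (hwU (ms k))) hz
    have hwm : Tendsto (fun k => w (ms k)) atTop (nhds c₀) := hwc.comp hms.tendsto_atTop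
    have h1 : Tendsto (fun k => (B.f (w (ms k))).toReal) atTop (nhds ((B.f c₀).toReal)) :=
      ((phi_contAt hB hc₀).tendsto).comp hwm
    have h2 : Tendsto (fun k => (inner ℝ (B.grad (w (ms k))) (z - w (ms k)) : ℝ)) atTop
        (nhds (inner ℝ a (z - c₀) : ℝ)) :=
      hmstend.inner (tendsto_const_nhds.sub hwm)
    exact le_of_tendsto (h1.add h2) (Eventually.of_forall hsub)
  exact ⟨fun k => ms k + N, by rw [← ha]; exact hmstend⟩

lemma ereal_add_biSup {A : EReal} (hA : A ≠ ⊥) {s : Set ℝ} (hne : s.Nonempty)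
    (hbdd : BddAbove s) :
    (⨆ r ∈ s, (A + (r : EReal))) = A + ((sSup s : ℝ) : EReal) := by
  induction A using EReal.rec with
  | bot => exact absurd rfl hA
  | top =>
    apply le_antisymm le_top
    obtain ⟨r₀, hr₀⟩ := hne
    calc (⊤ : EReal) + ((sSup s : ℝ) : EReal) = ⊤ := by simp
      _ ≤ ⨆ r ∈ s, ((⊤ : EReal) + (r : EReal)) := by
          refine le_trans (le_of_eq ?_) (le_iSup₂ (f := fun r (_ : r ∈ s) => (⊤ : EReal) + (r:EReal)) r₀ hr₀)
          simp
  | coe q =>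
    have hmono : Monotone (fun r : ℝ => (((q + r : ℝ)) : EReal)) := by
      intro r₁ r₂ h12
      simp only []
      exact_mod_cast add_le_add_right h12 q
    have hcont : ContinuousAt (fun r : ℝ => (((q + r : ℝ)) : EReal)) (sSup s) :=
      (continuous_coe_real_ereal.comp (continuous_add_left q)).continuousAt
    have := hmono.map_csSup_of_continuousAt hcont hne hbdd
    calc (⨆ r ∈ s, ((q : EReal) + (r : EReal)))
        = ⨆ r ∈ s, (((q + r : ℝ)) : EReal) := by
          refine iSup_congr fun r => iSup_congr fun _ => ?_
          norm_cast
      _ = sSup ((fun r : ℝ => (((q + r : ℝ)) : EReal)) '' s) := by rw [sSup_image]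
      _ = (((q + sSup s : ℝ)) : EReal) := this.symm
      _ = (q : EReal) + ((sSup s : ℝ) : EReal) := by norm_cast

lemma ereal_key (A : EReal) (hA : A ≠ ⊥) (g₁ g₀ px t : ℝ) (ht : 0 < t) :
    ((t⁻¹ : ℝ) : EReal) * ((A + (g₁ : EReal)) - (((px + g₀ : ℝ)) : EReal))
      = ((t⁻¹ : ℝ) : EReal) * (A - ((px : ℝ) : EReal))
        + (((g₁ - g₀) / t : ℝ) : EReal) := by
  induction A using EReal.rec with
  | bot => exact absurd rfl hA
  | top =>
    have h1 : ((⊤ : EReal) + (g₁ : EReal)) - (((px + g₀ : ℝ)) : EReal) = ⊤ := by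
      rw [EReal.top_add_coe, EReal.top_sub_coe]
    have h2 : (⊤ : EReal) - ((px : ℝ) : EReal) = ⊤ := EReal.top_sub_coe px
    rw [h1, h2, EReal.coe_mul_top_of_pos (inv_pos.2 ht), EReal.top_add_coe]
  | coe r =>
    have hr : (t⁻¹ * ((r + g₁) - (px + g₀)) : ℝ)
        = t⁻¹ * (r - px) + (g₁ - g₀) / t := by
      field_simp
      ring
    push_cast
    exact_mod_cast congrArg (fun y : ℝ => (y : EReal)) hr

end BregmanAux

/-- **Directional derivative of the farthest-distance function** (Theorem 4.2):
for `C ⊆ U` nonempty compact, `x ∈ dom f` and `h ∈ ℝ^J`, if `f'(x;h) = Lf` (as a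
limit of difference quotients in `EReal`), then the difference quotients of `F_C`
converge to `sup { f'(x;h) - ⟨h, ∇f(y)⟩ : y ∈ Q_C(x) }`. -/
theorem farthest_distance_directional_derivative {J : ℕ} (B : BregmanSetup J)
    (hB : B.IsLegendre) (C : Set (EuclideanSpace ℝ (Fin J))) (hCne : C.Nonempty) (hCU : C ⊆ B.U)
    (hCcomp : IsCompact C) (x h : EuclideanSpace ℝ (Fin J)) (hx : x ∈ B.dom) (Lf : EReal)
    (hLf : Tendsto (fun t : ℝ => ((t⁻¹ : ℝ) : EReal) * (B.f (x + t • h) - B.f x))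
      (nhdsWithin 0 (Set.Ioi 0)) (nhds Lf)) :
    Tendsto (fun t : ℝ => ((t⁻¹ : ℝ) : EReal) * (B.F C (x + t • h) - B.F C x))
      (nhdsWithin 0 (Set.Ioi 0))
      (nhds (⨆ y ∈ B.Q C x, (Lf - ((inner ℝ h (B.grad y) : ℝ) : EReal)))) := by
  classical
  set φ : EuclideanSpace ℝ (Fin J) → ℝ := fun z => (B.f z).toReal with hφdef
  set a : EuclideanSpace ℝ (Fin J) → EuclideanSpace ℝ (Fin J) → ℝ :=
    fun c z => -φ c - (inner ℝ (B.grad c) (z - c) : ℝ) with hadef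
  have hgradAt : ∀ c ∈ B.U, ContinuousAt B.grad c := fun c hc => BregmanAux.grad_contAt hB hc
  have haAt : ∀ (z : EuclideanSpace ℝ (Fin J)), ∀ c ∈ B.U,
      ContinuousAt (fun c' => a c' z) c := by
    intro z c hc
    apply ContinuousAt.sub
    · exact (BregmanAux.phi_contAt hB hc).neg
    · exact ContinuousAt.inner (hgradAt c hc) (continuousAt_const.sub continuousAt_id)
  have haC : ∀ z, ContinuousOn (fun c => a c z) C :=
    fun z c hc => (haAt z c (hCU hc)).continuousWithinAt
  set g : EuclideanSpace ℝ (Fin J) → ℝ := fun z => sSup ((fun c => a c z) '' C) with hgdef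
  have hbdd : ∀ z, BddAbove ((fun c => a c z) '' C) :=
    fun z => (hCcomp.image_of_continuousOn (haC z)).bddAbove
  have hnei : ∀ z, ((fun c => a c z) '' C).Nonempty := fun z => hCne.image _
  have hag : ∀ z, ∀ c ∈ C, a c z ≤ g z :=
    fun z c hc => le_csSup (hbdd z) (mem_image_of_mem _ hc)
  have hfc : ∀ c ∈ B.U, B.f c = ((φ c : ℝ) : EReal) :=
    fun c hc => BregmanAux.freal hB (BregmanAux.hU_sub_dom hc)
  have hfx : B.f x = ((φ x : ℝ) : EReal) := BregmanAux.freal hB hx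
  have hDeq : ∀ z, ∀ c ∈ C, B.D z c = B.f z + ((a c z : ℝ) : EReal) := by
    intro z c hc
    rw [BregmanSetup.D, if_pos (hCU hc), hfc c (hCU hc)]
    rw [sub_eq_add_neg, sub_eq_add_neg, add_assoc]
    congr 1
  have hFeq : ∀ z, B.F C z = B.f z + ((g z : ℝ) : EReal) := by
    intro z
    rw [BregmanSetup.F]
    calc (⨆ c ∈ C, B.D z c) = ⨆ c ∈ C, (B.f z + ((a c z : ℝ) : EReal)) :=
          biSup_congr fun c hc => hDeq z c hc
      _ = ⨆ r ∈ (fun c => a c z) '' C, (B.f z + ((r : ℝ) : EReal)) := (iSup_image (f := fun c => a c z) (g := fun r : ℝ => B.f z + ((r : ℝ) : EReal)) (t := C)).symm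
      _ = B.f z + ((g z : ℝ) : EReal) :=
          BregmanAux.ereal_add_biSup (hB.proper_bot z) (hnei z) (hbdd z)
  have hQeq : B.Q C x = {c | c ∈ C ∧ ∀ c' ∈ C, a c' x ≤ a c x} := by
    ext c
    simp only [BregmanSetup.Q, Set.mem_setOf_eq]
    constructor
    · rintro ⟨hcC, -, hmax⟩
      refine ⟨hcC, fun c' hc' => ?_⟩
      have h1 := hmax c' hc'
      rw [hDeq x c hcC, hDeq x c' hc', hfx] at h1
      have h2 : ((φ x + a c' x : ℝ) : EReal) ≤ ((φ x + a c x : ℝ) : EReal) := by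
        push_cast
        exact h1
      have := EReal.coe_le_coe_iff.1 h2
      linarith
    · rintro ⟨hcC, hmax⟩
      refine ⟨hcC, hx, fun c' hc' => ?_⟩
      rw [hDeq x c hcC, hDeq x c' hc']
      exact add_le_add le_rfl (EReal.coe_le_coe_iff.2 (hmax c' hc'))
  obtain ⟨y₀, hy₀C, hy₀max⟩ := hCcomp.exists_isMaxOn hCne (haC x)
  have hy₀Q : y₀ ∈ B.Q C x := by
    rw [hQeq]; exact ⟨hy₀C, fun c' hc' => hy₀max hc'⟩
  have hQsub : B.Q C x ⊆ C := by rw [hQeq]; exact fun c hc => hc.1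
  have hQU : B.Q C x ⊆ B.U := fun c hc => hCU (hQsub hc)
  have hgx_eq : ∀ y ∈ B.Q C x, g x = a y x := by
    intro y hy
    rw [hQeq] at hy
    exact IsGreatest.csSup_eq ⟨mem_image_of_mem _ hy.1, by
      rintro r ⟨c, hc, rfl⟩; exact hy.2 c hc⟩
  have hQceq : B.Q C x = C ∩ (fun c => a c x) ⁻¹' (Set.Ici (g x)) := by
    rw [hQeq]
    ext c
    simp only [Set.mem_inter_iff, Set.mem_preimage, Set.mem_Ici, Set.mem_setOf_eq]
    constructor
    · rintro ⟨h1, h2⟩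
      exact ⟨h1, csSup_le (hnei x) (by rintro r ⟨c', hc', rfl⟩; exact h2 c' hc')⟩
    · rintro ⟨h1, h2⟩
      exact ⟨h1, fun c' hc' => le_trans (hag x c' hc') h2⟩
  have hQcomp : IsCompact (B.Q C x) := by
    rw [hQceq]
    exact IsCompact.of_isClosed_subset hCcomp
      (ContinuousOn.preimage_isClosed_of_isClosed (haC x) hCcomp.isClosed isClosed_Ici)
      Set.inter_subset_left
  set b : EuclideanSpace ℝ (Fin J) → ℝ := fun y => -(inner ℝ h (B.grad y) : ℝ) with hbdef
  have hbC : ContinuousOn b (B.Q C x) := fun y hy =>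
    ((ContinuousAt.inner continuousAt_const (hgradAt y (hQU hy))).neg).continuousWithinAt
  obtain ⟨y₁, hy₁Q, hy₁max⟩ := hQcomp.exists_isMaxOn ⟨y₀, hy₀Q⟩ hbC
  set dg : ℝ := b y₁ with hdgdef
  have haff : ∀ (c : EuclideanSpace ℝ (Fin J)) (t : ℝ),
      a c (x + t • h) = a c x - t * (inner ℝ (B.grad c) h : ℝ) := by
    intro c t
    simp only [hadef]
    rw [show x + t • h - c = (x - c) + t • h by abel, inner_add_right, real_inner_smul_right]
    ring
  -- convexity of t ↦ g (x + t • h)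
  have hψconv : ConvexOn ℝ Set.univ (fun t : ℝ => g (x + t • h)) := by
    refine ⟨convex_univ, fun t₁ _ t₂ _ p q hp hq hpq => ?_⟩
    simp only [smul_eq_mul]
    have hpt : x + (p * t₁ + q * t₂) • h = p • (x + t₁ • h) + q • (x + t₂ • h) := by
      calc x + (p * t₁ + q * t₂) • h = (p + q) • x + (p * t₁ + q * t₂) • h := by
            rw [hpq, one_smul]
        _ = p • (x + t₁ • h) + q • (x + t₂ • h) := by module
    rw [hpt]
    apply csSup_le (hnei _)
    rintro r ⟨c, hc, rfl⟩
    dsimp only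
    have hsplit : p • (x + t₁ • h) + q • (x + t₂ • h) - c
        = p • ((x + t₁ • h) - c) + q • ((x + t₂ • h) - c) := by
      calc p • (x + t₁ • h) + q • (x + t₂ • h) - c
          = p • (x + t₁ • h) + q • (x + t₂ • h) - (p + q) • c := by rw [hpq, one_smul]
        _ = p • ((x + t₁ • h) - c) + q • ((x + t₂ • h) - c) := by module
    have hac : a c (p • (x + t₁ • h) + q • (x + t₂ • h))
        = p * a c (x + t₁ • h) + q * a c (x + t₂ • h) := by
      simp only [hadef]
      rw [hsplit, inner_add_right, real_inner_smul_right, real_inner_smul_right]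
      linear_combination (φ c : ℝ) * hpq
    rw [hac]
    exact add_le_add (mul_le_mul_of_nonneg_left (hag _ c hc) hp)
      (mul_le_mul_of_nonneg_left (hag _ c hc) hq)
  have hmono : MonotoneOn (fun t => (g (x + t • h) - g x) / t) (Set.Ioi (0:ℝ)) := by
    intro t₁ ht₁ t₂ ht₂ h12
    have := hψconv.secant_mono (Set.mem_univ (0:ℝ)) (Set.mem_univ t₁) (Set.mem_univ t₂)
      (ne_of_gt ht₁) (ne_of_gt ht₂) h12
    simpa [zero_smul] using this
  have hlb : ∀ t ∈ Set.Ioi (0:ℝ), dg ≤ (g (x + t • h) - g x) / t := by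
    intro t ht
    rw [le_div_iff₀ ht]
    have h1 : a y₁ (x + t • h) ≤ g (x + t • h) := hag _ y₁ (hQsub hy₁Q)
    rw [haff y₁ t] at h1
    have h2 : g x = a y₁ x := hgx_eq y₁ hy₁Q
    have h3 : dg = -(inner ℝ (B.grad y₁) h : ℝ) := by
      rw [hdgdef, hbdef]; rw [real_inner_comm]
    rw [h2, h3]
    nlinarith [h1]
  have hbddB : BddBelow ((fun t => (g (x + t • h) - g x) / t) '' Set.Ioi 0) :=
    ⟨dg, by rintro r ⟨t, ht, rfl⟩; exact hlb t ht⟩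
  set d : ℝ := sInf ((fun t => (g (x + t • h) - g x) / t) '' Set.Ioi 0) with hddef
  have htendg : Tendsto (fun t => (g (x + t • h) - g x) / t)
      (nhdsWithin 0 (Set.Ioi 0)) (nhds d) := hmono.tendsto_nhdsGT hbddB
  have hdge : dg ≤ d := le_csInf ⟨_, mem_image_of_mem _ (Set.mem_Ioi.2 one_pos)⟩
    (by rintro r ⟨t, ht, rfl⟩; exact hlb t ht)
  have hdle : d ≤ dg := by
    have hmaxn : ∀ n : ℕ, ∃ y ∈ C, ∀ c ∈ C,
        a c (x + ((n : ℝ) + 1)⁻¹ • h) ≤ a y (x + ((n : ℝ) + 1)⁻¹ • h) := by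
      intro n
      obtain ⟨y, hyC, hymax⟩ := hCcomp.exists_isMaxOn hCne (haC _)
      exact ⟨y, hyC, fun c hc => hymax hc⟩
    choose yn hynC hynmax using hmaxn
    obtain ⟨y', hy'C, σ, hσ, hσtend⟩ := hCcomp.tendsto_subseq hynC
    have hy'U : y' ∈ B.U := hCU hy'C
    have htn : Tendsto (fun k => ((σ k : ℝ) + 1)⁻¹) atTop (nhds 0) := by
      have h1 : Tendsto (fun n : ℕ => ((n : ℝ) + 1)⁻¹) atTop (nhds 0) := by
        exact tendsto_one_div_add_atTop_nhds_zero_nat.congr (fun n => one_div _)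
      exact h1.comp hσ.tendsto_atTop
    have hgr : Tendsto (fun k => B.grad (yn (σ k))) atTop (nhds (B.grad y')) :=
      (hgradAt y' hy'U).tendsto.comp hσtend
    have hdk : ∀ k, d ≤ -(inner ℝ (B.grad (yn (σ k))) h : ℝ) := by
      intro k
      have htpos : (0:ℝ) < ((σ k : ℝ) + 1)⁻¹ := by positivity
      have h1 : d ≤ (g (x + ((σ k : ℝ) + 1)⁻¹ • h) - g x) / ((σ k : ℝ) + 1)⁻¹ :=
        csInf_le hbddB (mem_image_of_mem _ (Set.mem_Ioi.2 htpos))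
      have h2 : g (x + ((σ k : ℝ) + 1)⁻¹ • h) = a (yn (σ k)) (x + ((σ k : ℝ) + 1)⁻¹ • h) :=
        IsGreatest.csSup_eq ⟨mem_image_of_mem _ (hynC _), by
          rintro r ⟨c, hc, rfl⟩; exact hynmax (σ k) c hc⟩
      have h3 : a (yn (σ k)) x ≤ g x := hag x _ (hynC _)
      have h4 := haff (yn (σ k)) ((σ k : ℝ) + 1)⁻¹
      refine le_trans h1 ?_
      rw [div_le_iff₀ htpos, h2, h4, mul_comm]
      clear_value a g
      linarith [h3]
    have hgty : Tendsto (fun k => -(inner ℝ (B.grad (yn (σ k))) h : ℝ)) atTop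
        (nhds (-(inner ℝ (B.grad y') h : ℝ))) :=
      (hgr.inner tendsto_const_nhds).neg
    have hdy' : d ≤ -(inner ℝ (B.grad y') h : ℝ) :=
      ge_of_tendsto hgty (Eventually.of_forall hdk)
    have hy'Q : y' ∈ B.Q C x := by
      rw [hQeq]
      refine ⟨hy'C, fun c hc => ?_⟩
      have hk : ∀ k, a c x - ((σ k : ℝ) + 1)⁻¹ * (inner ℝ (B.grad c) h : ℝ)
          ≤ a (yn (σ k)) x - ((σ k : ℝ) + 1)⁻¹ * (inner ℝ (B.grad (yn (σ k))) h : ℝ) := by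
        intro k
        have := hynmax (σ k) c hc
        rwa [haff, haff] at this
      have hL : Tendsto (fun k => a c x - ((σ k : ℝ) + 1)⁻¹ * (inner ℝ (B.grad c) h : ℝ))
          atTop (nhds (a c x)) := by
        have h7 : Tendsto (fun k : ℕ => (inner ℝ (B.grad c) h : ℝ)) atTop
            (nhds (inner ℝ (B.grad c) h : ℝ)) := tendsto_const_nhds
        have h8 : Tendsto (fun k : ℕ => a c x) atTop (nhds (a c x)) := tendsto_const_nhds
        have := h8.sub (htn.mul h7)
        simpa using this
      have hR : Tendsto (fun k => a (yn (σ k)) x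
          - ((σ k : ℝ) + 1)⁻¹ * (inner ℝ (B.grad (yn (σ k))) h : ℝ)) atTop (nhds (a y' x)) := by
        have hax : Tendsto (fun k => a (yn (σ k)) x) atTop (nhds (a y' x)) :=
          (haAt x y' hy'U).tendsto.comp hσtend
        have hin : Tendsto (fun k => (inner ℝ (B.grad (yn (σ k))) h : ℝ)) atTop
            (nhds (inner ℝ (B.grad y') h : ℝ)) := hgr.inner tendsto_const_nhds
        have := hax.sub (htn.mul hin)
        simpa using this
      exact le_of_tendsto_of_tendsto' hL hR hk
    have hbb : -(inner ℝ (B.grad y') h : ℝ) ≤ dg := by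
      have h5 := hy₁max hy'Q
      rw [real_inner_comm]
      exact h5
    linarith
  have hd : d = dg := le_antisymm hdle hdge
  have hqg : Tendsto (fun t => (g (x + t • h) - g x) / t)
      (nhdsWithin 0 (Set.Ioi 0)) (nhds dg) := hd ▸ htendg
  have hSup : (⨆ y ∈ B.Q C x, (Lf - ((inner ℝ h (B.grad y) : ℝ) : EReal)))
      = Lf + ((dg : ℝ) : EReal) := by
    apply le_antisymm
    · apply iSup₂_le
      intro y hy
      calc Lf - ((inner ℝ h (B.grad y) : ℝ) : EReal)
          = Lf + ((-(inner ℝ h (B.grad y)) : ℝ) : EReal) := by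
            rw [sub_eq_add_neg, EReal.coe_neg]
        _ ≤ Lf + ((dg : ℝ) : EReal) :=
            add_le_add_right (EReal.coe_le_coe_iff.2 (hy₁max hy)) Lf
    · have heq1 : Lf + ((dg : ℝ) : EReal) = Lf - ((inner ℝ h (B.grad y₁) : ℝ) : EReal) := by
        rw [sub_eq_add_neg, hdgdef, hbdef]
        norm_cast
      rw [heq1]
      exact le_iSup₂ (f := fun y (_ : y ∈ B.Q C x) =>
        Lf - ((inner ℝ h (B.grad y) : ℝ) : EReal)) y₁ hy₁Q
  rw [hSup]
  have hEq : ∀ᶠ t in nhdsWithin (0:ℝ) (Set.Ioi 0),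
      ((t⁻¹ : ℝ) : EReal) * (B.F C (x + t • h) - B.F C x)
        = ((t⁻¹ : ℝ) : EReal) * (B.f (x + t • h) - B.f x)
          + (((g (x + t • h) - g x) / t : ℝ) : EReal) := by
    filter_upwards [self_mem_nhdsWithin] with t (ht : t ∈ Set.Ioi 0)
    rw [hFeq, hFeq, hfx]
    have hcoe : ((φ x : ℝ) : EReal) + ((g x : ℝ) : EReal) = ((φ x + g x : ℝ) : EReal) := by
      push_cast; rfl
    rw [hcoe]
    exact BregmanAux.ereal_key (B.f (x + t • h)) (hB.proper_bot _) (g (x + t • h)) (g x)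
      (φ x) t ht
  have hpair : Tendsto (fun t : ℝ => (((t⁻¹ : ℝ) : EReal) * (B.f (x + t • h) - B.f x),
      (((g (x + t • h) - g x) / t : ℝ) : EReal))) (nhdsWithin 0 (Set.Ioi 0))
      (nhds (Lf, ((dg : ℝ) : EReal))) :=
    hLf.prodMk_nhds (EReal.tendsto_coe.2 hqg)
  have hadd := EReal.continuousAt_add (p := (Lf, ((dg : ℝ) : EReal)))
    (Or.inr (EReal.coe_ne_bot dg)) (Or.inr (EReal.coe_ne_top dg))
  have hsum := (hadd.tendsto).comp hpair
  exact Tendsto.congr' (hEq.mono fun t ht => ht.symm) hsum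
end
end
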